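/- arXiv:1602.01408 — 13 statements merged into one kernel-verified Lean document; each statement's English description precedes it below -/
import Mathlib

section
/- Let H be a complex Hilbert space and let A, P, Q be bounded linear operators on H with P and Q positive, satisfying A Q A* = A* P A. If Q has dense range, then the kernel of A is contained in the kernel of A*. -/
open scoped ComplexOrder
open ContinuousLinearMap

/-- If `A Q A* = A* P A` with `P, Q` positive and `Q` has dense
range, then `ker A ⊆ ker A*`. -/
theorem kernel_subset_of_denseRange_interrupter
    {H : Type*} [NormedAddCommGroup H] [InnerProductSpace ℂ H] [CompleteSpace H]
    (A P Q : H →L[ℂ] H)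
    (hP : ∀ f : H, 0 ≤ (inner ℂ (P f) f : ℂ))
    (hQ : ∀ f : H, 0 ≤ (inner ℂ (Q f) f : ℂ))
    (hAQA : A ∘L Q ∘L adjoint A = adjoint A ∘L P ∘L A)
    (hden : DenseRange Q) :
    LinearMap.ker (A : H →ₗ[ℂ] H) ≤ LinearMap.ker ((adjoint A : H →L[ℂ] H) : H →ₗ[ℂ] H) := by
  -- Q is a positive operator
  have hQpos : (0 : H →L[ℂ] H) ≤ Q := by
    rw [nonneg_iff_isPositive, isPositive_iff_complex]
    intro x
    obtain ⟨hre, him⟩ := (Complex.nonneg_iff).mp (hQ x)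
    constructor
    · apply Complex.ext <;> simp [him]
    · simpa using hre
  have hQsa : IsSelfAdjoint Q := ((nonneg_iff_isPositive Q).mp hQpos).isSelfAdjoint
  -- square root of Q
  set S : H →L[ℂ] H := CFC.sqrt Q with hSdef
  have hSS : S * S = Q := CFC.sqrt_mul_sqrt_self Q hQpos
  have hSpos : (0 : H →L[ℂ] H) ≤ S := CFC.sqrt_nonneg Q
  have hSsa : IsSelfAdjoint S := ((nonneg_iff_isPositive S).mp hSpos).isSelfAdjoint
  intro f hf
  have hAf : A f = 0 := hf
  set g := adjoint A f with hg
  -- ⟪Q g, g⟫ = 0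
  have key : (inner ℂ (Q g) g : ℂ) = 0 := by
    have h1 := congrArg (fun T : H →L[ℂ] H => (inner ℂ (T f) f : ℂ)) hAQA
    simp only [comp_apply] at h1
    have h2 : (inner ℂ (A (Q g)) f : ℂ) = inner ℂ (Q g) g := by
      rw [hg, ← adjoint_inner_right]
    rw [h2] at h1
    rw [h1, hAf]
    simp
  -- hence S g = 0, so Q g = 0
  have hSg : S g = 0 := by
    have : (inner ℂ (S g) (S g) : ℂ) = 0 := by
      calc (inner ℂ (S g) (S g) : ℂ) = inner ℂ (S (S g)) g := by
            rw [← adjoint_inner_left, hSsa.adjoint_eq]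
        _ = inner ℂ (Q g) g := by rw [← mul_apply_eq_comp S S g, hSS]
        _ = 0 := key
    exact inner_self_eq_zero.mp this
  have hQg : Q g = 0 := by
    rw [← hSS, mul_apply_eq_comp S S g, hSg, map_zero]
  -- g is orthogonal to the dense range of Q, hence g = 0
  have h0 : ∀ y : H, (inner ℂ g y : ℂ) = 0 := by
    intro y
    refine hden.induction_on y ?_ ?_
    · exact isClosed_eq (continuous_const.inner continuous_id) continuous_const
    · intro a
      calc (inner ℂ g (Q a) : ℂ) = inner ℂ g (adjoint Q a) := by rw [hQsa.adjoint_eq]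
        _ = inner ℂ (Q g) a := by rw [adjoint_inner_right]
        _ = 0 := by rw [hQg, inner_zero_left]
  have : g = 0 := inner_self_eq_zero.mp (h0 g)
  exact this
end

section
/- Let H be a complex Hilbert space and let A, P, Q be bounded linear operators on H with P and Q positive, satisfying A Q A* = A* P A. If P has dense range, then the kernel of A* is contained in the kernel of A. -/
open scoped ComplexOrder
open ContinuousLinearMap

section Aux

variable {H : Type*} [NormedAddCommGroup H] [InnerProductSpace ℂ H] [CompleteSpace H]

private lemma isPositive_of_inner_nonneg {T : H →L[ℂ] H}
    (hT : ∀ f : H, 0 ≤ (inner ℂ (T f) f : ℂ)) : T.IsPositive := by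
  constructor
  · intro x y
    have := (LinearMap.isSymmetric_iff_inner_map_self_real (T : H →ₗ[ℂ] H)).2
      (fun v => by
        have h := hT v
        rw [Complex.le_def] at h
        simp only [Complex.zero_re, Complex.zero_im] at h
        exact Complex.conj_eq_iff_im.2 h.2.symm)
    exact this x y
  · intro x
    have h := hT x
    rw [Complex.le_def] at h
    exact h.1

set_option synthInstance.maxHeartbeats 1000000 in
private lemma apply_eq_zero_of_inner_self_eq_zero {T : H →L[ℂ] H}
    (hT : ∀ f : H, 0 ≤ (inner ℂ (T f) f : ℂ)) {g : H}
    (h : (inner ℂ (T g) g : ℂ) = 0) : T g = 0 := by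
  have hpos : (0 : H →L[ℂ] H) ≤ T := by
    rw [nonneg_iff_isPositive]
    exact isPositive_of_inner_nonneg hT
  set S := CFC.sqrt T with hSdef
  have hSnonneg : (0 : H →L[ℂ] H) ≤ S := CFC.sqrt_nonneg (a := T)
  have hSS : S * S = T := CFC.sqrt_mul_sqrt_self T hpos
  have hSsa : IsSelfAdjoint S := IsSelfAdjoint.of_nonneg hSnonneg
  have hSadj : adjoint S = S := by
    rw [← star_eq_adjoint]; exact hSsa
  have h1 : (inner ℂ (S g) (S g) : ℂ) = 0 := by
    have hTg : T g = S (S g) := by rw [← hSS]; rfl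
    rw [hTg] at h
    have e : (inner ℂ (S (S g)) g : ℂ) = inner ℂ (S g) (S g) := by
      nth_rewrite 1 [← hSadj]
      exact adjoint_inner_left S g (S g)
    rw [← e]; exact h
  have hSg : S g = 0 := inner_self_eq_zero.mp h1
  have : T g = S (S g) := by rw [← hSS]; rfl
  rw [this, hSg, map_zero]

end Aux

/-- If `A Q A* = A* P A` with `P, Q` positive and `P` has dense
range, then `ker A* ⊆ ker A`. -/
theorem kernel_adjoint_subset_of_denseRange_interrupter
    {H : Type*} [NormedAddCommGroup H] [InnerProductSpace ℂ H] [CompleteSpace H]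
    (A P Q : H →L[ℂ] H)
    (hP : ∀ f : H, 0 ≤ (inner ℂ (P f) f : ℂ))
    (hQ : ∀ f : H, 0 ≤ (inner ℂ (Q f) f : ℂ))
    (hAQA : A ∘L Q ∘L adjoint A = adjoint A ∘L P ∘L A)
    (hden : DenseRange P) :
    LinearMap.ker (adjoint A : H →ₗ[ℂ] H) ≤ LinearMap.ker (A : H →ₗ[ℂ] H) := by
  intro f hf
  have hf0 : adjoint A f = 0 := hf
  have hPadj : adjoint P = P := by
    rw [← star_eq_adjoint]
    exact (isPositive_of_inner_nonneg hP).isSelfAdjoint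
  -- ⟨P (A f), A f⟩ = 0
  have h1 : (adjoint A) (P (A f)) = 0 := by
    have := congrArg (fun T : H →L[ℂ] H => T f) hAQA
    simp only [comp_apply, hf0, map_zero] at this
    exact this.symm
  have h2 : (inner ℂ (P (A f)) (A f) : ℂ) = 0 := by
    have : (inner ℂ ((adjoint A) (P (A f))) f : ℂ) = inner ℂ (P (A f)) (A f) := by
      rw [adjoint_inner_left]
    rw [h1] at this
    simpa using this.symm
  have hPAf : P (A f) = 0 := apply_eq_zero_of_inner_self_eq_zero hP h2
  -- A f ⊥ range P, dense ⇒ A f = 0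
  have key : ∀ x : H, (inner ℂ x (A f) : ℂ) = 0 := by
    have hcont1 : Continuous fun x : H => (inner ℂ x (A f) : ℂ) :=
      continuous_id.inner continuous_const
    have heq : (fun x : H => (inner ℂ x (A f) : ℂ)) = fun _ => 0 := by
      refine Continuous.ext_on hden hcont1 continuous_const ?_
      rintro _ ⟨y, rfl⟩
      show (inner ℂ (P y) (A f) : ℂ) = 0
      rw [← hPadj, adjoint_inner_left, hPAf, inner_zero_right]
    exact fun x => congrFun heq x
  have : (inner ℂ (A f) (A f) : ℂ) = 0 := key (A f)
  exact inner_self_eq_zero.mp this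
end

section
/- Let H be a complex Hilbert space and let A, P, Q be bounded linear operators on H with P and Q positive, satisfying A Q A* = A* P A. If Q is invertible, then A is posinormal; that is, there exists a positive bounded operator P' on H with A A* = A* P' A. -/
set_option synthInstance.maxHeartbeats 1000000
set_option maxHeartbeats 1000000

open scoped ComplexOrder
open ContinuousLinearMap

/-- Douglas-type factorization: if `‖T x‖ ≤ M * ‖D x‖` for all `x`, then `T = C ∘L D`
for some bounded operator `C`. -/
theorem exists_comp_eq_of_norm_le
    {H : Type*} [NormedAddCommGroup H] [InnerProductSpace ℂ H] [CompleteSpace H]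
    (T D : H →L[ℂ] H) (M : ℝ) (hM : ∀ x, ‖T x‖ ≤ M * ‖D x‖) :
    ∃ C : H →L[ℂ] H, C ∘L D = T := by
  classical
  set Dl : H →ₗ[ℂ] H := (D : H →ₗ[ℂ] H) with hDl
  set Tl : H →ₗ[ℂ] H := (T : H →ₗ[ℂ] H) with hTl
  have hker : LinearMap.ker Dl ≤ LinearMap.ker Tl := by
    intro x hx
    have hx' : D x = 0 := hx
    have h := hM x
    rw [hx', norm_zero, mul_zero] at h
    exact norm_le_zero_iff.mp h
  set e0 := Dl.quotKerEquivRange with he0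
  set C₀ : LinearMap.range Dl →ₗ[ℂ] H :=
    ((LinearMap.ker Dl).liftQ Tl hker).comp e0.symm.toLinearMap with hC₀def
  have hC₀ : ∀ x : H, C₀ ⟨D x, LinearMap.mem_range_self Dl x⟩ = T x := by
    intro x
    have h1 : e0.symm ⟨Dl x, LinearMap.mem_range_self Dl x⟩ = (LinearMap.ker Dl).mkQ x :=
      Dl.quotKerEquivRange_symm_apply_image x _
    simp only [hC₀def, LinearMap.comp_apply, LinearEquiv.coe_toLinearMap]
    erw [h1]
    simp only [Submodule.liftQ_apply, Submodule.mkQ_apply]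
    rfl
  have hbound : ∀ u : LinearMap.range Dl, ‖C₀ u‖ ≤ M * ‖u‖ := by
    rintro ⟨_, x, rfl⟩
    exact (hC₀ x ▸ hM x : ‖C₀ ⟨D x, LinearMap.mem_range_self Dl x⟩‖ ≤ M * ‖D x‖)
  let C₁ : LinearMap.range Dl →L[ℂ] H := C₀.mkContinuous M hbound
  let pc := (LinearMap.range Dl).topologicalClosure
  have hle : LinearMap.range Dl ≤ pc := Submodule.le_topologicalClosure _
  let einc : LinearMap.range Dl →ₗ[ℂ] pc := Submodule.inclusion hle
  let e : LinearMap.range Dl →L[ℂ] pc := einc.mkContinuous 1 (fun x => by simp [einc])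
  have hiso : Isometry e := AddMonoidHomClass.isometry_of_norm e (fun x => rfl)
  have h_e : IsUniformInducing e := hiso.isUniformInducing
  have h_dense : DenseRange e := by
    intro y
    rw [closure_subtype]
    have h2 : (Subtype.val '' Set.range (e : LinearMap.range Dl → pc)) =
        ((LinearMap.range Dl : Submodule ℂ H) : Set H) := by
      ext z
      constructor
      · rintro ⟨_, ⟨u, rfl⟩, rfl⟩; exact u.2
      · intro hz; exact ⟨e ⟨z, hz⟩, ⟨⟨z, hz⟩, rfl⟩, rfl⟩
    rw [h2]
    exact Submodule.topologicalClosure_coe (LinearMap.range Dl) ▸ y.2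
  let C₂ := C₁.extend e
  refine ⟨C₂ ∘L (pc.orthogonalProjectionOnto : H →L[ℂ] pc), ?_⟩
  ext x
  have hmem : D x ∈ pc := hle (LinearMap.mem_range_self Dl x)
  have hproj : (pc.orthogonalProjectionOnto) (D x) = ⟨D x, hmem⟩ :=
    Submodule.orthogonalProjectionOnto_mem_subspace_eq_self (⟨D x, hmem⟩ : pc)
  have hee : (⟨D x, hmem⟩ : pc) = e ⟨D x, LinearMap.mem_range_self Dl x⟩ := rfl
  simp only [comp_apply, hproj, hee]
  rw [ContinuousLinearMap.extend_eq (h_dense := h_dense) (h_e := h_e)]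
  exact hC₀ x

/-- Pointwise positivity implies positivity in the Loewner order. -/
theorem nonneg_of_inner_nonneg
    {H : Type*} [NormedAddCommGroup H] [InnerProductSpace ℂ H] [CompleteSpace H]
    (Q : H →L[ℂ] H) (hQ : ∀ f : H, 0 ≤ (inner ℂ (Q f) f : ℂ)) : (0 : H →L[ℂ] H) ≤ Q := by
  rw [ContinuousLinearMap.nonneg_iff_isPositive, ContinuousLinearMap.isPositive_iff_complex]
  intro x
  obtain ⟨hre, him⟩ := Complex.le_def.mp (hQ x)
  refine ⟨?_, by simpa using hre⟩
  apply Complex.ext <;> simp [← him]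

/-- If `A Q A* = A* P A` with `P, Q` positive and `Q` invertible,
then `A` is posinormal: there is a positive `P'` with `A A* = A* P' A`. -/
theorem posinormal_of_invertible_interrupter
    {H : Type*} [NormedAddCommGroup H] [InnerProductSpace ℂ H] [CompleteSpace H]
    (A P Q : H →L[ℂ] H)
    (hP : ∀ f : H, 0 ≤ (inner ℂ (P f) f : ℂ))
    (hQ : ∀ f : H, 0 ≤ (inner ℂ (Q f) f : ℂ))
    (hAQA : A ∘L Q ∘L adjoint A = adjoint A ∘L P ∘L A)
    (hQinv : IsUnit Q) :
    ∃ P' : H →L[ℂ] H, (∀ f : H, 0 ≤ (inner ℂ (P' f) f : ℂ)) ∧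
      A ∘L adjoint A = adjoint A ∘L P' ∘L A := by
  have hQpos : (0 : H →L[ℂ] H) ≤ Q := nonneg_of_inner_nonneg Q hQ
  have hPpos : (0 : H →L[ℂ] H) ≤ P := nonneg_of_inner_nonneg P hP
  set R := CFC.sqrt Q with hRdef
  set S := CFC.sqrt P with hSdef
  have hRR : R * R = Q := CFC.sqrt_mul_sqrt_self Q hQpos
  have hSS : S * S = P := CFC.sqrt_mul_sqrt_self P hPpos
  have hRadj : adjoint R = R := isSelfAdjoint_iff'.mp (IsSelfAdjoint.of_nonneg (CFC.sqrt_nonneg _))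
  have hSadj : adjoint S = S := isSelfAdjoint_iff'.mp (IsSelfAdjoint.of_nonneg (CFC.sqrt_nonneg _))
  obtain ⟨u, hu⟩ := hQinv
  have hQR : Q * R = R * Q := by rw [← hRR, mul_assoc]
  have hui : (↑u⁻¹ : H →L[ℂ] H) * Q = 1 := by rw [← hu]; exact u.inv_mul
  have hui' : Q * (↑u⁻¹ : H →L[ℂ] H) = 1 := by rw [← hu]; exact u.mul_inv
  have hcomm : (↑u⁻¹ : H →L[ℂ] H) * R = R * ↑u⁻¹ := by
    calc (↑u⁻¹ : H →L[ℂ] H) * R = ↑u⁻¹ * R * (Q * ↑u⁻¹) := by rw [hui', mul_one]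
      _ = ↑u⁻¹ * ((R * Q) * ↑u⁻¹) := by simp only [mul_assoc]
      _ = ↑u⁻¹ * ((Q * R) * ↑u⁻¹) := by rw [hQR]
      _ = (↑u⁻¹ * Q) * (R * ↑u⁻¹) := by simp only [mul_assoc]
      _ = R * ↑u⁻¹ := by rw [hui, one_mul]
  set W : H →L[ℂ] H := R * ↑u⁻¹ with hWdef
  have hWR : W * R = 1 := by
    calc W * R = R * (↑u⁻¹ * R) := by rw [hWdef, mul_assoc]
      _ = R * (R * ↑u⁻¹) := by rw [hcomm]
      _ = (R * R) * ↑u⁻¹ := by rw [mul_assoc]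
      _ = 1 := by rw [hRR, hui']
  -- the key norm inequality ‖A* x‖ ≤ ‖W‖ * ‖(S ∘L A) x‖
  have hkey : ∀ x : H, ‖adjoint A x‖ ≤ ‖W‖ * ‖(S ∘L A) x‖ := by
    intro x
    set g := adjoint A x with hg
    have step1 : (inner ℂ (Q g) g : ℂ) = inner ℂ (P (A x)) (A x) := by
      have e1 : A (Q g) = adjoint A (P (A x)) := by
        have := ContinuousLinearMap.ext_iff.mp hAQA x
        simpa [comp_apply] using this
      calc (inner ℂ (Q g) g : ℂ) = inner ℂ (Q g) (adjoint A x) := by rw [hg]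
        _ = inner ℂ (A (Q g)) x := adjoint_inner_right A (Q g) x
        _ = inner ℂ (adjoint A (P (A x))) x := by rw [e1]
        _ = inner ℂ (P (A x)) (A x) := adjoint_inner_left A x (P (A x))
    have step2 : (inner ℂ (Q g) g : ℂ) = inner ℂ (R g) (R g) := by
      have h0 : Q g = R (R g) := by rw [← hRR]; rfl
      rw [h0, show (R (R g) : H) = adjoint R (R g) by rw [hRadj]]
      exact adjoint_inner_left R g (R g)
    have step3 : (inner ℂ (P (A x)) (A x) : ℂ) = inner ℂ (S (A x)) (S (A x)) := by
      have h0 : P (A x) = S (S (A x)) := by rw [← hSS]; rfl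
      rw [h0, show (S (S (A x)) : H) = adjoint S (S (A x)) by rw [hSadj]]
      exact adjoint_inner_left S (A x) (S (A x))
    have hsq : ‖R g‖ ^ 2 = ‖S (A x)‖ ^ 2 := by
      have h := step2.symm.trans (step1.trans step3)
      rw [inner_self_eq_norm_sq_to_K, inner_self_eq_norm_sq_to_K] at h
      exact_mod_cast h
    have hnorm : ‖R g‖ = ‖S (A x)‖ := by
      have h1 := Real.sqrt_sq (norm_nonneg (R g))
      have h2 := Real.sqrt_sq (norm_nonneg (S (A x)))
      rw [← h1, ← h2, hsq]
    have hgW : g = W (R g) := by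
      have := ContinuousLinearMap.ext_iff.mp hWR g
      simpa [mul_apply] using this.symm
    calc ‖g‖ = ‖W (R g)‖ := by rw [← hgW]
      _ ≤ ‖W‖ * ‖R g‖ := W.le_opNorm (R g)
      _ = ‖W‖ * ‖(S ∘L A) x‖ := by rw [hnorm]; rfl
  obtain ⟨C, hfac⟩ := exists_comp_eq_of_norm_le (adjoint A) (S ∘L A) ‖W‖ hkey
  have hfacx : ∀ y : H, C (S (A y)) = adjoint A y := by
    intro y
    have := ContinuousLinearMap.ext_iff.mp hfac y
    simpa [comp_apply] using this
  refine ⟨S ∘L (adjoint C ∘L (C ∘L S)), ?_, ?_⟩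
  · intro f
    have : (inner ℂ ((S ∘L (adjoint C ∘L (C ∘L S))) f) f : ℂ)
        = inner ℂ (C (S f)) (C (S f)) := by
      calc (inner ℂ (S (adjoint C (C (S f)))) f : ℂ)
          = inner ℂ (adjoint C (C (S f))) (S f) := by
            rw [show (S (adjoint C (C (S f))) : H) = adjoint S (adjoint C (C (S f))) by
              rw [hSadj]]
            exact adjoint_inner_left S f (adjoint C (C (S f)))
        _ = inner ℂ (C (S f)) (C (S f)) := adjoint_inner_left C (S f) (C (S f))
    rw [show ((S ∘L (adjoint C ∘L (C ∘L S))) f) = S (adjoint C (C (S f))) from rfl] at *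
    rw [this, inner_self_eq_norm_sq_to_K]
    norm_cast
    positivity
  · -- A = adjoint A ∘L S ∘L adjoint C, pointwise
    have hAx : ∀ y : H, A y = adjoint A (S (adjoint C y)) := by
      intro y
      calc A y = adjoint (adjoint A) y := by rw [adjoint_adjoint]
        _ = adjoint (C ∘L (S ∘L A)) y := by rw [hfac]
        _ = (adjoint (S ∘L A) ∘L adjoint C) y := by rw [adjoint_comp]
        _ = ((adjoint A ∘L adjoint S) ∘L adjoint C) y := by rw [adjoint_comp]
        _ = adjoint A (S (adjoint C y)) := by rw [hSadj]; rfl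
    ext x
    calc (A ∘L adjoint A) x = A (adjoint A x) := rfl
      _ = adjoint A (S (adjoint C (adjoint A x))) := hAx (adjoint A x)
      _ = adjoint A (S (adjoint C (C (S (A x))))) := by rw [hfacx x]
      _ = (adjoint A ∘L (S ∘L (adjoint C ∘L (C ∘L S))) ∘L A) x := rfl
end

section
/- Let H be a complex Hilbert space and let A, P, Q be bounded linear operators on H with P and Q positive, satisfying A Q A* = A* P A. If P is invertible, then A is coposinormal; that is, there exists a positive bounded operator Q' on H with A Q' A* = A* A. -/
open scoped ComplexOrder
open ContinuousLinearMap

section Aux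

variable {H : Type*} [NormedAddCommGroup H] [InnerProductSpace ℂ H] [CompleteSpace H]

local notation "⟪" x ", " y "⟫" => @inner ℂ _ _ x y

/-- If `‖A f‖ ≤ K * ‖B f‖` for all `f`, then `A` factors as `M ∘L B`. -/
lemma exists_comp_eq_of_norm_le_s3 (A B : H →L[ℂ] H) (K : ℝ)
    (h : ∀ f, ‖A f‖ ≤ K * ‖B f‖) : ∃ M : H →L[ℂ] H, M ∘L B = A := by
  classical
  set p : Submodule ℂ H := LinearMap.range (B : H →ₗ[ℂ] H) with hp
  have hker : LinearMap.ker (B : H →ₗ[ℂ] H) ≤ LinearMap.ker (A : H →ₗ[ℂ] H) := by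
    intro f hf
    have hf' : B f = 0 := hf
    have := h f
    rw [hf', norm_zero, mul_zero] at this
    simpa [LinearMap.mem_ker] using norm_le_zero_iff.mp this
  set e := LinearMap.quotKerEquivRange (B : H →ₗ[ℂ] H)
  set M₀ : p →ₗ[ℂ] H :=
    ((LinearMap.ker (B : H →ₗ[ℂ] H)).liftQ (A : H →ₗ[ℂ] H) hker).comp e.symm.toLinearMap with hM₀def
  have hM₀ : ∀ f : H, M₀ ⟨B f, LinearMap.mem_range_self (B : H →ₗ[ℂ] H) f⟩ = A f := by
    intro f
    have he : e (Submodule.Quotient.mk f) = ⟨B f, LinearMap.mem_range_self (B : H →ₗ[ℂ] H) f⟩ := by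
      rfl
    have he' : e.symm ⟨B f, LinearMap.mem_range_self (B : H →ₗ[ℂ] H) f⟩ = Submodule.Quotient.mk f := by
      rw [← he, LinearEquiv.symm_apply_apply]
    show ((LinearMap.ker (B : H →ₗ[ℂ] H)).liftQ (A : H →ₗ[ℂ] H) hker) (e.symm ⟨B f, _⟩) = A f
    rw [he', Submodule.liftQ_apply]
    rfl
  have hbdd : ∀ x : p, ‖M₀ x‖ ≤ max K 0 * ‖x‖ := by
    rintro ⟨x, hx⟩
    obtain ⟨f, rfl⟩ := hx
    change ‖M₀ ⟨B f, LinearMap.mem_range_self (B : H →ₗ[ℂ] H) f⟩‖ ≤ max K 0 * ‖(⟨B f, LinearMap.mem_range_self (B : H →ₗ[ℂ] H) f⟩ : p)‖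
    rw [hM₀ f]
    calc ‖A f‖ ≤ K * ‖B f‖ := h f
      _ ≤ max K 0 * ‖B f‖ := by
          gcongr; exact le_max_left _ _
      _ = max K 0 * ‖(⟨B f, LinearMap.mem_range_self (B : H →ₗ[ℂ] H) f⟩ : p)‖ := rfl
  set M₁ : p →L[ℂ] H := M₀.mkContinuous (max K 0) hbdd with hM₁def
  set q : Submodule ℂ H := p.topologicalClosure with hq
  haveI : CompleteSpace q := (p.isClosed_topologicalClosure).completeSpace_coe
  set j : p →L[ℂ] q :=
    (p.subtypeL).codRestrict q (fun x => p.le_topologicalClosure x.2) with hj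
  have hj_apply : ∀ x : p, (j x : H) = (x : H) := fun x => rfl
  have h_iso : Isometry j := AddMonoidHomClass.isometry_of_norm j (fun x => rfl)
  have h_e : IsUniformInducing j := h_iso.isUniformInducing
  have h_dense : DenseRange j := by
    intro x
    have himg : Subtype.val '' Set.range j = (p : Set H) := by
      ext y
      constructor
      · rintro ⟨z, ⟨w, rfl⟩, rfl⟩
        exact w.2
      · intro hy
        exact ⟨j ⟨y, hy⟩, ⟨⟨y, hy⟩, rfl⟩, rfl⟩
    have : (x : H) ∈ closure (Subtype.val '' Set.range j) := by
      rw [himg, ← Submodule.topologicalClosure_coe]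
      exact x.2
    rwa [closure_subtype]
  set M₂ : q →L[ℂ] H := M₁.extend j with hM₂def
  refine ⟨M₂ ∘L (q.orthogonalProjectionOnto : H →L[ℂ] q), ?_⟩
  ext f
  have hmemp : B f ∈ p := LinearMap.mem_range_self (B : H →ₗ[ℂ] H) f
  have hmem : B f ∈ q := p.le_topologicalClosure hmemp
  have hproj : (q.orthogonalProjectionOnto : H →L[ℂ] q) (B f) = ⟨B f, hmem⟩ :=
    Subtype.ext (q.starProjection_eq_self_iff.mpr hmem)
  have hjeq : j ⟨B f, hmemp⟩ = ⟨B f, hmem⟩ := rfl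
  calc (M₂ ∘L (q.orthogonalProjectionOnto : H →L[ℂ] q) ∘L B) f
      = M₂ ⟨B f, hmem⟩ := by
        simp only [comp_apply]
        rw [hproj]
    _ = M₁ ⟨B f, hmemp⟩ := by rw [← hjeq, hM₂def, ContinuousLinearMap.extend_eq (h_dense := h_dense) (h_e := h_e)]
    _ = A f := hM₀ f

end Aux

set_option maxHeartbeats 2000000 in
/-- If `A Q A* = A* P A` with `P, Q` positive and `P` invertible,
then `A` is coposinormal: there is a positive `Q'` with `A Q' A* = A* A`. -/
theorem coposinormal_of_invertible_interrupter
    {H : Type*} [NormedAddCommGroup H] [InnerProductSpace ℂ H] [CompleteSpace H]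
    (A P Q : H →L[ℂ] H)
    (hP : ∀ f : H, 0 ≤ (inner ℂ (P f) f : ℂ))
    (hQ : ∀ f : H, 0 ≤ (inner ℂ (Q f) f : ℂ))
    (hAQA : A ∘L Q ∘L adjoint A = adjoint A ∘L P ∘L A)
    (hPinv : IsUnit P) :
    ∃ Q' : H →L[ℂ] H, (∀ f : H, 0 ≤ (inner ℂ (Q' f) f : ℂ)) ∧
      A ∘L Q' ∘L adjoint A = adjoint A ∘L A := by
  -- P is nonneg in the Loewner order
  have hP0 : (0 : H →L[ℂ] H) ≤ P := by
    rw [ContinuousLinearMap.nonneg_iff_isPositive, ContinuousLinearMap.isPositive_iff_complex]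
    intro x
    obtain ⟨hre, him⟩ := (Complex.le_def.mp (hP x))
    constructor
    · apply Complex.ext <;> simp [← him]
    · simpa using hre
  -- square root of P
  set a : H →L[ℂ] H := CFC.sqrt P with ha
  have ha0 : (0 : H →L[ℂ] H) ≤ a := CFC.sqrt_nonneg P
  have hasa : IsSelfAdjoint a := IsSelfAdjoint.of_nonneg ha0
  have haa : a * a = P := CFC.sqrt_mul_sqrt_self P hP0
  -- a is a unit
  obtain ⟨u, hu⟩ := hPinv
  have haunit : IsUnit a := by
    have h1 : ((↑u⁻¹ : H →L[ℂ] H) * a) * a = 1 := by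
      rw [mul_assoc, haa, ← hu]
      exact u.inv_mul
    have h2 : a * (a * (↑u⁻¹ : H →L[ℂ] H)) = 1 := by
      rw [← mul_assoc, haa, ← hu]
      exact u.mul_inv
    have h3 : (↑u⁻¹ : H →L[ℂ] H) * a = a * ↑u⁻¹ := by
      calc (↑u⁻¹ : H →L[ℂ] H) * a = (↑u⁻¹ * a) * (a * (a * ↑u⁻¹)) := by rw [h2, mul_one]
        _ = ((↑u⁻¹ * a) * a) * (a * ↑u⁻¹) := by noncomm_ring
        _ = a * ↑u⁻¹ := by rw [h1, one_mul]
    exact ⟨⟨a, a * ↑u⁻¹, h2, by rw [← h3, h1]⟩, rfl⟩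
  set R : H →L[ℂ] H := ↑haunit.unit⁻¹ with hR
  have hRa : R * a = 1 := haunit.unit.inv_mul
  -- key norm computation : ⟪P g, g⟫ = ⟪a g, a g⟫
  have hnorm_a : ∀ g : H, (inner ℂ (P g) g : ℂ) = inner ℂ (a g) (a g) := by
    intro g
    have hPg : P g = a (a g) := by rw [← haa]; rfl
    rw [hPg]
    nth_rw 1 [← hasa.adjoint_eq]
    rw [ContinuousLinearMap.adjoint_inner_left]
  -- the pointwise inequality ‖A f‖ ≤ K ‖A† f‖
  have hbound : ∀ f : H, ‖A f‖ ≤ (‖R‖ * Real.sqrt ‖Q‖) * ‖adjoint A f‖ := by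
    intro f
    have h1 : ‖A f‖ ≤ ‖R‖ * ‖a (A f)‖ := by
      calc ‖A f‖ = ‖(R * a) (A f)‖ := by rw [hRa]; simp
        _ = ‖R (a (A f))‖ := rfl
        _ ≤ ‖R‖ * ‖a (A f)‖ := le_opNorm R _
    have h2 : (inner ℂ (P (A f)) (A f) : ℂ) = inner ℂ (Q (adjoint A f)) (adjoint A f) := by
      have happ : A (Q (adjoint A f)) = adjoint A (P (A f)) := by
        have := congrArg (fun T : H →L[ℂ] H => T f) hAQA
        simpa [comp_apply] using this
      calc (inner ℂ (P (A f)) (A f) : ℂ) = inner ℂ (adjoint A (P (A f))) f := by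
            rw [ContinuousLinearMap.adjoint_inner_left]
        _ = inner ℂ (A (Q (adjoint A f))) f := by rw [happ]
        _ = inner ℂ (Q (adjoint A f)) (adjoint A f) := by
            rw [← ContinuousLinearMap.adjoint_inner_right]
    have h3 : ‖a (A f)‖ ^ 2 ≤ ‖Q‖ * ‖adjoint A f‖ ^ 2 := by
      have hre : ‖a (A f)‖ ^ 2 = RCLike.re (inner ℂ (Q (adjoint A f)) (adjoint A f) : ℂ) := by
        rw [← inner_self_eq_norm_sq (𝕜 := ℂ) (a (A f)), ← hnorm_a (A f), h2]
      rw [hre]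
      calc RCLike.re (inner ℂ (Q (adjoint A f)) (adjoint A f) : ℂ)
          ≤ ‖(inner ℂ (Q (adjoint A f)) (adjoint A f) : ℂ)‖ := RCLike.re_le_norm _
        _ ≤ ‖Q (adjoint A f)‖ * ‖adjoint A f‖ := norm_inner_le_norm _ _
        _ ≤ (‖Q‖ * ‖adjoint A f‖) * ‖adjoint A f‖ := by
            gcongr; exact le_opNorm Q _
        _ = ‖Q‖ * ‖adjoint A f‖ ^ 2 := by ring
    have h4 : ‖a (A f)‖ ≤ Real.sqrt ‖Q‖ * ‖adjoint A f‖ := by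
      have h5 : Real.sqrt (‖a (A f)‖ ^ 2) ≤ Real.sqrt (‖Q‖ * ‖adjoint A f‖ ^ 2) :=
        Real.sqrt_le_sqrt h3
      rwa [Real.sqrt_sq (norm_nonneg _), Real.sqrt_mul (norm_nonneg Q),
        Real.sqrt_sq (norm_nonneg _)] at h5
    calc ‖A f‖ ≤ ‖R‖ * ‖a (A f)‖ := h1
      _ ≤ ‖R‖ * (Real.sqrt ‖Q‖ * ‖adjoint A f‖) := by gcongr
      _ = (‖R‖ * Real.sqrt ‖Q‖) * ‖adjoint A f‖ := by ring
  -- factor A through adjoint A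
  obtain ⟨M, hM⟩ := exists_comp_eq_of_norm_le_s3 A (adjoint A) _ hbound
  have hAM : A ∘L adjoint M = adjoint A := by
    have := congrArg ContinuousLinearMap.adjoint hM
    rwa [ContinuousLinearMap.adjoint_comp, ContinuousLinearMap.adjoint_adjoint] at this
  refine ⟨adjoint M ∘L M, ?_, ?_⟩
  · intro f
    have : (inner ℂ ((adjoint M ∘L M) f) f : ℂ) = inner ℂ (M f) (M f) := by
      rw [comp_apply, ContinuousLinearMap.adjoint_inner_left]
    rw [this, inner_self_eq_norm_sq_to_K, ← RCLike.ofReal_pow]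
    exact RCLike.ofReal_nonneg.mpr (sq_nonneg _)
  · calc A ∘L (adjoint M ∘L M) ∘L adjoint A
        = (A ∘L adjoint M) ∘L (M ∘L adjoint A) := by
          simp only [ContinuousLinearMap.comp_assoc]
      _ = adjoint A ∘L A := by rw [hAM, hM]
end

section
/- Let H be a complex Hilbert space and let A, P, Q be bounded linear operators on H with P and Q positive, satisfying A Q A* = A* P A. If both P and Q are invertible, then Ker(A) = Ker(A*) and Ran(A) = Ran(A*). -/
open scoped ComplexOrder
open ContinuousLinearMap

/-- Douglas-type range inclusion. -/
lemma douglas_range {H : Type*} [NormedAddCommGroup H] [InnerProductSpace ℂ H] [CompleteSpace H]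
    (B C : H →L[ℂ] H) (c : ℝ) (h : ∀ x, ‖B x‖ ≤ c * ‖C x‖) :
    LinearMap.range (adjoint B : H →ₗ[ℂ] H) ≤ LinearMap.range (adjoint C : H →ₗ[ℂ] H) := by
  rintro _ ⟨y, rfl⟩
  -- the functional x ↦ ⟪y, B x⟫
  set φ : H →ₗ[ℂ] ℂ := ((innerSL ℂ y).comp B).toLinearMap with hφ
  have hker : LinearMap.ker (C : H →ₗ[ℂ] H) ≤ LinearMap.ker φ := by
    intro x hx
    have hx' : C x = 0 := hx
    have : ‖B x‖ ≤ c * ‖C x‖ := h x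
    rw [hx', norm_zero, mul_zero] at this
    have hBx : B x = 0 := norm_le_zero_iff.mp this
    simp [hφ, hBx]
  set ℓ : LinearMap.range (C : H →ₗ[ℂ] H) →ₗ[ℂ] ℂ :=
    ((LinearMap.ker (C : H →ₗ[ℂ] H)).liftQ φ hker).comp
      (C : H →ₗ[ℂ] H).quotKerEquivRange.symm.toLinearMap with hℓ
  have hℓ_apply : ∀ x : H,
      ℓ ⟨(C : H →ₗ[ℂ] H) x, LinearMap.mem_range_self _ x⟩ = inner ℂ y (B x) := by
    intro x
    rw [hℓ]
    show ((LinearMap.ker (C : H →ₗ[ℂ] H)).liftQ φ hker)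
      ((C : H →ₗ[ℂ] H).quotKerEquivRange.symm
        ⟨(C : H →ₗ[ℂ] H) x, LinearMap.mem_range_self _ x⟩) = inner ℂ y (B x)
    rw [LinearMap.quotKerEquivRange_symm_apply_image]
    show ((LinearMap.ker (C : H →ₗ[ℂ] H)).liftQ φ hker) (Submodule.Quotient.mk x) = _
    rw [Submodule.liftQ_apply]
    simp [hφ]
  have hbound : ∀ z : LinearMap.range (C : H →ₗ[ℂ] H), ‖ℓ z‖ ≤ (c * ‖y‖) * ‖z‖ := by
    rintro ⟨z, hz⟩
    obtain ⟨x, rfl⟩ := hz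
    rw [hℓ_apply x]
    show ‖(inner ℂ y (B x) : ℂ)‖ ≤ (c * ‖y‖) * ‖C x‖
    have h1 := norm_inner_le_norm (𝕜 := ℂ) y (B x)
    have h2 := h x
    nlinarith [norm_nonneg y, norm_nonneg (B x)]
  set ℓc : LinearMap.range (C : H →ₗ[ℂ] H) →L[ℂ] ℂ :=
    LinearMap.mkContinuous ℓ (c * ‖y‖) hbound with hℓc
  obtain ⟨g, hg, -⟩ := exists_extension_norm_eq (LinearMap.range (C : H →ₗ[ℂ] H)) ℓc
  set w : H := (InnerProductSpace.toDual ℂ H).symm g with hw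
  refine ⟨w, ?_⟩
  apply ext_inner_right ℂ
  intro x
  rw [ContinuousLinearMap.coe_coe, ContinuousLinearMap.coe_coe, adjoint_inner_left, adjoint_inner_left]
  have h1 : (inner ℂ w (C x) : ℂ) = g (C x) := InnerProductSpace.toDual_symm_apply
  have h2 : g (C x) = ℓc ⟨C x, LinearMap.mem_range_self (C : H →ₗ[ℂ] H) x⟩ :=
    hg ⟨C x, LinearMap.mem_range_self (C : H →ₗ[ℂ] H) x⟩
  rw [h1, h2]
  exact hℓ_apply x


lemma pos_selfadjoint {H : Type*} [NormedAddCommGroup H] [InnerProductSpace ℂ H] [CompleteSpace H]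
    (T : H →L[ℂ] H) (hT : ∀ f, 0 ≤ (inner ℂ (T f) f : ℂ)) : IsSelfAdjoint T := by
  have : T.IsPositive := by
    rw [ContinuousLinearMap.isPositive_iff_complex]
    intro x
    have h := hT x
    rw [Complex.le_def] at h
    obtain ⟨hre, him⟩ := h
    simp only [Complex.zero_re, Complex.zero_im] at hre him
    refine ⟨?_, hre⟩
    apply Complex.ext <;> simp [← him]
  exact this.isSelfAdjoint

lemma pos_cs {H : Type*} [NormedAddCommGroup H] [InnerProductSpace ℂ H] [CompleteSpace H]
    (T : H →L[ℂ] H) (hT : ∀ f, 0 ≤ (inner ℂ (T f) f : ℂ)) (x y : H) :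
    ‖(inner ℂ (T x) y : ℂ)‖ ^ 2 ≤ (inner ℂ (T x) x : ℂ).re * (inner ℂ (T y) y : ℂ).re := by
  have hre : ∀ f, 0 ≤ (inner ℂ (T f) f : ℂ).re := by
    intro f; have h := hT f; rw [Complex.le_def] at h; simpa using h.1
  have hsa := pos_selfadjoint T hT
  have hsym : ∀ u v : H, (inner ℂ (T u) v : ℂ) = inner ℂ u (T v) := by
    intro u v
    conv_lhs => rw [← hsa.adjoint_eq]
    rw [adjoint_inner_left]
  set s : ℂ := inner ℂ (T x) y with hs
  by_cases h0 : s = 0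
  · rw [h0, norm_zero]
    rw [show (0:ℝ)^2 = 0 from by norm_num]
    exact mul_nonneg (hre x) (hre y)
  · set c : ℂ := (starRingEnd ℂ) s / ‖s‖ with hc
    have hsn : (‖s‖ : ℂ) ≠ 0 := by
      simpa using norm_ne_zero_iff.mpr h0
    have hss : (starRingEnd ℂ) s * s = (‖s‖ : ℂ) * (‖s‖ : ℂ) := by
      rw [mul_comm, Complex.mul_conj, Complex.normSq_eq_norm_sq]
      push_cast
      ring
    have hcs : c * s = (‖s‖ : ℂ) := by
      rw [hc, div_mul_eq_mul_div, hss, mul_div_assoc, div_self hsn, mul_one]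
    have hcc : (starRingEnd ℂ) c * c = 1 := by
      have h1 : (starRingEnd ℂ) c * c = ((starRingEnd ℂ) s * s) / ((‖s‖:ℂ) * (‖s‖:ℂ)) := by
        rw [hc, map_div₀, Complex.conj_conj, Complex.conj_ofReal]
        ring
      rw [h1, hss, div_self (mul_ne_zero hsn hsn)]
    set a : ℝ := (inner ℂ (T x) x : ℂ).re
    set b : ℝ := (inner ℂ (T y) y : ℂ).re
    have key : ∀ t : ℝ, 0 ≤ a - 2 * t * ‖s‖ + t ^ 2 * b := by
      intro t
      have h1 := hre (x - ((t : ℂ) * c) • y)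
      have expand : (inner ℂ (T (x - ((t:ℂ)*c) • y)) (x - ((t:ℂ)*c) • y) : ℂ)
          = inner ℂ (T x) x - ((t:ℂ)*c) * inner ℂ (T x) y
            - (starRingEnd ℂ) ((t:ℂ)*c) * inner ℂ (T y) x
            + ((t:ℂ)*c) * (starRingEnd ℂ) ((t:ℂ)*c) * inner ℂ (T y) y := by
        simp only [map_sub, map_smul, inner_sub_left, inner_sub_right,
          inner_smul_left, inner_smul_right]
        ring
      have hyx : (inner ℂ (T y) x : ℂ) = (starRingEnd ℂ) s := by
        rw [hsym y x, ← inner_conj_symm, hs]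
      rw [expand] at h1
      have e2 : ((t:ℂ)*c) * inner ℂ (T x) y = (t:ℂ) * (‖s‖:ℂ) := by
        rw [← hs, mul_assoc, hcs]
      have e3 : (starRingEnd ℂ) ((t:ℂ)*c) * inner ℂ (T y) x = (t:ℂ) * (‖s‖:ℂ) := by
        rw [hyx, map_mul, Complex.conj_ofReal, mul_assoc]
        have h5 : (starRingEnd ℂ) c * (starRingEnd ℂ) s = (‖s‖:ℂ) :=
          calc (starRingEnd ℂ) c * (starRingEnd ℂ) s
              = (starRingEnd ℂ) (c * s) := (map_mul _ _ _).symm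
            _ = (starRingEnd ℂ) ((‖s‖:ℂ)) := by rw [hcs]
            _ = (‖s‖:ℂ) := Complex.conj_ofReal _
        rw [h5]
      have e4 : ((t:ℂ)*c) * (starRingEnd ℂ) ((t:ℂ)*c) * inner ℂ (T y) y
          = (t:ℂ)^2 * inner ℂ (T y) y := by
        rw [map_mul, Complex.conj_ofReal]
        rw [show ((t:ℂ)*c) * ((t:ℂ) * (starRingEnd ℂ) c) = (t:ℂ)^2 * ((starRingEnd ℂ) c * c) by ring]
        rw [hcc, mul_one]
      rw [e2, e3, e4] at h1
      rw [show (inner ℂ (T x) x - (t:ℂ) * (‖s‖:ℂ) - (t:ℂ) * (‖s‖:ℂ) + (t:ℂ)^2 * inner ℂ (T y) y : ℂ)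
          = inner ℂ (T x) x + ((t^2 : ℝ) : ℂ) * inner ℂ (T y) y - ((2 * t * ‖s‖ : ℝ) : ℂ) from by
        push_cast; ring] at h1
      have h6 : (inner ℂ (T x) x + ((t^2 : ℝ) : ℂ) * inner ℂ (T y) y
          - ((2 * t * ‖s‖ : ℝ) : ℂ)).re = a + t^2 * b - 2 * t * ‖s‖ := by
        simp [Complex.sub_re, Complex.add_re, Complex.mul_re, Complex.mul_im,
          Complex.ofReal_re, Complex.ofReal_im, a, b, sq]
        try ring
      rw [h6] at h1
      linarith
    -- conclude ‖s‖^2 ≤ a * b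
    have ha : 0 ≤ a := hre x
    have hb : 0 ≤ b := hre y
    by_cases hb0 : b = 0
    · exfalso
      have hpos : 0 < ‖s‖ := norm_pos_iff.mpr h0
      have := key ((a + 1) / (2 * ‖s‖))
      rw [hb0] at this
      have hne : ‖s‖ ≠ 0 := ne_of_gt hpos
      have h2 : 2 * ((a + 1) / (2 * ‖s‖)) * ‖s‖ = a + 1 := by
        rw [show 2 * ((a + 1) / (2 * ‖s‖)) * ‖s‖ = (a + 1) * ((2 * ‖s‖) / (2 * ‖s‖)) from by
          ring]
        rw [div_self (mul_pos two_pos hpos).ne', mul_one]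
      nlinarith
    · have hbpos : 0 < b := lt_of_le_of_ne hb (Ne.symm hb0)
      have := key (‖s‖ / b)
      have h2 : a - 2 * (‖s‖ / b) * ‖s‖ + (‖s‖ / b) ^ 2 * b = a - ‖s‖ ^ 2 / b := by
        field_simp; ring
      rw [h2] at this
      calc ‖s‖ ^ 2 = (‖s‖ ^ 2 / b) * b := by field_simp
        _ ≤ a * b := by nlinarith

lemma pos_lower {H : Type*} [NormedAddCommGroup H] [InnerProductSpace ℂ H] [CompleteSpace H]
    (Q : H →L[ℂ] H) (hQ : ∀ f, 0 ≤ (inner ℂ (Q f) f : ℂ)) (hQinv : IsUnit Q) :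
    ∃ c : ℝ, 0 < c ∧ ∀ g : H, c * ‖g‖ ^ 2 ≤ (inner ℂ (Q g) g : ℂ).re := by
  have hre : ∀ f, 0 ≤ (inner ℂ (Q f) f : ℂ).re := by
    intro f; have h := hQ f; rw [Complex.le_def] at h; simpa using h.1
  obtain ⟨u, hu⟩ := hQinv
  have hR : ∀ g : H, (↑u⁻¹ : H →L[ℂ] H) (Q g) = g := by
    intro g
    have h1 : ((↑u⁻¹ * ↑u : H →L[ℂ] H)) g = (1 : H →L[ℂ] H) g := by rw [u.inv_mul]
    rw [ContinuousLinearMap.mul_apply, ContinuousLinearMap.one_apply, hu] at h1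
    exact h1
  set K : ℝ := ‖(↑u⁻¹ : H →L[ℂ] H)‖ with hK
  set N : ℝ := ‖Q‖ with hN
  refine ⟨1 / (K ^ 2 * N + 1), by positivity, fun g => ?_⟩
  by_cases hQg : Q g = 0
  · have hg0 : g = 0 := by rw [← hR g, hQg, map_zero]
    simp [hg0]
  · have hq2 : 0 < ‖Q g‖ := norm_pos_iff.mpr hQg
    have h1 : ‖g‖ ≤ K * ‖Q g‖ := by
      conv_lhs => rw [← hR g]
      exact le_opNorm _ _
    have h2 := pos_cs Q hQ g (Q g)
    have h3 : ‖(inner ℂ (Q g) (Q g) : ℂ)‖ = ‖Q g‖ ^ 2 := by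
      rw [@inner_self_eq_norm_sq_to_K ℂ]
      simp
    have h4 : (inner ℂ (Q (Q g)) (Q g) : ℂ).re ≤ N * ‖Q g‖ ^ 2 := by
      calc (inner ℂ (Q (Q g)) (Q g) : ℂ).re ≤ ‖(inner ℂ (Q (Q g)) (Q g) : ℂ)‖ :=
            Complex.re_le_norm _
        _ ≤ ‖Q (Q g)‖ * ‖Q g‖ := norm_inner_le_norm (𝕜 := ℂ) _ _
        _ ≤ (N * ‖Q g‖) * ‖Q g‖ := by gcongr; exact le_opNorm _ _
        _ = N * ‖Q g‖ ^ 2 := by ring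
    rw [h3] at h2
    have hreg := hre g
    have h4' := mul_le_mul_of_nonneg_left h4 hreg
    have h5 : ‖Q g‖ ^ 2 ≤ (inner ℂ (Q g) g : ℂ).re * N := by
      nlinarith [h2, h4', mul_pos hq2 hq2]
    have h6 : ‖g‖ ^ 2 ≤ K ^ 2 * ‖Q g‖ ^ 2 := by nlinarith [norm_nonneg g, norm_nonneg (Q g)]
    have hKN : 0 ≤ K ^ 2 * N := by
      have : (0:ℝ) ≤ N := norm_nonneg _
      positivity
    rw [div_mul_eq_mul_div, one_mul, div_le_iff₀ (by positivity)]
    nlinarith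

lemma sq_dominate {a b k : ℝ} (ha : 0 ≤ a) (hb : 0 ≤ b) (hk : 0 ≤ k) (h : a ^ 2 ≤ k * b ^ 2) :
    a ≤ Real.sqrt k * b := by
  have h2 := Real.sqrt_le_sqrt h
  rwa [Real.sqrt_sq ha, Real.sqrt_mul hk, Real.sqrt_sq hb] at h2

/-- If `A Q A* = A* P A` with `P, Q` positive and both `P` and
`Q` invertible, then `ker A = ker A*` and `ran A = ran A*`. -/
theorem ker_eq_and_range_eq_of_invertible_interrupters
    {H : Type*} [NormedAddCommGroup H] [InnerProductSpace ℂ H] [CompleteSpace H]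
    (A P Q : H →L[ℂ] H)
    (hP : ∀ f : H, 0 ≤ (inner ℂ (P f) f : ℂ))
    (hQ : ∀ f : H, 0 ≤ (inner ℂ (Q f) f : ℂ))
    (hAQA : A ∘L Q ∘L adjoint A = adjoint A ∘L P ∘L A)
    (hPinv : IsUnit P) (hQinv : IsUnit Q) :
    LinearMap.ker (A : H →ₗ[ℂ] H) = LinearMap.ker (adjoint A : H →ₗ[ℂ] H) ∧
      LinearMap.range (A : H →ₗ[ℂ] H) = LinearMap.range (adjoint A : H →ₗ[ℂ] H) := by
  obtain ⟨cQ, hcQ, hQlow⟩ := pos_lower Q hQ hQinv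
  obtain ⟨cP, hcP, hPlow⟩ := pos_lower P hP hPinv
  -- the basic identity
  have key : ∀ x : H, (inner ℂ (Q (adjoint A x)) (adjoint A x) : ℂ).re
      = (inner ℂ (P (A x)) (A x) : ℂ).re := by
    intro x
    have h1 : ((A ∘L Q ∘L adjoint A) x : H) = (adjoint A ∘L P ∘L A) x := by rw [hAQA]
    have h2 : (inner ℂ ((A ∘L Q ∘L adjoint A) x) x : ℂ) = inner ℂ ((adjoint A ∘L P ∘L A) x) x := by
      rw [h1]
    simp only [comp_apply] at h2
    rw [show (inner ℂ (A (Q (adjoint A x))) x : ℂ) = inner ℂ (Q (adjoint A x)) (adjoint A x) from by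
        rw [← adjoint_inner_right],
      show (inner ℂ (adjoint A (P (A x))) x : ℂ) = inner ℂ (P (A x)) (A x) from by
        rw [adjoint_inner_left]] at h2
    rw [h2]
  -- upper bounds
  have upper : ∀ (T : H →L[ℂ] H) (g : H), (inner ℂ (T g) g : ℂ).re ≤ ‖T‖ * ‖g‖ ^ 2 := by
    intro T g
    calc (inner ℂ (T g) g : ℂ).re ≤ ‖(inner ℂ (T g) g : ℂ)‖ := Complex.re_le_norm _
      _ ≤ ‖T g‖ * ‖g‖ := norm_inner_le_norm (𝕜 := ℂ) _ _
      _ ≤ (‖T‖ * ‖g‖) * ‖g‖ := by gcongr; exact le_opNorm _ _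
      _ = ‖T‖ * ‖g‖ ^ 2 := by ring
  have hA1 : ∀ x : H, cQ * ‖adjoint A x‖ ^ 2 ≤ ‖P‖ * ‖A x‖ ^ 2 := fun x =>
    le_trans (le_trans (hQlow (adjoint A x)) (le_of_eq (key x))) (upper P (A x))
  have hA2 : ∀ x : H, cP * ‖A x‖ ^ 2 ≤ ‖Q‖ * ‖adjoint A x‖ ^ 2 := fun x =>
    le_trans (le_trans (hPlow (A x)) (le_of_eq (key x).symm)) (upper Q (adjoint A x))
  have hn1 : ∀ x : H, ‖adjoint A x‖ ≤ Real.sqrt (‖P‖ / cQ) * ‖A x‖ := by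
    intro x
    refine sq_dominate (norm_nonneg _) (norm_nonneg _) (by positivity) ?_
    rw [div_mul_eq_mul_div, le_div_iff₀ hcQ]
    calc ‖adjoint A x‖ ^ 2 * cQ = cQ * ‖adjoint A x‖ ^ 2 := by ring
      _ ≤ ‖P‖ * ‖A x‖ ^ 2 := hA1 x
  have hn2 : ∀ x : H, ‖A x‖ ≤ Real.sqrt (‖Q‖ / cP) * ‖adjoint A x‖ := by
    intro x
    refine sq_dominate (norm_nonneg _) (norm_nonneg _) (by positivity) ?_
    rw [div_mul_eq_mul_div, le_div_iff₀ hcP]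
    calc ‖A x‖ ^ 2 * cP = cP * ‖A x‖ ^ 2 := by ring
      _ ≤ ‖Q‖ * ‖adjoint A x‖ ^ 2 := hA2 x
  constructor
  · ext x
    simp only [LinearMap.mem_ker, ContinuousLinearMap.coe_coe]
    constructor
    · intro hx
      have := hn1 x
      rw [hx, norm_zero, mul_zero] at this
      exact norm_le_zero_iff.mp this
    · intro hx
      have := hn2 x
      rw [hx, norm_zero, mul_zero] at this
      exact norm_le_zero_iff.mp this
  · apply le_antisymm
    · have h := douglas_range (adjoint A) A (Real.sqrt (‖P‖ / cQ)) hn1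
      rwa [adjoint_adjoint] at h
    · have h := douglas_range A (adjoint A) (Real.sqrt (‖Q‖ / cP)) hn2
      rwa [adjoint_adjoint] at h
end

section
/- Let H be a complex Hilbert space and let A, P, Q be bounded linear operators on H with P and Q positive, satisfying A Q A* = A* P A. If Q ≥ I ≥ P ≥ 0 (i.e., Q − I and I − P are positive operators), then A is hyponormal; that is, ⟨(A*A − AA*) f, f⟩ ≥ 0 for all f ∈ H. -/
open scoped ComplexOrder
open ContinuousLinearMap

/-- If `A Q A* = A* P A` with `Q ≥ I ≥ P ≥ 0`, then `A` is
hyponormal: `⟨(A*A − AA*) f, f⟩ ≥ 0` for all `f`. -/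
theorem hyponormal_of_interrupter_pair_squeeze
    {H : Type*} [NormedAddCommGroup H] [InnerProductSpace ℂ H] [CompleteSpace H]
    (A P Q : H →L[ℂ] H)
    (hP : ∀ f : H, 0 ≤ (inner ℂ (P f) f : ℂ))
    (hQ : ∀ f : H, 0 ≤ (inner ℂ (Q f) f : ℂ))
    (hAQA : A ∘L Q ∘L adjoint A = adjoint A ∘L P ∘L A)
    (hQI : ∀ f : H, 0 ≤ (inner ℂ ((Q - 1) f) f : ℂ))
    (hIP : ∀ f : H, 0 ≤ (inner ℂ ((1 - P) f) f : ℂ)) :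
    ∀ f : H, 0 ≤ (inner ℂ ((adjoint A ∘L A - A ∘L adjoint A) f) f : ℂ) := by
  intro f
  have h1 := hIP (A f)
  have h2 := hQI (adjoint A f)
  simp only [sub_apply, one_apply, inner_sub_left] at h1 h2
  -- ⟨P A f, A f⟩ = ⟨Q A* f, A* f⟩
  have key : (inner ℂ (P (A f)) (A f) : ℂ) = inner ℂ (Q (adjoint A f)) (adjoint A f) := by
    have := congrArg (fun T : H →L[ℂ] H => (inner ℂ (T f) f : ℂ)) hAQA
    simp only [comp_apply] at this
    rw [adjoint_inner_left] at this
    rw [← this]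
    rw [← adjoint_inner_right A]
  simp only [comp_apply, sub_apply, inner_sub_left]
  have hAf : (inner ℂ (A (adjoint A f)) f : ℂ) = inner ℂ (adjoint A f) (adjoint A f) := by
    rw [← adjoint_inner_right A]
  have hAAf : (inner ℂ (adjoint A (A f)) f : ℂ) = inner ℂ (A f) (A f) := adjoint_inner_left A _ _
  rw [hAf, hAAf, sub_nonneg]
  rw [sub_nonneg] at h1 h2
  calc (inner ℂ (adjoint A f) (adjoint A f) : ℂ) ≤ inner ℂ (Q (adjoint A f)) (adjoint A f) := h2
    _ = inner ℂ (P (A f)) (A f) := key.symm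
    _ ≤ inner ℂ (A f) (A f) := h1
end

section
/- For every real number α > −1, there exists a bounded linear operator C on ℓ² whose matrix entries with respect to the standard orthonormal basis are ⟨C e_j, e_i⟩ = 1/(i+1+α) for 0 ≤ j ≤ i and 0 for j > i. -/
open Finset
open scoped ENNReal

/-- The standard orthonormal basis vectors of `ℓ² = ℓ²(ℕ, ℂ)`. -/
noncomputable def e (n : ℕ) : lp (fun _ : ℕ => ℂ) 2 := lp.single 2 n 1

namespace CesaroAux

/-- Partial averages. -/
noncomputable def b (a : ℕ → ℝ) (n : ℕ) : ℝ := (∑ j ∈ range (n + 1), a j) / (n + 1)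

lemma b_nonneg {a : ℕ → ℝ} (ha : ∀ n, 0 ≤ a n) (n : ℕ) : 0 ≤ b a n :=
  div_nonneg (Finset.sum_nonneg fun _ _ => ha _) (by positivity)

lemma key (a : ℕ → ℝ) (n : ℕ) :
    b a n ^ 2 - 2 * a n * b a n ≤
      (n : ℝ) * (b a (n - 1)) ^ 2 - ((n : ℝ) + 1) * (b a n) ^ 2 := by
  cases n with
  | zero =>
      have h0 : b a 0 = a 0 := by simp [b]
      rw [h0]
      push_cast
      nlinarith [sq_nonneg (a 0)]
  | succ m =>
      have hm1 : ((m : ℝ) + 1) ≠ 0 := by positivity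
      have hm2 : ((m : ℝ) + 2) ≠ 0 := by positivity
      have h1 : ((m : ℝ) + 2) * b a (m + 1) = ∑ j ∈ range (m + 2), a j := by
        unfold b; push_cast; field_simp; ring
      have h2 : ((m : ℝ) + 1) * b a m = ∑ j ∈ range (m + 1), a j := by
        unfold b; push_cast; field_simp
      have hb : a (m + 1) = ((m : ℝ) + 2) * b a (m + 1) - ((m : ℝ) + 1) * b a m := by
        rw [h1, h2, Finset.sum_range_succ]; ring
      have hsub : (m + 1) - 1 = m := rfl
      rw [hsub]
      push_cast
      rw [hb]
      nlinarith [mul_nonneg (by positivity : (0:ℝ) ≤ (m : ℝ) + 1)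
        (sq_nonneg (b a m - b a (m + 1)))]

lemma hardy (a : ℕ → ℝ) (ha : ∀ n, 0 ≤ a n) (N : ℕ) :
    ∑ n ∈ range N, (b a n) ^ 2 ≤ 4 * ∑ n ∈ range N, a n ^ 2 := by
  set g : ℕ → ℝ := fun n => (n : ℝ) * (b a (n - 1)) ^ 2 with hg
  have tele : ∑ n ∈ range N, ((b a n) ^ 2 - 2 * a n * b a n) ≤ 0 := by
    calc ∑ n ∈ range N, ((b a n) ^ 2 - 2 * a n * b a n)
        ≤ ∑ n ∈ range N, (g n - g (n + 1)) := by
          refine Finset.sum_le_sum fun n _ => ?_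
          have := key a n
          have hgn1 : g (n + 1) = ((n : ℝ) + 1) * (b a n) ^ 2 := by
            simp [hg]
          have hgn : g n = (n : ℝ) * (b a (n - 1)) ^ 2 := rfl
          rw [hgn, hgn1]; linarith
      _ = g 0 - g N := Finset.sum_range_sub' g N
      _ ≤ 0 := by
          have : g 0 = 0 := by simp [hg]
          have hN : 0 ≤ g N := mul_nonneg (Nat.cast_nonneg N) (sq_nonneg _)
          linarith
  set P := ∑ n ∈ range N, (b a n) ^ 2 with hP
  set Q := ∑ n ∈ range N, a n ^ 2 with hQ
  set R := ∑ n ∈ range N, a n * b a n with hR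
  have hP2R : P ≤ 2 * R := by
    have heq : ∑ n ∈ range N, ((b a n) ^ 2 - 2 * a n * b a n) = P - 2 * R := by
      rw [hP, hR, Finset.mul_sum, ← Finset.sum_sub_distrib]
      exact Finset.sum_congr rfl fun n _ => by ring
    rw [heq] at tele
    linarith
  have hCS : R ^ 2 ≤ Q * P := Finset.sum_mul_sq_le_sq_mul_sq (range N) a (b a)
  have hP0 : 0 ≤ P := Finset.sum_nonneg fun n _ => sq_nonneg _
  have hQ0 : 0 ≤ Q := Finset.sum_nonneg fun n _ => sq_nonneg _
  have hR0 : 0 ≤ R := Finset.sum_nonneg fun n _ =>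
    mul_nonneg (ha n) (b_nonneg ha n)
  rcases eq_or_lt_of_le hP0 with h | h
  · nlinarith
  · have hPP : P * P ≤ (2 * R) * (2 * R) :=
      mul_le_mul hP2R hP2R hP0 (by linarith)
    nlinarith

end CesaroAux

namespace CesaroOp

open CesaroAux

/-- The Cesàro transform of a sequence. -/
noncomputable def T (α : ℝ) (x : ℕ → ℂ) (i : ℕ) : ℂ :=
  ((((i : ℝ) + 1 + α)⁻¹ : ℝ) : ℂ) * ∑ j ∈ range (i + 1), x j

lemma denom_pos {α : ℝ} (hα : α > -1) (i : ℕ) : (0 : ℝ) < (i : ℝ) + 1 + α := by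
  have : (0 : ℝ) ≤ (i : ℝ) := Nat.cast_nonneg i
  linarith

lemma inv_le {α : ℝ} (hα : α > -1) (i : ℕ) :
    ((i : ℝ) + 1 + α)⁻¹ ≤ max 1 (1 + α)⁻¹ / ((i : ℝ) + 1) := by
  have h1 : (0 : ℝ) < 1 + α := by linarith
  have hi : (0 : ℝ) < (i : ℝ) + 1 := by positivity
  have hpos := denom_pos hα i
  rw [inv_eq_one_div, div_le_div_iff₀ hpos hi]
  rcases le_or_gt 0 α with h | h
  · have hM : (1 : ℝ) ≤ max 1 (1 + α)⁻¹ := le_max_left _ _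
    nlinarith
  · have hM : (1 + α)⁻¹ ≤ max 1 (1 + α)⁻¹ := le_max_right _ _
    have hinv : (1 + α) * (1 + α)⁻¹ = 1 := mul_inv_cancel₀ (ne_of_gt h1)
    have hkey : (1 + α) * ((i : ℝ) + 1) ≤ (i : ℝ) + 1 + α := by nlinarith
    have hMpos : (0 : ℝ) < (1 + α)⁻¹ := inv_pos.2 h1
    calc (1 : ℝ) * ((i : ℝ) + 1) = ((1 + α) * ((i : ℝ) + 1)) * (1 + α)⁻¹ := by
          field_simp
      _ ≤ ((i : ℝ) + 1 + α) * (1 + α)⁻¹ := by nlinarith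
      _ ≤ max 1 (1 + α)⁻¹ * ((i : ℝ) + 1 + α) := by nlinarith

lemma T_norm_le {α : ℝ} (hα : α > -1) (x : ℕ → ℂ) (i : ℕ) :
    ‖T α x i‖ ≤ max 1 (1 + α)⁻¹ * b (fun n => ‖x n‖) i := by
  have hpos := denom_pos hα i
  have hi : (0 : ℝ) < (i : ℝ) + 1 := by positivity
  have hsum : ‖∑ j ∈ range (i + 1), x j‖ ≤ ∑ j ∈ range (i + 1), ‖x j‖ :=
    norm_sum_le _ _
  have hsnn : (0 : ℝ) ≤ ∑ j ∈ range (i + 1), ‖x j‖ :=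
    Finset.sum_nonneg fun _ _ => norm_nonneg _
  unfold T b
  rw [norm_mul, Complex.norm_real, Real.norm_eq_abs, abs_of_pos (inv_pos.2 hpos)]
  calc ((i : ℝ) + 1 + α)⁻¹ * ‖∑ j ∈ range (i + 1), x j‖
      ≤ ((i : ℝ) + 1 + α)⁻¹ * ∑ j ∈ range (i + 1), ‖x j‖ := by
        exact mul_le_mul_of_nonneg_left hsum (le_of_lt (inv_pos.2 hpos))
    _ ≤ (max 1 (1 + α)⁻¹ / ((i : ℝ) + 1)) * ∑ j ∈ range (i + 1), ‖x j‖ :=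
        mul_le_mul_of_nonneg_right (inv_le hα i) hsnn
    _ = max 1 (1 + α)⁻¹ * ((∑ j ∈ range (i + 1), ‖x j‖) / ((i : ℝ) + 1)) := by
        ring

lemma sum_sq_le_norm_sq (x : lp (fun _ : ℕ => ℂ) 2) (s : Finset ℕ) :
    ∑ i ∈ s, ‖x i‖ ^ 2 ≤ ‖x‖ ^ 2 := by
  have h := lp.sum_rpow_le_norm_rpow (p := 2) (by norm_num) x s
  have h2 : (2 : ℝ≥0∞).toReal = ((2 : ℕ) : ℝ) := by norm_num
  rw [h2] at h
  simp_rw [Real.rpow_natCast] at h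
  exact h

lemma T_sum_sq_le {α : ℝ} (hα : α > -1) (x : lp (fun _ : ℕ => ℂ) 2) (s : Finset ℕ) :
    ∑ i ∈ s, ‖T α (⇑x) i‖ ^ 2 ≤ (2 * max 1 (1 + α)⁻¹ * ‖x‖) ^ 2 := by
  set M := max 1 (1 + α)⁻¹ with hM
  have hM0 : (0 : ℝ) < M := lt_of_lt_of_le one_pos (le_max_left _ _)
  set N := (s.sup id).succ with hN
  have hsub : s ⊆ range N := Finset.subset_range_sup_succ s
  have ha : ∀ n, 0 ≤ ‖(x : ℕ → ℂ) n‖ := fun n => norm_nonneg _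
  calc ∑ i ∈ s, ‖T α (⇑x) i‖ ^ 2
      ≤ ∑ i ∈ range N, ‖T α (⇑x) i‖ ^ 2 :=
        Finset.sum_le_sum_of_subset_of_nonneg hsub fun _ _ _ => by positivity
    _ ≤ ∑ i ∈ range N, (M * b (fun n => ‖(x : ℕ → ℂ) n‖) i) ^ 2 := by
        refine Finset.sum_le_sum fun i _ => ?_
        have h := T_norm_le hα (⇑x) i
        exact pow_le_pow_left₀ (norm_nonneg _) h 2
    _ = M ^ 2 * ∑ i ∈ range N, (b (fun n => ‖(x : ℕ → ℂ) n‖) i) ^ 2 := by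
        rw [Finset.mul_sum]
        exact Finset.sum_congr rfl fun i _ => by ring
    _ ≤ M ^ 2 * (4 * ∑ i ∈ range N, ‖(x : ℕ → ℂ) i‖ ^ 2) :=
        mul_le_mul_of_nonneg_left (hardy _ ha N) (by positivity)
    _ ≤ M ^ 2 * (4 * ‖x‖ ^ 2) := by
        have := sum_sq_le_norm_sq x (range N)
        nlinarith [sq_nonneg M]
    _ = (2 * M * ‖x‖) ^ 2 := by ring

lemma T_memℓp {α : ℝ} (hα : α > -1) (x : lp (fun _ : ℕ => ℂ) 2) :
    Memℓp (T α (⇑x)) 2 := by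
  refine memℓp_gen' (C := (2 * max 1 (1 + α)⁻¹ * ‖x‖) ^ 2) (fun s => ?_)
  have h := T_sum_sq_le hα x s
  have h2 : (2 : ℝ≥0∞).toReal = ((2 : ℕ) : ℝ) := by norm_num
  rw [h2]
  simp_rw [Real.rpow_natCast]
  exact h

/-- The generalized Cesàro operator as a continuous linear map. -/
noncomputable def op (α : ℝ) (hα : α > -1) :
    lp (fun _ : ℕ => ℂ) 2 →L[ℂ] lp (fun _ : ℕ => ℂ) 2 :=
  LinearMap.mkContinuous
    { toFun := fun x => ⟨T α (⇑x), T_memℓp hα x⟩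
      map_add' := fun x y => by
        apply lp.ext
        funext i
        show T α (⇑(x + y)) i = T α (⇑x) i + T α (⇑y) i
        simp only [T, lp.coeFn_add, Pi.add_apply, Finset.sum_add_distrib]
        ring
      map_smul' := fun c x => by
        apply lp.ext
        funext i
        show T α (⇑(c • x)) i = c • T α (⇑x) i
        simp only [T, lp.coeFn_smul, Pi.smul_apply, smul_eq_mul, Finset.mul_sum]
        exact Finset.sum_congr rfl fun j _ => by ring }
    (2 * max 1 (1 + α)⁻¹)
    (fun x => by
      have hM0 : (0 : ℝ) < max 1 (1 + α)⁻¹ := lt_of_lt_of_le one_pos (le_max_left _ _)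
      refine lp.norm_le_of_forall_sum_le (by norm_num)
        (by positivity) (fun s => ?_)
      have h := T_sum_sq_le hα x s
      have h2 : (2 : ℝ≥0∞).toReal = ((2 : ℕ) : ℝ) := by norm_num
      rw [h2]
      simp_rw [Real.rpow_natCast]
      exact h)

lemma op_apply {α : ℝ} (hα : α > -1) (x : lp (fun _ : ℕ => ℂ) 2) (i : ℕ) :
    (op α hα x : ℕ → ℂ) i = T α (⇑x) i := rfl

end CesaroOp

lemma e_apply (j k : ℕ) : (e j : ℕ → ℂ) k = if k = j then 1 else 0 := by
  rw [e, lp.single_apply]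
  split_ifs with h
  · subst h; simp
  · simp [h]

/-- For every `α > -1` there is a bounded operator `C` on `ℓ²`
with matrix entries `⟨C e_j, e_i⟩ = 1/(i+1+α)` for `j ≤ i` and `0` for `j > i`
(the generalized Cesàro operator of order one). -/
theorem exists_generalized_cesaro_order_one (α : ℝ) (hα : α > -1) :
    ∃ C : lp (fun _ : ℕ => ℂ) 2 →L[ℂ] lp (fun _ : ℕ => ℂ) 2,
      ∀ i j : ℕ, (inner ℂ (e i) (C (e j)) : ℂ) =
        if j ≤ i then ((1 / ((i : ℝ) + 1 + α) : ℝ) : ℂ) else 0 := by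
  refine ⟨CesaroOp.op α hα, fun i j => ?_⟩
  have h1 : (inner ℂ (e i) (CesaroOp.op α hα (e j)) : ℂ)
      = (CesaroOp.op α hα (e j) : ℕ → ℂ) i := by
    rw [e, lp.inner_single_left]
    simp [RCLike.inner_apply]
  rw [h1, CesaroOp.op_apply]
  unfold CesaroOp.T
  have hsum : ∑ k ∈ Finset.range (i + 1), (e j : ℕ → ℂ) k
      = if j ≤ i then 1 else 0 := by
    simp_rw [e_apply]
    rw [Finset.sum_ite_eq' (Finset.range (i + 1)) j (fun _ => (1 : ℂ))]
    simp [Nat.lt_succ_iff]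
  rw [hsum]
  split_ifs with h
  · rw [mul_one, one_div]
  · rw [mul_zero]
end

section
/- Let α > −1 be a real number and let C = (C^(α),1) be the generalized Cesàro operator of order one on ℓ². Let Q be the diagonal operator diag{1+α, 1, 1, 1, ...} and let P be the diagonal operator diag{(n+1+α)/(n+2+α) : n = 0, 1, 2, ...}. Then C Q C* = C* P C. -/
open ContinuousLinearMap

lemma coord (f : lp (fun _ : ℕ => ℂ) 2) (n : ℕ) : (inner ℂ (e n) f : ℂ) = f n := by
  rw [e, lp.inner_single_left]
  simp [RCLike.inner_apply]

lemma orth (n k : ℕ) : (inner ℂ (e n) (e k) : ℂ) = if k = n then 1 else 0 := by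
  rw [coord, e, lp.single_apply]
  by_cases h : n = k <;> simp [h, eq_comm]

lemma single_eq_smul (k : ℕ) (c : ℂ) : lp.single 2 k c = c • e k := by
  rw [e, ← lp.single_smul]
  norm_num

lemma diag_coord (D : lp (fun _ : ℕ => ℂ) 2 →L[ℂ] lp (fun _ : ℕ => ℂ) 2) (d : ℕ → ℂ)
    (hD : ∀ n, D (e n) = d n • e n) (g : lp (fun _ : ℕ => ℂ) 2) (n : ℕ) :
    (D g) n = d n * g n := by
  have h1 : HasSum (fun k => lp.single 2 k (g k)) g := lp.hasSum_single ENNReal.ofNat_ne_top g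
  have h2 := h1.mapL ((innerSL ℂ (e n)).comp D)
  have h3 : (fun k => ((innerSL ℂ (e n)).comp D) (lp.single 2 k (g k)))
      = fun k => if k = n then d n * g n else 0 := by
    funext k
    simp only [ContinuousLinearMap.comp_apply, innerSL_apply_apply, single_eq_smul, map_smul, hD,
      smul_smul, inner_smul_right, orth]
    by_cases h : k = n <;> simp [h, mul_comm]
  rw [h3] at h2
  have h4 : ((innerSL ℂ (e n)).comp D) g = d n * g n := h2.unique (hasSum_ite_eq n _)
  rw [← coord]
  simpa using h4

lemma op_ext (A B : lp (fun _ : ℕ => ℂ) 2 →L[ℂ] lp (fun _ : ℕ => ℂ) 2)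
    (h : ∀ j, A (e j) = B (e j)) : A = B := by
  refine ContinuousLinearMap.ext fun x => ?_
  have h1 : HasSum (fun k => lp.single 2 k (x k)) x := lp.hasSum_single ENNReal.ofNat_ne_top x
  have hA := h1.mapL A
  have hB := h1.mapL B
  have h2 : (fun k => A (lp.single 2 k (x k))) = fun k => B (lp.single 2 k (x k)) := by
    funext k; rw [single_eq_smul, map_smul, map_smul, h]
  rw [h2] at hA
  exact hA.unique hB

lemma op_ext_inner (A B : lp (fun _ : ℕ => ℂ) 2 →L[ℂ] lp (fun _ : ℕ => ℂ) 2)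
    (h : ∀ i j, (inner ℂ (e i) (A (e j)) : ℂ) = inner ℂ (e i) (B (e j))) : A = B := by
  refine op_ext A B fun j => lp.ext (funext fun i => ?_)
  rw [← coord, ← coord, h]

lemma telescope (c : ℝ) (hc : 0 < c) :
    HasSum (fun n : ℕ => 1 / (((n : ℝ) + c) * ((n : ℝ) + c + 1))) (1 / c) := by
  have hpos : ∀ n : ℕ, (0:ℝ) < (n : ℝ) + c := fun n => by positivity
  have hnn : ∀ n : ℕ, (0:ℝ) ≤ 1 / (((n : ℝ) + c) * ((n : ℝ) + c + 1)) := fun n => by positivity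
  rw [hasSum_iff_tendsto_nat_of_nonneg hnn]
  have hterm : ∀ n : ℕ, 1 / (((n : ℝ) + c) * ((n : ℝ) + c + 1))
      = 1 / ((n : ℝ) + c) - 1 / (((n+1 : ℕ) : ℝ) + c) := by
    intro n
    have h1 := hpos n
    have h2 := hpos (n+1)
    push_cast
    push_cast at h2
    rw [div_sub_div _ _ (ne_of_gt h1) (ne_of_gt h2), one_mul, mul_one]
    push_cast
    ring_nf
  have hsum : ∀ N : ℕ, ∑ n ∈ Finset.range N, 1 / (((n : ℝ) + c) * ((n : ℝ) + c + 1))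
      = 1 / c - 1 / ((N : ℝ) + c) := by
    intro N
    rw [Finset.sum_congr rfl fun n _ => hterm n,
      Finset.sum_range_sub' (fun n => 1 / ((n : ℝ) + c)) N]
    norm_num
  simp only [hsum]
  have ht : Filter.Tendsto (fun N : ℕ => 1 / ((N : ℝ) + c)) Filter.atTop (nhds 0) := by
    simp only [one_div]
    exact Filter.Tendsto.comp tendsto_inv_atTop_zero
      (Filter.tendsto_atTop_add_const_right _ c tendsto_natCast_atTop_atTop)
  simpa using (tendsto_const_nhds.sub ht)

lemma arith1 (x y : ℝ) (hx : x ≠ 0) (hy : y ≠ 0) :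
    1 / x * (x / y * (1 / x)) = 1 / (x * y) := by
  field_simp

set_option maxHeartbeats 1000000 in
/-- For the generalized Cesàro operator of order one `C`,
with `Q = diag{1+α, 1, 1, ...}` and `P = diag{(n+1+α)/(n+2+α)}`, one has
`C Q C* = C* P C`. -/
theorem cesaro_order_one_interrupter_identity (α : ℝ) (hα : α > -1)
    (C Q P : lp (fun _ : ℕ => ℂ) 2 →L[ℂ] lp (fun _ : ℕ => ℂ) 2)
    (hC : ∀ i j : ℕ, (inner ℂ (e i) (C (e j)) : ℂ) =
      if j ≤ i then ((1 / ((i : ℝ) + 1 + α) : ℝ) : ℂ) else 0)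
    (hQ : ∀ n : ℕ, Q (e n) = (if n = 0 then ((1 + α : ℝ) : ℂ) else 1) • e n)
    (hP : ∀ n : ℕ, P (e n) =
      ((((n : ℝ) + 1 + α) / ((n : ℝ) + 2 + α) : ℝ) : ℂ) • e n) :
    C ∘L Q ∘L adjoint C = adjoint C ∘L P ∘L C := by
  -- real matrix entries and diagonal coefficients
  set A : ℕ → ℕ → ℝ := fun i n => if n ≤ i then 1 / ((i : ℝ) + 1 + α) else 0 with hA
  set q : ℕ → ℝ := fun n => if n = 0 then 1 + α else 1 with hq
  set p : ℕ → ℝ := fun n => ((n : ℝ) + 1 + α) / ((n : ℝ) + 2 + α) with hp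
  have hpos : ∀ n : ℕ, (0:ℝ) < (n : ℝ) + 1 + α := by
    intro n
    have : (0:ℝ) ≤ (n : ℝ) := Nat.cast_nonneg n
    linarith
  -- coordinates of C (e j) and (adjoint C) (e j)
  have hCc : ∀ n j : ℕ, (C (e j)) n = ((A n j : ℝ) : ℂ) := by
    intro n j
    rw [← coord, hC, hA]
    by_cases h : j ≤ n <;> simp [h]
  have hCadj : ∀ n j : ℕ, ((adjoint C) (e j)) n = ((A j n : ℝ) : ℂ) := by
    intro n j
    rw [← coord, ContinuousLinearMap.adjoint_inner_right, ← inner_conj_symm, hC, hA]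
    by_cases h : n ≤ j <;> simp [h, Complex.conj_ofReal]
  -- diagonal coordinates
  have hQ' : ∀ n, Q (e n) = ((q n : ℝ) : ℂ) • e n := by
    intro n; rw [hQ, hq]; by_cases h : n = 0 <;> simp [h]
  have hP' : ∀ n, P (e n) = ((p n : ℝ) : ℂ) • e n := fun n => hP n
  have hQg := diag_coord Q _ hQ'
  have hPg := diag_coord P _ hP'
  -- the common value of the matrix entries
  refine op_ext_inner _ _ fun i j => ?_
  have hvL : HasSum (fun n => A i n * (q n * A j n))
      (1 / (((max i j : ℕ) : ℝ) + 1 + α)) := by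
    have hzero : ∀ n ∉ Finset.range (min i j + 1), A i n * (q n * A j n) = 0 := by
      intro n hn
      simp only [Finset.mem_range, Nat.lt_succ_iff, not_le] at hn
      have hcase : i < n ∨ j < n := by omega
      rcases hcase with h | h
      · have hz : A i n = 0 := by simp only [hA]; rw [if_neg (by omega)]
        rw [hz]; ring
      · have hz : A j n = 0 := by simp only [hA]; rw [if_neg (by omega)]
        rw [hz]; ring
    have hS := hasSum_sum_of_ne_finset_zero (L := SummationFilter.unconditional ℕ) hzero
    convert hS using 1
    have hmin : ∀ n ∈ Finset.range (min i j + 1), A i n * (q n * A j n)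
        = 1 / ((i:ℝ)+1+α) * (1 / ((j:ℝ)+1+α)) * q n := by
      intro n hn
      simp only [Finset.mem_range, Nat.lt_succ_iff] at hn
      simp only [hA]
      rw [if_pos (by omega), if_pos (by omega)]
      ring
    rw [Finset.sum_congr rfl hmin, ← Finset.mul_sum]
    have hq1 : ∀ n : ℕ, q n = 1 + (if n = 0 then α else 0) := by
      intro n; simp only [hq]; by_cases h : n = 0 <;> simp [h]
    have hqsum : ∑ n ∈ Finset.range (min i j + 1), q n = ((min i j : ℕ):ℝ) + 1 + α := by
      simp only [hq1, Finset.sum_add_distrib,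
        Finset.sum_ite_eq' (Finset.range (min i j + 1)) 0 (fun _ => α)]
      simp
    rw [hqsum]
    have h1 := hpos i
    have h2 := hpos j
    rcases le_total i j with h | h
    · rw [min_eq_left h, max_eq_right h]
      field_simp
    · rw [min_eq_right h, max_eq_left h]
      field_simp
  have hvR : HasSum (fun n => A n i * (p n * A n j))
      (1 / (((max i j : ℕ) : ℝ) + 1 + α)) := by
    set m := max i j with hm
    set c : ℝ := (m : ℝ) + 1 + α with hcdef
    have hc : 0 < c := hpos m
    have hfun : (fun n : ℕ => A (n + m) i * (p (n + m) * A (n + m) j))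
        = fun n : ℕ => 1 / (((n : ℝ) + c) * ((n : ℝ) + c + 1)) := by
      funext n
      have hx := hpos (n + m)
      have hx2 : (0:ℝ) < ((n + m : ℕ) : ℝ) + 2 + α := by
        have : (0:ℝ) ≤ ((n + m : ℕ) : ℝ) := Nat.cast_nonneg _
        linarith
      simp only [hA, hp]
      rw [if_pos (by omega : i ≤ n + m), if_pos (by omega : j ≤ n + m)]
      have hnc : (n:ℝ) + c = ((n + m : ℕ) : ℝ) + 1 + α := by push_cast; ring
      rw [hnc]
      have h1 : ((n + m : ℕ) : ℝ) + 1 + α + 1 = ((n + m : ℕ) : ℝ) + 2 + α := by ring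
      rw [h1]
      exact arith1 _ _ (ne_of_gt hx) (ne_of_gt hx2)
    have hshift : HasSum (fun n : ℕ => A (n + m) i * (p (n + m) * A (n + m) j)) (1 / c) := by
      rw [hfun]; exact telescope c hc
    have := (hasSum_nat_add_iff
      (f := fun n => A n i * (p n * A n j)) m).mp hshift
    have hzero : ∑ n ∈ Finset.range m, A n i * (p n * A n j) = 0 := by
      apply Finset.sum_eq_zero
      intro n hn
      simp only [Finset.mem_range] at hn
      have hcase : n < i ∨ n < j := by omega
      rcases hcase with h | h
      · have hz : A n i = 0 := by simp only [hA]; rw [if_neg (by omega)]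
        rw [hz]; ring
      · have hz : A n j = 0 := by simp only [hA]; rw [if_neg (by omega)]
        rw [hz]; ring
    rw [hzero, add_zero] at this
    exact this
  -- compute the two matrix entries
  have hLC : (inner ℂ (e i) ((C ∘L Q ∘L adjoint C) (e j)) : ℂ)
      = ((1 / (((max i j : ℕ) : ℝ) + 1 + α) : ℝ) : ℂ) := by
    simp only [ContinuousLinearMap.comp_apply]
    rw [← ContinuousLinearMap.adjoint_inner_left]
    refine (lp.hasSum_inner ((adjoint C) (e i)) (Q ((adjoint C) (e j)))).unique ?_
    have hterm : (fun n => (inner ℂ (((adjoint C) (e i)) n) ((Q ((adjoint C) (e j))) n) : ℂ))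
        = fun n => ((A i n * (q n * A j n) : ℝ) : ℂ) := by
      funext n
      rw [hQg, hCadj, hCadj, RCLike.inner_apply]
      push_cast [Complex.conj_ofReal]
      ring
    rw [hterm]
    simpa using hvL.mapL Complex.ofRealCLM
  have hRC : (inner ℂ (e i) (((adjoint C) ∘L P ∘L C) (e j)) : ℂ)
      = ((1 / (((max i j : ℕ) : ℝ) + 1 + α) : ℝ) : ℂ) := by
    simp only [ContinuousLinearMap.comp_apply]
    rw [ContinuousLinearMap.adjoint_inner_right]
    refine (lp.hasSum_inner (C (e i)) (P (C (e j)))).unique ?_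
    have hterm : (fun n => (inner ℂ ((C (e i)) n) ((P (C (e j))) n) : ℂ))
        = fun n => ((A n i * (p n * A n j) : ℝ) : ℂ) := by
      funext n
      rw [hPg, hCc, hCc, RCLike.inner_apply]
      push_cast [Complex.conj_ofReal]
      ring
    rw [hterm]
    simpa using hvR.mapL Complex.ofRealCLM
  rw [hLC, hRC]
end

section
/- For every real number α > −1, the generalized Cesàro operator of order one C = (C^(α),1) on ℓ² is posinormal and coposinormal: there exists a positive bounded operator P on ℓ² with C C* = C* P C, and there exists a positive bounded operator Q on ℓ² with C Q C* = C* C. -/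
open scoped ComplexOrder
open ContinuousLinearMap
open scoped ENNReal
open Filter

namespace CesaroAux


noncomputable abbrev L2 := lp (fun _ : ℕ => ℂ) 2

lemma sq_summable (f : L2) : Summable fun n => ‖f n‖ ^ (2:ℝ≥0∞).toReal :=
  (lp.memℓp f).summable (by norm_num)

/-- coordinate = inner with basis vector -/
lemma coord (f : L2) (i : ℕ) : (inner ℂ (e i) f : ℂ) = f i := by
  rw [e, lp.inner_single_left, RCLike.inner_apply]
  simp

lemma e_apply (k i : ℕ) : (e k : ∀ _ : ℕ, ℂ) i = if i = k then 1 else 0 := by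
  rw [e, lp.single_apply]
  split <;> simp_all

/-! ### the backward shift -/

noncomputable def Bel (f : L2) : L2 :=
  ⟨fun n => f (n+1), memℓp_gen ((summable_nat_add_iff 1).mpr (sq_summable f))⟩

@[simp] lemma Bel_apply (f : L2) (n : ℕ) : (Bel f) n = f (n+1) := rfl

lemma Bel_add (f g : L2) : Bel (f + g) = Bel f + Bel g := by
  apply lp.ext; funext n
  show (f + g : L2) (n+1) = _
  rw [lp.coeFn_add, lp.coeFn_add]; rfl

lemma Bel_smul (c : ℂ) (f : L2) : Bel (c • f) = c • Bel f := by
  apply lp.ext; funext n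
  show (c • f : L2) (n+1) = _
  rw [lp.coeFn_smul, lp.coeFn_smul]; rfl

lemma Bel_norm (f : L2) : ‖Bel f‖ ≤ 1 * ‖f‖ := by
  rw [one_mul]
  apply lp.norm_le_of_tsum_le (by norm_num) (norm_nonneg f)
  rw [lp.norm_rpow_eq_tsum (by norm_num) f]
  rw [Summable.tsum_eq_zero_add (sq_summable f)]
  exact le_add_of_nonneg_left (Real.rpow_nonneg (norm_nonneg _) _)

noncomputable def B : L2 →L[ℂ] L2 :=
  LinearMap.mkContinuous
    { toFun := Bel, map_add' := Bel_add, map_smul' := Bel_smul } 1 Bel_norm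

@[simp] lemma B_apply (f : L2) (n : ℕ) : (B f) n = f (n+1) := rfl

/-! ### the forward shift -/

noncomputable def Sel (f : L2) : L2 :=
  ⟨fun n => Nat.casesOn n 0 (fun k => f k),
    memℓp_gen ((summable_nat_add_iff 1).mp (by simpa using sq_summable f))⟩

@[simp] lemma Sel_apply_zero (f : L2) : (Sel f) 0 = 0 := rfl
@[simp] lemma Sel_apply_succ (f : L2) (n : ℕ) : (Sel f) (n+1) = f n := rfl

lemma Sel_add (f g : L2) : Sel (f + g) = Sel f + Sel g := by
  apply lp.ext; funext n
  have : (Sel f + Sel g : L2) n = Sel f n + Sel g n := by rw [lp.coeFn_add]; rfl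
  rw [this]
  cases n with
  | zero => simp
  | succ k =>
    show (f + g : L2) k = _
    rw [lp.coeFn_add]; rfl

lemma Sel_smul (c : ℂ) (f : L2) : Sel (c • f) = c • Sel f := by
  apply lp.ext; funext n
  have : (c • Sel f : L2) n = c • Sel f n := by rw [lp.coeFn_smul]; rfl
  rw [this]
  cases n with
  | zero => simp
  | succ k =>
    show (c • f : L2) k = _
    rw [lp.coeFn_smul]; rfl

lemma Sel_norm (f : L2) : ‖Sel f‖ ≤ 1 * ‖f‖ := by
  rw [one_mul]
  apply lp.norm_le_of_tsum_le (by norm_num) (norm_nonneg f)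
  rw [lp.norm_rpow_eq_tsum (by norm_num) f]
  have hsum : Summable fun n => ‖Sel f n‖ ^ (2:ℝ≥0∞).toReal := sq_summable (Sel f)
  rw [Summable.tsum_eq_zero_add hsum]
  have h0 : ‖Sel f 0‖ ^ (2:ℝ≥0∞).toReal = 0 := by
    rw [Sel_apply_zero, norm_zero, Real.zero_rpow (by norm_num)]
  rw [h0, zero_add]
  exact le_of_eq rfl

noncomputable def S : L2 →L[ℂ] L2 :=
  LinearMap.mkContinuous
    { toFun := Sel, map_add' := Sel_add, map_smul' := Sel_smul } 1 Sel_norm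

@[simp] lemma S_apply_zero (f : L2) : (S f) 0 = 0 := rfl
@[simp] lemma S_apply_succ (f : L2) (n : ℕ) : (S f) (n+1) = f n := rfl




/-- `d α n = 1/(n+1+α)` -/
noncomputable def d (α : ℝ) (n : ℕ) : ℝ := 1 / ((n:ℝ) + 1 + α)

variable {α : ℝ}

lemma dden_pos (hα : α > -1) (n : ℕ) : 0 < (n:ℝ) + 1 + α := by
  have : (0:ℝ) ≤ n := Nat.cast_nonneg n
  linarith

lemma d_pos (hα : α > -1) (n : ℕ) : 0 < d α n := one_div_pos.mpr (dden_pos hα n)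

lemma d_anti (hα : α > -1) (n : ℕ) : d α (n+1) ≤ d α n := by
  rw [d, d]
  apply one_div_le_one_div_of_le (dden_pos hα n)
  push_cast; linarith

lemma d_mul (hα : α > -1) (n : ℕ) : d α n * d α (n+1) = d α n - d α (n+1) := by
  have h1 := (dden_pos hα n).ne'
  have h2 := (dden_pos hα (n+1)).ne'
  rw [d, d] at *
  push_cast at *
  field_simp
  ring

lemma d_tendsto (hα : α > -1) : Tendsto (fun n : ℕ => d α n) atTop (nhds 0) := by
  have h1 : Tendsto (fun n : ℕ => (n:ℝ) + 1 + α) atTop atTop :=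
    tendsto_atTop_add_const_right _ α
      (tendsto_atTop_add_const_right _ 1 tendsto_natCast_atTop_atTop)
  have := h1.inv_tendsto_atTop
  simpa [d, one_div, Pi.inv_def] using this

lemma telescope (hα : α > -1) (m : ℕ) :
    HasSum (fun r : ℕ => if m ≤ r then d α r - d α (r+1) else 0) (d α m) := by
  set f : ℕ → ℝ := fun r => if m ≤ r then d α r - d α (r+1) else 0 with hf
  have hshift : HasSum (fun n => f (n + m)) (d α m) := by
    have heq : (fun n => f (n + m)) = fun n => d α (n+m) - d α (n+1+m) := by
      funext n; simp [hf, Nat.le_add_left, Nat.add_right_comm]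
    rw [heq, hasSum_iff_tendsto_nat_of_nonneg
      (fun n => sub_nonneg.2 (by simpa [Nat.add_right_comm] using d_anti hα (n+m))) _]
    have hps : ∀ N, ∑ i ∈ Finset.range N, (d α (i+m) - d α (i+1+m))
        = d α m - d α (N+m) := by
      intro N
      have h := Finset.sum_range_sub' (fun k => d α (k+m)) N
      simpa using h
    have hlim : Tendsto (fun N => d α m - d α (N+m)) atTop (nhds (d α m)) := by
      have h2 : Tendsto (fun N : ℕ => d α (N + m)) atTop (nhds 0) :=
        (d_tendsto hα).comp (tendsto_add_atTop_nat m)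
      simpa using tendsto_const_nhds.sub h2
    exact (funext hps : (fun N => ∑ i ∈ Finset.range N, (d α (i+m) - d α (i+1+m))) = _) ▸ hlim
  have := (hasSum_nat_add_iff m).mp hshift
  have hz : ∑ i ∈ Finset.range m, f i = 0 := by
    apply Finset.sum_eq_zero
    intro i hi
    simp only [hf]
    rw [if_neg (by exact Nat.not_le.2 (Finset.mem_range.1 hi))]
  rw [hz, add_zero] at this
  exact this

lemma summable_d_sq (hα : α > -1) :
    Summable (fun n : ℕ => ‖((d α n : ℝ):ℂ)‖ ^ (2:ℝ≥0∞).toReal) := by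
  have key : ∀ n : ℕ, ‖((d α n : ℝ):ℂ)‖ ^ (2:ℝ≥0∞).toReal = (d α n)^2 := by
    intro n
    rw [Complex.norm_real, Real.norm_eq_abs]
    rw [show ((2:ℝ≥0∞)).toReal = ((2:ℕ):ℝ) by norm_num]
    rw [Real.rpow_natCast, sq_abs]
  simp only [key]
  have hbound : ∀ n : ℕ, d α n ≤ ((2+α)/(1+α)) * (1/((n:ℝ)+1)) := by
    intro n
    have hn1 : (0:ℝ) < (n:ℝ) + 1 := by positivity
    have hca : (0:ℝ) < 1 + α := by linarith
    rw [d, div_mul_div_comm, mul_one, div_le_div_iff₀ (dden_pos hα n) (by positivity)]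
    have hn0 : (0:ℝ) ≤ n := Nat.cast_nonneg n
    nlinarith [sq_nonneg (1+α)]
  have hsum : Summable (fun n : ℕ => ((2+α)/(1+α))^2 * (1/((n:ℝ)+1))^2) := by
    apply Summable.mul_left
    have h1 : Summable (fun n : ℕ => 1/((n:ℝ))^2) := by
      rw [Real.summable_one_div_nat_pow]
      norm_num
    have h2 := (summable_nat_add_iff 1).mpr h1
    apply h2.congr
    intro n
    push_cast
    rw [div_pow, one_pow]
  apply Summable.of_nonneg_of_le (fun n => sq_nonneg _) _ hsum
  intro n
  rw [← mul_pow]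
  apply sq_le_sq' _ (hbound n)
  have h1 : 0 < d α n := d_pos hα n
  have h2 : (0:ℝ) ≤ ((2+α)/(1+α)) * (1/((n:ℝ)+1)) := by
    have hca : (0:ℝ) < 1 + α := by linarith
    have : (0:ℝ) ≤ 2 + α := by linarith
    positivity
  linarith

/-- the vector `v = (d α k)_k ∈ ℓ²` -/
noncomputable def v (α : ℝ) (hα : α > -1) : L2 :=
  ⟨fun k => ((d α k : ℝ):ℂ), memℓp_gen (summable_d_sq hα)⟩

@[simp] lemma v_apply (hα : α > -1) (k : ℕ) : (v α hα) k = ((d α k : ℝ):ℂ) := rfl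




lemma single_eq_smul_e (n : ℕ) (c : ℂ) : lp.single 2 n c = c • e n := by
  rw [e, ← lp.single_smul]
  norm_num

lemma ext_on_basis {T T' : L2 →L[ℂ] L2} (h : ∀ n, T (e n) = T' (e n)) : T = T' := by
  refine ContinuousLinearMap.ext fun f => ?_
  have hs := lp.hasSum_single ENNReal.ofNat_ne_top f
  have h1 : HasSum (fun n => f n • T (e n)) (T f) := by
    have := hs.mapL T
    refine this.congr_fun ?_  -- check existence
    intro n
    rw [single_eq_smul_e, map_smul]
  have h2 : HasSum (fun n => f n • T (e n)) (T' f) := by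
    have := hs.mapL T'
    refine this.congr_fun ?_
    intro n
    rw [single_eq_smul_e, map_smul, h n]
  exact h1.unique h2

lemma pos_aux (A : L2 →L[ℂ] L2) (f : L2) : 0 ≤ (inner ℂ ((A ∘L adjoint A) f) f : ℂ) := by
  have h1 : (inner ℂ ((A ∘L adjoint A) f) f : ℂ) = inner ℂ (adjoint A f) (adjoint A f) := by
    rw [comp_apply, ← inner_conj_symm, ← adjoint_inner_left A, inner_conj_symm]
  rw [h1, Complex.nonneg_iff]
  have hre := inner_self_nonneg (𝕜 := ℂ) (x := adjoint A f)
  have him := inner_self_im (𝕜 := ℂ) (x := adjoint A f)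
  rw [RCLike.re_to_complex] at hre
  rw [RCLike.im_to_complex] at him
  exact ⟨hre, him.symm⟩






variable {α : ℝ} (hα : α > -1) (C : L2 →L[ℂ] L2)
variable (hC : ∀ i j : ℕ, (inner ℂ (e i) (C (e j)) : ℂ) =
      if j ≤ i then ((1 / ((i : ℝ) + 1 + α) : ℝ) : ℂ) else 0)

section
include hC

lemma hCent : ∀ i j : ℕ, (C (e j) : ∀ _ : ℕ, ℂ) i
    = if j ≤ i then ((d α i : ℝ) : ℂ) else 0 := by
  intro i j
  rw [← coord, hC i j]
  rfl

lemma hAent : ∀ i j : ℕ, ((adjoint C) (e j) : ∀ _ : ℕ, ℂ) i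
    = if i ≤ j then ((d α j : ℝ) : ℂ) else 0 := by
  intro i j
  rw [← coord, adjoint_inner_right, ← inner_conj_symm, hC j i]
  rw [apply_ite (starRingEnd ℂ), map_zero, Complex.conj_ofReal]
  rfl

omit hC in
lemma dC (n : ℕ) : ((d α n : ℝ) : ℂ) = 1 / ((n : ℂ) + 1 + (α : ℂ)) := by
  rw [d]; push_cast; ring

include hα in
lemma hG_identity : adjoint C ∘L (CesaroAux.B ∘L (C - 1)) = C := by
  refine ext_on_basis fun j => ?_
  apply lp.ext; funext i
  set G : L2 →L[ℂ] L2 := CesaroAux.B ∘L (C - 1) with hGdef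
  have hGcoord : ∀ r : ℕ, (G (e j) : ∀ _ : ℕ, ℂ) r
      = (if j ≤ r+1 then ((d α (r+1) : ℝ) : ℂ) else 0) - (if r+1 = j then 1 else 0) := by
    intro r
    have h1 : (G (e j) : ∀ _ : ℕ, ℂ) r = ((C - 1) (e j) : ∀ _ : ℕ, ℂ) (r+1) := rfl
    rw [h1, ContinuousLinearMap.sub_apply, ContinuousLinearMap.one_apply,
      lp.coeFn_sub, Pi.sub_apply, hCent C hC (r+1) j, e_apply]
  -- the scalar c2
  set c2 : ℝ := if i+1 ≤ j then d α (j-1) else 0 with hc2def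
  -- function identity for the summand
  have hF : (fun r : ℕ => (inner ℂ ((C (e i) : ∀ _ : ℕ, ℂ) r) ((G (e j) : ∀ _ : ℕ, ℂ) r) : ℂ))
      = fun r : ℕ => (((if max i (j-1) ≤ r then d α r - d α (r+1) else 0 : ℝ)) : ℂ)
        - (((if r+1 = j ∧ i ≤ r then d α r else 0 : ℝ)) : ℂ) := by
    funext r
    have hdmC : ((d α r : ℝ) : ℂ) * ((d α (r+1) : ℝ) : ℂ)
        = ((d α r : ℝ) : ℂ) - ((d α (r+1) : ℝ) : ℂ) := by
      exact_mod_cast congrArg (fun x : ℝ => (x : ℂ)) (d_mul hα r)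
    rw [RCLike.inner_apply, hCent C hC r i, hGcoord r]
    simp only [apply_ite (starRingEnd ℂ), map_zero, Complex.conj_ofReal]
    by_cases h1 : i ≤ r
    · by_cases h3 : r + 1 = j
      · have h2 : j ≤ r + 1 := le_of_eq h3.symm
        rw [if_pos h1, if_pos h2, if_pos h3, if_pos (by omega : max i (j-1) ≤ r),
          if_pos ⟨h3, h1⟩]
        push_cast
        linear_combination hdmC
      · by_cases h2 : j ≤ r + 1
        · rw [if_pos h1, if_pos h2, if_neg h3, if_pos (by omega : max i (j-1) ≤ r),
            if_neg (by tauto)]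
          push_cast
          linear_combination hdmC
        · rw [if_pos h1, if_neg h2, if_neg h3, if_neg (by omega : ¬ max i (j-1) ≤ r),
            if_neg (show ¬(r+1 = j ∧ i ≤ r) by tauto)]
          push_cast
          ring
    · rw [if_neg h1, if_neg (by omega : ¬ max i (j-1) ≤ r),
        if_neg (show ¬(r+1 = j ∧ i ≤ r) by tauto)]
      push_cast
      ring
  -- HasSum of the two parts
  have hS1 : HasSum (fun r : ℕ => (((if max i (j-1) ≤ r then d α r - d α (r+1) else 0 : ℝ)) : ℂ))
      (((d α (max i (j-1)) : ℝ)) : ℂ) := by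
    simpa using (telescope hα (max i (j-1))).mapL Complex.ofRealCLM
  have hF2eq : (fun r : ℕ => if r+1 = j ∧ i ≤ r then d α r else 0)
      = fun r : ℕ => if r = j-1 then c2 else 0 := by
    funext r
    by_cases h : r+1 = j ∧ i ≤ r
    · obtain ⟨h3, h1⟩ := h
      rw [if_pos ⟨h3, h1⟩, if_pos (by omega : r = j - 1), hc2def, if_pos (by omega)]
      congr 1
      omega
    · rw [if_neg h]
      by_cases hr : r = j-1
      · have hnij : ¬ (i+1 ≤ j) := by
          intro hij
          exact h ⟨by omega, by omega⟩
        rw [if_pos hr, hc2def, if_neg hnij]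
      · rw [if_neg hr]
  have hS2 : HasSum (fun r : ℕ => (((if r+1 = j ∧ i ≤ r then d α r else 0 : ℝ)) : ℂ))
      ((c2 : ℝ) : ℂ) := by
    have : HasSum (fun r : ℕ => if r+1 = j ∧ i ≤ r then d α r else 0) c2 := by
      rw [hF2eq]
      exact hasSum_ite_eq (j-1) c2
    simpa using this.mapL Complex.ofRealCLM
  have htot : HasSum (fun r : ℕ => (inner ℂ ((C (e i) : ∀ _ : ℕ, ℂ) r) ((G (e j) : ∀ _ : ℕ, ℂ) r) : ℂ))
      ((((d α (max i (j-1)) : ℝ)) : ℂ) - ((c2 : ℝ) : ℂ)) := by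
    rw [hF]
    exact hS1.sub hS2
  have hval : (inner ℂ (C (e i)) (G (e j)) : ℂ)
      = (((d α (max i (j-1)) : ℝ)) : ℂ) - ((c2 : ℝ) : ℂ) :=
    (lp.hasSum_inner (C (e i)) (G (e j))).unique htot
  have lhs : ((adjoint C ∘L G) (e j) : ∀ _ : ℕ, ℂ) i = inner ℂ (C (e i)) (G (e j)) := by
    rw [comp_apply, ← coord, adjoint_inner_right]
  rw [lhs, hval, hCent C hC i j]
  by_cases hji : j ≤ i
  · rw [if_pos hji, (by omega : max i (j-1) = i), hc2def, if_neg (by omega)]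
    simp
  · rw [if_neg hji, (by omega : max i (j-1) = j - 1), hc2def, if_pos (by omega)]
    simp


omit hC in
lemma S_e (j : ℕ) : CesaroAux.S (e j) = e (j+1) := by
  apply lp.ext; funext n
  cases n with
  | zero =>
    rw [show ((CesaroAux.S (e j) : ∀ _ : ℕ, ℂ) 0) = 0 from rfl, e_apply]
    simp
  | succ k =>
    rw [show ((CesaroAux.S (e j) : ∀ _ : ℕ, ℂ) (k+1)) = (e j : ∀ _ : ℕ, ℂ) k from rfl,
      e_apply, e_apply]
    by_cases h : k = j
    · rw [if_pos h, if_pos (by omega)]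
    · rw [if_neg h, if_neg (by omega)]

set_option maxHeartbeats 1000000 in
include hα in
lemma hH_identity :
    C ∘L (adjoint C + (α : ℂ) • ((innerSL ℂ (v α hα)).smulRight (e 0)) - CesaroAux.S)
      = adjoint C := by
  refine ext_on_basis fun j => ?_
  set H : L2 →L[ℂ] L2 :=
    adjoint C + (α : ℂ) • ((innerSL ℂ (v α hα)).smulRight (e 0)) - CesaroAux.S with hHdef
  have adjC_sum : adjoint C (e j)
      = ∑ k ∈ Finset.range (j+1), ((d α j : ℝ) : ℂ) • e k := by
    apply lp.ext; funext i
    rw [hAent C hC i j, lp.coeFn_sum, Finset.sum_apply]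
    have hterm : ∀ k, ((((d α j : ℝ) : ℂ) • e k : L2) : ∀ _ : ℕ, ℂ) i
        = if i = k then ((d α j : ℝ) : ℂ) else 0 := by
      intro k
      rw [lp.coeFn_smul, Pi.smul_apply, e_apply, smul_eq_mul]
      split <;> simp
    simp only [hterm]
    rw [Finset.sum_ite_eq (Finset.range (j+1)) i (fun _ => ((d α j : ℝ) : ℂ))]
    by_cases h : i ≤ j
    · rw [if_pos h, if_pos (Finset.mem_range.mpr (by omega))]
    · rw [if_neg h, if_neg (by simp [Finset.mem_range]; omega)]
  have He : H (e j) = adjoint C (e j) + ((α : ℂ) * ((d α j : ℝ) : ℂ)) • e 0 - e (j+1) := by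
    rw [hHdef, ContinuousLinearMap.sub_apply, ContinuousLinearMap.add_apply,
      ContinuousLinearMap.smul_apply, smulRight_apply, innerSL_apply_apply, S_e]
    congr 1
    rw [smul_smul]
    congr 2
    rw [e, lp.inner_single_right, RCLike.inner_apply]
    have : (v α hα : ∀ _ : ℕ, ℂ) j = ((d α j : ℝ) : ℂ) := rfl
    rw [this, Complex.conj_ofReal, one_mul]
  apply lp.ext; funext i
  have lhs1 : ((C ∘L H) (e j) : ∀ _ : ℕ, ℂ) i = (C (H (e j)) : ∀ _ : ℕ, ℂ) i := rfl
  rw [lhs1, He, map_sub, map_add, map_smul]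
  conv_lhs => rw [adjC_sum, map_sum]
  have hcoord : ∀ (x y z : L2), ((x + y - z : L2) : ∀ _ : ℕ, ℂ) i
      = x i + y i - z i := by
    intro x y z
    rw [lp.coeFn_sub, Pi.sub_apply, lp.coeFn_add, Pi.add_apply]
  have hx : ((∑ k ∈ Finset.range (j+1), C (((d α j : ℝ) : ℂ) • e k) : L2) : ∀ _ : ℕ, ℂ) i
      = ((d α j : ℝ) : ℂ) * (((min i j + 1 : ℕ) : ℂ) * ((d α i : ℝ) : ℂ)) := by
    rw [lp.coeFn_sum, Finset.sum_apply]
    have hterm : ∀ k, ((C (((d α j : ℝ) : ℂ) • e k) : L2) : ∀ _ : ℕ, ℂ) i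
        = ((d α j : ℝ) : ℂ) * (if k ≤ i then ((d α i : ℝ) : ℂ) else 0) := by
      intro k
      rw [map_smul, lp.coeFn_smul, Pi.smul_apply, hCent C hC i k, smul_eq_mul]
    simp only [hterm]
    rw [← Finset.mul_sum]
    congr 1
    rw [Finset.sum_ite, Finset.sum_const_zero, add_zero, Finset.sum_const]
    have hfil : Finset.filter (fun k => k ≤ i) (Finset.range (j+1))
        = Finset.range (min i j + 1) := by
      ext k
      simp only [Finset.mem_filter, Finset.mem_range]
      omega
    rw [hfil, Finset.card_range, nsmul_eq_mul]
  have hy : ((((α : ℂ) * ((d α j : ℝ) : ℂ)) • C (e 0) : L2) : ∀ _ : ℕ, ℂ) i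
      = (α : ℂ) * ((d α j : ℝ) : ℂ) * ((d α i : ℝ) : ℂ) := by
    rw [lp.coeFn_smul, Pi.smul_apply, hCent C hC i 0, smul_eq_mul,
      if_pos (Nat.zero_le i)]
  have hz : (C (e (j+1)) : ∀ _ : ℕ, ℂ) i = if j+1 ≤ i then ((d α i : ℝ) : ℂ) else 0 :=
    hCent C hC i (j+1)
  rw [hcoord, hx, hy, hz, hAent C hC i j]
  -- final arithmetic
  have hnei : ((i : ℂ) + 1 + (α : ℂ)) ≠ 0 := by
    have h := Complex.ofReal_ne_zero.mpr (dden_pos hα i).ne'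
    push_cast at h
    convert h using 2
  have hnej : ((j : ℂ) + 1 + (α : ℂ)) ≠ 0 := by
    have h := Complex.ofReal_ne_zero.mpr (dden_pos hα j).ne'
    push_cast at h
    convert h using 2
  by_cases hji : i ≤ j
  · rw [if_neg (by omega : ¬ j + 1 ≤ i), if_pos hji, (by omega : min i j = i),
      dC i, dC j]
    push_cast
    field_simp [hnei, hnej]
    ring
  · rw [if_pos (by omega : j + 1 ≤ i), if_neg hji, (by omega : min i j = j),
      dC i, dC j]
    push_cast
    field_simp [hnei, hnej]
    ring

end

end CesaroAux

set_option maxHeartbeats 1000000 in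
open CesaroAux in
/-- For every `α > -1`, the generalized Cesàro operator of
order one is posinormal and coposinormal. -/
theorem cesaro_order_one_posinormal_coposinormal (α : ℝ) (hα : α > -1)
    (C : lp (fun _ : ℕ => ℂ) 2 →L[ℂ] lp (fun _ : ℕ => ℂ) 2)
    (hC : ∀ i j : ℕ, (inner ℂ (e i) (C (e j)) : ℂ) =
      if j ≤ i then ((1 / ((i : ℝ) + 1 + α) : ℝ) : ℂ) else 0) :
    (∃ P : lp (fun _ : ℕ => ℂ) 2 →L[ℂ] lp (fun _ : ℕ => ℂ) 2,
      (∀ f, 0 ≤ (inner ℂ (P f) f : ℂ)) ∧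
        C ∘L adjoint C = adjoint C ∘L P ∘L C) ∧
    (∃ Q : lp (fun _ : ℕ => ℂ) 2 →L[ℂ] lp (fun _ : ℕ => ℂ) 2,
      (∀ f, 0 ≤ (inner ℂ (Q f) f : ℂ)) ∧
        C ∘L Q ∘L adjoint C = adjoint C ∘L C) := by
  have hG := hG_identity hα C hC
  have hH := hH_identity hα C hC
  set G : L2 →L[ℂ] L2 := CesaroAux.B ∘L (C - 1) with hGdef
  set H : L2 →L[ℂ] L2 :=
    adjoint C + (α : ℂ) • ((innerSL ℂ (v α hα)).smulRight (e 0)) - CesaroAux.S with hHdef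
  constructor
  · refine ⟨G ∘L adjoint G, pos_aux G, ?_⟩
    have h2 : adjoint G ∘L C = adjoint C := by
      have h := congrArg ContinuousLinearMap.adjoint hG
      rwa [adjoint_comp, adjoint_adjoint] at h
    refine ContinuousLinearMap.ext fun f => ?_
    have e1 := DFunLike.congr_fun h2 f
    have e2 := DFunLike.congr_fun hG (adjoint C f)
    simp only [comp_apply] at e1 e2 ⊢
    rw [e1]
    exact e2.symm
  · refine ⟨H ∘L adjoint H, pos_aux H, ?_⟩
    have h2 : adjoint H ∘L adjoint C = C := by
      have h := congrArg ContinuousLinearMap.adjoint hH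
      rwa [adjoint_comp, adjoint_adjoint] at h
    refine ContinuousLinearMap.ext fun f => ?_
    have e1 := DFunLike.congr_fun h2 f
    have e2 := DFunLike.congr_fun hH (C f)
    simp only [comp_apply] at e1 e2 ⊢
    rw [e1]
    exact e2
end

section
/- For every real number α > −1, there exists a bounded linear operator M on ℓ² whose matrix entries with respect to the standard orthonormal basis are ⟨M e_j, e_i⟩ = 2(i+1−j)/((i+1+α)(i+2+α)) for 0 ≤ j ≤ i and 0 for j > i. -/
open Finset
open scoped ENNReal

/-- Cauchy–Schwarz / Schur-test construction of a bounded operator on `ℓ²` from a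
lower-triangular nonnegative kernel with Schur weights `p`, `h`. -/
lemma schur_triangular (K : ℕ → ℕ → ℝ) (hK0 : ∀ i j, 0 ≤ K i j)
    (hKtri : ∀ i j, i < j → K i j = 0)
    (p h : ℕ → ℝ) (hp : ∀ j, 0 < p j) (hh : ∀ i, 0 ≤ h i)
    (A B : ℝ) (hA : 0 ≤ A) (hB : 0 ≤ B)
    (Hrow : ∀ i, ∑ j ∈ Finset.range (i + 1), K i j * p j ≤ A * h i)
    (Hcol : ∀ j : ℕ, ∀ s : Finset ℕ, ∑ i ∈ s, K i j * h i ≤ B * p j) :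
    ∃ M : lp (fun _ : ℕ => ℂ) 2 →L[ℂ] lp (fun _ : ℕ => ℂ) 2,
      ∀ x : lp (fun _ : ℕ => ℂ) 2, ∀ i,
        M x i = ∑ j ∈ Finset.range (i + 1), (K i j : ℂ) * x j := by
  classical
  have h2 : (2 : ℝ≥0∞).toReal = 2 := by norm_num
  have hrpow : ∀ a : ℝ, a ^ (2 : ℝ≥0∞).toReal = a ^ 2 := by
    intro a
    rw [h2, show ((2:ℝ)) = ((2:ℕ):ℝ) by norm_num, Real.rpow_natCast]
  -- the key finite-sum estimate
  have key : ∀ x : lp (fun _ : ℕ => ℂ) 2, ∀ s : Finset ℕ,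
      ∑ i ∈ s, ‖∑ j ∈ Finset.range (i + 1), (K i j : ℂ) * x j‖ ^ 2
        ≤ A * B * ‖x‖ ^ 2 := by
    intro x s
    set N := s.sup id + 1 with hN
    have hiN : ∀ i ∈ s, i + 1 ≤ N := fun i hi =>
      Nat.succ_le_succ (Finset.le_sup (f := id) hi)
    set c : ℕ → ℝ := fun j => ‖x j‖ ^ 2 / p j with hc
    have hc0 : ∀ j, 0 ≤ c j := fun j => div_nonneg (sq_nonneg _) (hp j).le
    -- step 1: pointwise Cauchy-Schwarz bound
    have step1 : ∀ i, ‖∑ j ∈ Finset.range (i + 1), (K i j : ℂ) * x j‖ ^ 2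
        ≤ A * h i * ∑ j ∈ Finset.range (i + 1), K i j * c j := by
      intro i
      have hnorm : ‖∑ j ∈ Finset.range (i + 1), (K i j : ℂ) * x j‖
          ≤ ∑ j ∈ Finset.range (i + 1), K i j * ‖x j‖ := by
        refine (norm_sum_le _ _).trans (le_of_eq (Finset.sum_congr rfl fun j _ => ?_))
        rw [norm_mul, Complex.norm_real, Real.norm_eq_abs, abs_of_nonneg (hK0 i j)]
      have hsq : ‖∑ j ∈ Finset.range (i + 1), (K i j : ℂ) * x j‖ ^ 2
          ≤ (∑ j ∈ Finset.range (i + 1), K i j * ‖x j‖) ^ 2 := by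
        have h1 : (0:ℝ) ≤ ‖∑ j ∈ Finset.range (i + 1), (K i j : ℂ) * x j‖ := norm_nonneg _
        nlinarith [hnorm]
      have hCS : (∑ j ∈ Finset.range (i + 1), K i j * ‖x j‖) ^ 2
          ≤ (∑ j ∈ Finset.range (i + 1), K i j * p j)
            * ∑ j ∈ Finset.range (i + 1), K i j * c j := by
        have := Finset.sum_mul_sq_le_sq_mul_sq (Finset.range (i + 1))
          (fun j => Real.sqrt (K i j * p j))
          (fun j => Real.sqrt (K i j / p j) * ‖x j‖)
        have e1 : ∀ j, Real.sqrt (K i j * p j) * (Real.sqrt (K i j / p j) * ‖x j‖)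
            = K i j * ‖x j‖ := by
          intro j
          rw [← mul_assoc, ← Real.sqrt_mul (mul_nonneg (hK0 i j) (hp j).le)]
          have : K i j * p j * (K i j / p j) = (K i j) ^ 2 := by
            field_simp [(hp j).ne']
          rw [this, Real.sqrt_sq (hK0 i j)]
        have e2 : ∀ j, Real.sqrt (K i j * p j) ^ 2 = K i j * p j := fun j =>
          Real.sq_sqrt (mul_nonneg (hK0 i j) (hp j).le)
        have e3 : ∀ j, (Real.sqrt (K i j / p j) * ‖x j‖) ^ 2 = K i j * c j := by
          intro j
          rw [mul_pow, Real.sq_sqrt (div_nonneg (hK0 i j) (hp j).le), hc]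
          field_simp
        simp only [e1] at this
        calc (∑ j ∈ Finset.range (i + 1), K i j * ‖x j‖) ^ 2
            ≤ (∑ j ∈ Finset.range (i + 1), Real.sqrt (K i j * p j) ^ 2)
              * ∑ j ∈ Finset.range (i + 1), (Real.sqrt (K i j / p j) * ‖x j‖) ^ 2 := this
          _ = _ := by rw [Finset.sum_congr rfl fun j _ => e2 j,
                Finset.sum_congr rfl fun j _ => e3 j]
      have hpos : 0 ≤ ∑ j ∈ Finset.range (i + 1), K i j * c j :=
        Finset.sum_nonneg fun j _ => mul_nonneg (hK0 i j) (hc0 j)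
      calc ‖∑ j ∈ Finset.range (i + 1), (K i j : ℂ) * x j‖ ^ 2
          ≤ (∑ j ∈ Finset.range (i + 1), K i j * p j)
            * ∑ j ∈ Finset.range (i + 1), K i j * c j := hsq.trans hCS
        _ ≤ A * h i * ∑ j ∈ Finset.range (i + 1), K i j * c j :=
            mul_le_mul_of_nonneg_right (Hrow i) hpos
    -- step 2: extend the inner sum to range N
    have step2 : ∀ i ∈ s, ∑ j ∈ Finset.range (i + 1), K i j * c j
        = ∑ j ∈ Finset.range N, K i j * c j := by
      intro i hi
      refine Finset.sum_subset (Finset.range_subset_range.2 (hiN i hi)) ?_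
      intro j _ hj
      rw [Finset.mem_range, not_lt] at hj
      rw [hKtri i j (by omega), zero_mul]
    -- step 3: sum over i, swap, use column bound
    calc ∑ i ∈ s, ‖∑ j ∈ Finset.range (i + 1), (K i j : ℂ) * x j‖ ^ 2
        ≤ ∑ i ∈ s, A * h i * ∑ j ∈ Finset.range N, K i j * c j := by
          refine Finset.sum_le_sum fun i hi => ?_
          rw [← step2 i hi]; exact step1 i
      _ = A * ∑ j ∈ Finset.range N, c j * ∑ i ∈ s, K i j * h i := by
          simp only [Finset.mul_sum]
          rw [Finset.sum_comm]
          exact Finset.sum_congr rfl fun j _ => Finset.sum_congr rfl fun i _ => by ring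
      _ ≤ A * ∑ j ∈ Finset.range N, c j * (B * p j) := by
          refine mul_le_mul_of_nonneg_left (Finset.sum_le_sum fun j _ =>
            mul_le_mul_of_nonneg_left (Hcol j s) (hc0 j)) hA
      _ = A * B * ∑ j ∈ Finset.range N, ‖x j‖ ^ 2 := by
          rw [Finset.mul_sum, Finset.mul_sum]
          refine Finset.sum_congr rfl fun j _ => ?_
          rw [hc]
          field_simp [(hp j).ne']
      _ ≤ A * B * ‖x‖ ^ 2 := by
          refine mul_le_mul_of_nonneg_left ?_ (mul_nonneg hA hB)
          have := lp.sum_rpow_le_norm_rpow (by norm_num : 0 < (2 : ℝ≥0∞).toReal) x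
            (Finset.range N)
          simpa [hrpow] using this
  have mem : ∀ x : lp (fun _ : ℕ => ℂ) 2,
      Memℓp (fun i => ∑ j ∈ Finset.range (i + 1), (K i j : ℂ) * x j) 2 := by
    intro x
    refine memℓp_gen' (C := A * B * ‖x‖ ^ 2) fun s => ?_
    calc ∑ i ∈ s, ‖∑ j ∈ Finset.range (i + 1), (K i j : ℂ) * x j‖ ^ (2 : ℝ≥0∞).toReal
        = ∑ i ∈ s, ‖∑ j ∈ Finset.range (i + 1), (K i j : ℂ) * x j‖ ^ 2 :=
          Finset.sum_congr rfl fun i _ => hrpow _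
      _ ≤ A * B * ‖x‖ ^ 2 := key x s
  set F : lp (fun _ : ℕ => ℂ) 2 → lp (fun _ : ℕ => ℂ) 2 := fun x => ⟨_, mem x⟩ with hF
  have hFapp : ∀ x i, F x i = ∑ j ∈ Finset.range (i + 1), (K i j : ℂ) * x j :=
    fun x i => rfl
  have Fadd : ∀ x y, F (x + y) = F x + F y := by
    intro x y
    apply lp.ext
    funext i
    have : (↑(F x + F y) : ∀ _ : ℕ, ℂ) i = F x i + F y i := by
      rw [lp.coeFn_add, Pi.add_apply]
    rw [this, hFapp, hFapp, hFapp, ← Finset.sum_add_distrib]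
    refine Finset.sum_congr rfl fun j _ => ?_
    have : (↑(x + y) : ∀ _ : ℕ, ℂ) j = x j + y j := by rw [lp.coeFn_add, Pi.add_apply]
    rw [this]; ring
  have Fsmul : ∀ (a : ℂ) (x), F (a • x) = a • F x := by
    intro a x
    apply lp.ext
    funext i
    have h1 : (↑(a • F x) : ∀ _ : ℕ, ℂ) i = a * F x i := by
      rw [lp.coeFn_smul, Pi.smul_apply, smul_eq_mul]
    rw [h1, hFapp, hFapp, Finset.mul_sum]
    refine Finset.sum_congr rfl fun j _ => ?_
    have : (↑(a • x) : ∀ _ : ℕ, ℂ) j = a * x j := by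
      rw [lp.coeFn_smul, Pi.smul_apply, smul_eq_mul]
    rw [this]; ring
  let L : lp (fun _ : ℕ => ℂ) 2 →ₗ[ℂ] lp (fun _ : ℕ => ℂ) 2 :=
    { toFun := F, map_add' := Fadd, map_smul' := Fsmul }
  have hbound : ∀ x, ‖L x‖ ≤ Real.sqrt (A * B) * ‖x‖ := by
    intro x
    refine lp.norm_le_of_forall_sum_le (by norm_num) (by positivity) fun s => ?_
    have hC : (Real.sqrt (A * B) * ‖x‖) ^ (2 : ℝ≥0∞).toReal = A * B * ‖x‖ ^ 2 := by
      rw [hrpow, mul_pow, Real.sq_sqrt (mul_nonneg hA hB)]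
    rw [hC]
    calc ∑ i ∈ s, ‖(L x) i‖ ^ (2 : ℝ≥0∞).toReal
        = ∑ i ∈ s, ‖∑ j ∈ Finset.range (i + 1), (K i j : ℂ) * x j‖ ^ 2 :=
          Finset.sum_congr rfl fun i _ => by rw [hrpow]; rfl
      _ ≤ A * B * ‖x‖ ^ 2 := key x s
  exact ⟨L.mkContinuous _ hbound, fun x i => rfl⟩

lemma sum_inv_sqrt_le (n : ℕ) :
    ∑ j ∈ Finset.range n, (Real.sqrt ((j : ℝ) + 1))⁻¹ ≤ 2 * Real.sqrt (n : ℝ) := by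
  have key : ∀ j : ℕ, (Real.sqrt ((j : ℝ) + 1))⁻¹
      ≤ 2 * (Real.sqrt ((j : ℝ) + 1) - Real.sqrt (j : ℝ)) := by
    intro j
    set a := Real.sqrt (j : ℝ) with ha'
    set b := Real.sqrt ((j : ℝ) + 1) with hb'
    have ha : a ^ 2 = (j : ℝ) := Real.sq_sqrt (Nat.cast_nonneg j)
    have hb : b ^ 2 = (j : ℝ) + 1 := Real.sq_sqrt (by positivity)
    have hb0 : 0 < b := Real.sqrt_pos.2 (by positivity)
    have ha0 : 0 ≤ a := Real.sqrt_nonneg _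
    rw [inv_eq_one_div, div_le_iff₀ hb0]
    nlinarith [sq_nonneg (a - b)]
  calc ∑ j ∈ Finset.range n, (Real.sqrt ((j : ℝ) + 1))⁻¹
      ≤ ∑ j ∈ Finset.range n, 2 * (Real.sqrt ((j : ℝ) + 1) - Real.sqrt (j : ℝ)) :=
        Finset.sum_le_sum fun j _ => key j
    _ = 2 * Real.sqrt (n : ℝ) := by
        rw [← Finset.mul_sum]
        have h1 : ∑ j ∈ Finset.range n,
            (Real.sqrt ((j : ℝ) + 1) - Real.sqrt (j : ℝ))
            = Real.sqrt (n : ℝ) - Real.sqrt ((0 : ℕ) : ℝ) := by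
          have := Finset.sum_range_sub (fun j : ℕ => Real.sqrt (j : ℝ)) n
          rw [← this]
          refine Finset.sum_congr rfl fun j _ => ?_
          push_cast
          ring_nf
        rw [h1]
        norm_num

set_option maxHeartbeats 1600000

/-- For every `α > -1` there is a bounded operator `M` on
`ℓ²` with matrix entries `⟨M e_j, e_i⟩ = 2(i+1−j)/((i+1+α)(i+2+α))` for
`j ≤ i` and `0` for `j > i` (the generalized Cesàro operator of order two). -/
theorem exists_generalized_cesaro_order_two (α : ℝ) (hα : α > -1) :
    ∃ M : lp (fun _ : ℕ => ℂ) 2 →L[ℂ] lp (fun _ : ℕ => ℂ) 2,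
      ∀ i j : ℕ, (inner ℂ (e i) (M (e j)) : ℂ) =
        if j ≤ i then
          ((2 * ((i : ℝ) + 1 - j) / (((i : ℝ) + 1 + α) * ((i : ℝ) + 2 + α)) : ℝ) : ℂ)
        else 0 := by
  classical
  have hβ : (0 : ℝ) < 1 + α := by linarith
  set r : ℝ := max 1 (2 / (1 + α)) with hr'
  have hr1 : (1 : ℝ) ≤ r := le_max_left _ _
  have hr0 : (0 : ℝ) < r := lt_of_lt_of_le one_pos hr1
  have hrβ : (2 : ℝ) ≤ r * (1 + α) := by
    have := le_max_right (1 : ℝ) (2 / (1 + α))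
    calc (2 : ℝ) = 2 / (1 + α) * (1 + α) := by field_simp
      _ ≤ r * (1 + α) := mul_le_mul_of_nonneg_right this hβ.le
  have hD1 : ∀ i : ℕ, (0 : ℝ) < (i : ℝ) + 1 + α := by
    intro i; have := Nat.cast_nonneg (α := ℝ) i; linarith
  have hD2 : ∀ i : ℕ, (0 : ℝ) < (i : ℝ) + 2 + α := by
    intro i; have := Nat.cast_nonneg (α := ℝ) i; linarith
  set K : ℕ → ℕ → ℝ := fun i j =>
    if j ≤ i then 2 * ((i : ℝ) + 1 - j) / (((i : ℝ) + 1 + α) * ((i : ℝ) + 2 + α)) else 0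
    with hK'
  set p : ℕ → ℝ := fun j => (Real.sqrt ((j : ℝ) + 1))⁻¹ with hp'
  set h : ℕ → ℝ := fun i =>
    ((i : ℝ) + 1) * Real.sqrt ((i : ℝ) + 1) / (((i : ℝ) + 1 + α) * ((i : ℝ) + 2 + α)) with hh'
  have hK0 : ∀ i j, 0 ≤ K i j := by
    intro i j
    simp only [hK']
    split_ifs with hij
    · have hji : (j : ℝ) ≤ (i : ℝ) := Nat.cast_le.2 hij
      exact div_nonneg (by linarith) (mul_pos (hD1 i) (hD2 i)).le
    · exact le_refl 0
  have hKtri : ∀ i j, i < j → K i j = 0 := by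
    intro i j hij
    simp only [hK']
    rw [if_neg (by omega)]
  have hp : ∀ j, 0 < p j := by
    intro j
    simp only [hp']
    exact inv_pos.2 (Real.sqrt_pos.2 (by positivity))
  have hh : ∀ i, 0 ≤ h i := by
    intro i
    simp only [hh']
    exact div_nonneg (by positivity) (mul_pos (hD1 i) (hD2 i)).le
  have Hrow : ∀ i, ∑ j ∈ Finset.range (i + 1), K i j * p j ≤ 4 * h i := by
    intro i
    have hDpos : (0 : ℝ) < ((i : ℝ) + 1 + α) * ((i : ℝ) + 2 + α) :=
      mul_pos (hD1 i) (hD2 i)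
    have hterm : ∀ j ∈ Finset.range (i + 1),
        K i j * p j ≤ 2 * ((i : ℝ) + 1) / (((i : ℝ) + 1 + α) * ((i : ℝ) + 2 + α)) * p j := by
      intro j hj
      have hji : j ≤ i := by
        rw [Finset.mem_range] at hj; omega
      have hK : K i j ≤ 2 * ((i : ℝ) + 1) / (((i : ℝ) + 1 + α) * ((i : ℝ) + 2 + α)) := by
        simp only [hK', if_pos hji]
        have hj0 : (0 : ℝ) ≤ (j : ℝ) := Nat.cast_nonneg j
        exact (div_le_div_iff_of_pos_right hDpos).2 (by linarith)
      exact mul_le_mul_of_nonneg_right hK (hp j).le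
    calc ∑ j ∈ Finset.range (i + 1), K i j * p j
        ≤ ∑ j ∈ Finset.range (i + 1),
            2 * ((i : ℝ) + 1) / (((i : ℝ) + 1 + α) * ((i : ℝ) + 2 + α)) * p j :=
          Finset.sum_le_sum hterm
      _ = 2 * ((i : ℝ) + 1) / (((i : ℝ) + 1 + α) * ((i : ℝ) + 2 + α))
            * ∑ j ∈ Finset.range (i + 1), p j := by rw [Finset.mul_sum]
      _ ≤ 2 * ((i : ℝ) + 1) / (((i : ℝ) + 1 + α) * ((i : ℝ) + 2 + α))
            * (2 * Real.sqrt ((i : ℝ) + 1)) := by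
          refine mul_le_mul_of_nonneg_left ?_ (by positivity)
          have := sum_inv_sqrt_le (i + 1)
          push_cast at this
          simpa [hp'] using this
      _ = 4 * h i := by
          simp only [hh']
          ring
  -- termwise column bound
  have term : ∀ i j : ℕ, j ≤ i → K i j * h i ≤ 4 * r ^ 4 * (p i - p (i + 1)) := by
    intro i j hij
    set x : ℝ := (i : ℝ) with hx'
    have hx0 : (0 : ℝ) ≤ x := Nat.cast_nonneg i
    set u : ℝ := Real.sqrt (x + 1) with hu'
    set v : ℝ := Real.sqrt (x + 2) with hv'
    have hu : u ^ 2 = x + 1 := Real.sq_sqrt (by linarith)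
    have hv : v ^ 2 = x + 2 := Real.sq_sqrt (by linarith)
    have hu0 : 0 < u := Real.sqrt_pos.2 (by linarith)
    have hv0 : 0 < v := Real.sqrt_pos.2 (by linarith)
    have huv : u ≤ v := Real.sqrt_le_sqrt (by linarith)
    have hd1 : (0 : ℝ) < x + 1 + α := hD1 i
    have hd2 : (0 : ℝ) < x + 2 + α := hD2 i
    have hDpos : (0 : ℝ) < (x + 1 + α) * (x + 2 + α) := mul_pos hd1 hd2
    have hpi : p i = u⁻¹ := rfl
    have hpi1 : p (i + 1) = v⁻¹ := by
      simp only [hp', hu', hv', hx']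
      push_cast
      ring_nf
    -- `T1`: (2 v³)⁻¹ ≤ u⁻¹ - v⁻¹
    have h1 : (v - u) * (v + u) = 1 := by nlinarith [hu, hv]
    have hsq2 : u ^ 2 ≤ v ^ 2 := by nlinarith
    have h3 : u * v * (v + u) ≤ 2 * v ^ 3 * (v - u) * (v + u) := by
      have hexp : 2 * v ^ 3 * (v - u) * (v + u) = 2 * v ^ 3 := by
        calc 2 * v ^ 3 * (v - u) * (v + u) = 2 * v ^ 3 * ((v - u) * (v + u)) := by ring
          _ = 2 * v ^ 3 := by rw [h1]; ring
      rw [hexp]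
      nlinarith [mul_le_mul_of_nonneg_right huv (sq_nonneg v),
        mul_le_mul_of_nonneg_right hsq2 hv0.le]
    have h2 : u * v ≤ 2 * v ^ 3 * (v - u) :=
      le_of_mul_le_mul_right h3 (by positivity : (0:ℝ) < v + u)
    have T1 : (2 * v ^ 3)⁻¹ ≤ u⁻¹ - v⁻¹ := by
      rw [inv_sub_inv hu0.ne' hv0.ne', inv_eq_one_div,
        div_le_div_iff₀ (by positivity) (by positivity)]
      nlinarith [h2]
    -- bound on K * h
    have hKb : K i j * h i ≤ 2 * (x + 1) ^ 2 * u / ((x + 1 + α) * (x + 2 + α)) ^ 2 := by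
      have hK : K i j ≤ 2 * (x + 1) / ((x + 1 + α) * (x + 2 + α)) := by
        simp only [hK', if_pos hij]
        have hj0 : (0 : ℝ) ≤ (j : ℝ) := Nat.cast_nonneg j
        exact (div_le_div_iff_of_pos_right hDpos).2 (by linarith)
      have hhi : h i = (x + 1) * u / ((x + 1 + α) * (x + 2 + α)) := rfl
      calc K i j * h i ≤ 2 * (x + 1) / ((x + 1 + α) * (x + 2 + α)) * h i :=
            mul_le_mul_of_nonneg_right hK (hh i)
        _ = 2 * (x + 1) ^ 2 * u / ((x + 1 + α) * (x + 2 + α)) ^ 2 := by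
            rw [hhi]; field_simp
    -- middle bound
    have hv2a : v ^ 2 ≤ r * (x + 1 + α) := by
      nlinarith [mul_le_mul_of_nonneg_right (show (1:ℝ) ≤ r from hr1) hx0]
    have hv2b : v ^ 2 ≤ r * (x + 2 + α) := by nlinarith [hr0]
    have hv8 : v ^ 8 ≤ r ^ 4 * ((x + 1 + α) * (x + 2 + α)) ^ 2 := by
      have hmm : v ^ 2 * v ^ 2 ≤ r * (x + 1 + α) * (r * (x + 2 + α)) :=
        mul_le_mul hv2a hv2b (sq_nonneg v) (by positivity)
      calc v ^ 8 = (v ^ 2 * v ^ 2) ^ 2 := by ring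
        _ ≤ (r * (x + 1 + α) * (r * (x + 2 + α))) ^ 2 :=
            pow_le_pow_left₀ (by positivity) hmm 2
        _ = r ^ 4 * ((x + 1 + α) * (x + 2 + α)) ^ 2 := by ring
    have hu5 : u ^ 5 * v ^ 3 ≤ v ^ 8 := by
      have h5 : u ^ 5 ≤ v ^ 5 := pow_le_pow_left₀ hu0.le huv 5
      calc u ^ 5 * v ^ 3 ≤ v ^ 5 * v ^ 3 :=
            mul_le_mul_of_nonneg_right h5 (by positivity)
        _ = v ^ 8 := by ring
    have hmid : 2 * (x + 1) ^ 2 * u / ((x + 1 + α) * (x + 2 + α)) ^ 2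
        ≤ 4 * r ^ 4 * (2 * v ^ 3)⁻¹ := by
      rw [inv_eq_one_div, mul_div_assoc' (4 * r ^ 4),
        div_le_div_iff₀ (by positivity) (by positivity)]
      have hlhs : 2 * (x + 1) ^ 2 * u * (2 * v ^ 3) = 4 * (u ^ 5 * v ^ 3) := by
        rw [← hu]; ring
      rw [hlhs]
      nlinarith [hu5, hv8]
    calc K i j * h i ≤ 2 * (x + 1) ^ 2 * u / ((x + 1 + α) * (x + 2 + α)) ^ 2 := hKb
      _ ≤ 4 * r ^ 4 * (2 * v ^ 3)⁻¹ := hmid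
      _ ≤ 4 * r ^ 4 * (u⁻¹ - v⁻¹) := mul_le_mul_of_nonneg_left T1 (by positivity)
      _ = 4 * r ^ 4 * (p i - p (i + 1)) := by rw [hpi, hpi1]
  have Hcol : ∀ j : ℕ, ∀ s : Finset ℕ, ∑ i ∈ s, K i j * h i ≤ 4 * r ^ 4 * p j := by
    intro j s
    set N : ℕ := max (s.sup id + 1) j with hN'
    have hjN : j ≤ N := le_max_right _ _
    have hfil : ∑ i ∈ s, K i j * h i
        = ∑ i ∈ s.filter (fun i => j ≤ i), K i j * h i := by
      rw [← Finset.sum_filter_add_sum_filter_not s (fun i => j ≤ i) (fun i => K i j * h i)]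
      have hz : ∑ i ∈ s.filter (fun i => ¬ j ≤ i), K i j * h i = 0 := by
        refine Finset.sum_eq_zero fun i hi => ?_
        rw [Finset.mem_filter] at hi
        rw [hKtri i j (by omega), zero_mul]
      rw [hz, add_zero]
    have hsub : s.filter (fun i => j ≤ i) ⊆ Finset.Ico j N := by
      intro i hi
      rw [Finset.mem_filter] at hi
      rw [Finset.mem_Ico]
      refine ⟨hi.2, ?_⟩
      have := Finset.le_sup (f := id) hi.1
      simp only [id] at this
      omega
    calc ∑ i ∈ s, K i j * h i
        = ∑ i ∈ s.filter (fun i => j ≤ i), K i j * h i := hfil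
      _ ≤ ∑ i ∈ Finset.Ico j N, K i j * h i :=
          Finset.sum_le_sum_of_subset_of_nonneg hsub
            (fun i _ _ => mul_nonneg (hK0 i j) (hh i))
      _ ≤ ∑ i ∈ Finset.Ico j N, 4 * r ^ 4 * (p i - p (i + 1)) :=
          Finset.sum_le_sum fun i hi => term i j (Finset.mem_Ico.1 hi).1
      _ = 4 * r ^ 4 * (p j - p N) := by
          rw [← Finset.mul_sum]
          congr 1
          rw [Finset.sum_Ico_eq_sub _ hjN, Finset.sum_range_sub' p, Finset.sum_range_sub' p]
          ring
      _ ≤ 4 * r ^ 4 * p j := by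
          nlinarith [mul_nonneg (by positivity : (0:ℝ) ≤ 4 * r ^ 4) (hp N).le]
  obtain ⟨M, hM⟩ := schur_triangular K hK0 hKtri p h hp hh 4 (4 * r ^ 4)
    (by norm_num) (by positivity) Hrow Hcol
  refine ⟨M, fun i j => ?_⟩
  have he : ∀ k n : ℕ, (e n : ∀ _ : ℕ, ℂ) k = if k = n then 1 else 0 := by
    intro k n
    rcases eq_or_ne k n with hkn | hkn
    · subst hkn; rw [if_pos rfl]; exact lp.single_apply_self 2 k 1
    · rw [if_neg hkn]; exact lp.single_apply_ne 2 n 1 hkn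
  have hinner : (inner ℂ (e i) (M (e j)) : ℂ) = M (e j) i := by
    rw [show e i = lp.single 2 i (1:ℂ) from rfl, lp.inner_single_left]
    simp [RCLike.inner_apply]
  rw [hinner, hM (e j) i]
  by_cases hij : j ≤ i
  · rw [Finset.sum_eq_single j ?_ ?_]
    · rw [he j j, if_pos rfl, mul_one]
      simp only [hK']
      rw [if_pos hij, if_pos hij]
    · intro b _ hbj
      rw [he b j, if_neg hbj, mul_zero]
    · intro hj
      exact absurd (Finset.mem_range.2 (by omega)) hj
  · rw [if_neg hij]
    refine Finset.sum_eq_zero fun k hk => ?_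
    have hkj : k ≠ j := by
      rw [Finset.mem_range] at hk; omega
    rw [he k j, if_neg hkj, mul_zero]
end

section
/- Let α > −1 be a real number and let M = (C^(α),2) be the generalized Cesàro operator of order two on ℓ². Then for every n ≥ 0, M[(1/2)(n+1+α)(n+2+α)(e_n − 2 e_{n+1} + e_{n+2})] = e_n; in particular, the range of M contains every vector e_n of the standard orthonormal basis. -/
lemma inner_e_apply (i : ℕ) (x : lp (fun _ : ℕ => ℂ) 2) :
    (inner ℂ (e i) x : ℂ) = x i := by
  simp [e, lp.inner_single_left]

lemma e_apply_s11 (n i : ℕ) : (e n : ∀ _ : ℕ, ℂ) i = if i = n then 1 else 0 := by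
  rcases eq_or_ne i n with h | h
  · subst h; simp [e, lp.single_apply_self]
  · simp [e, lp.single_apply_ne _ _ _ h, h]

/-- For the generalized Cesàro operator `M` of order two,
`M[(1/2)(n+1+α)(n+2+α)(e_n − 2e_{n+1} + e_{n+2})] = e_n` for every `n`; in
particular every basis vector `e_n` lies in the range of `M`. -/
theorem cesaro_order_two_range_contains_basis (α : ℝ) (hα : α > -1)
    (M : lp (fun _ : ℕ => ℂ) 2 →L[ℂ] lp (fun _ : ℕ => ℂ) 2)
    (hM : ∀ i j : ℕ, (inner ℂ (e i) (M (e j)) : ℂ) =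
      if j ≤ i then
        ((2 * ((i : ℝ) + 1 - j) / (((i : ℝ) + 1 + α) * ((i : ℝ) + 2 + α)) : ℝ) : ℂ)
      else 0) :
    ∀ n : ℕ,
      M ((((1 / 2) * ((n : ℝ) + 1 + α) * ((n : ℝ) + 2 + α) : ℝ) : ℂ) •
          (e n - (2 : ℂ) • e (n + 1) + e (n + 2))) = e n ∧
      e n ∈ LinearMap.range (M : lp (fun _ : ℕ => ℂ) 2 →ₗ[ℂ] lp (fun _ : ℕ => ℂ) 2) := by
  intro n
  have key : M ((((1 / 2) * ((n : ℝ) + 1 + α) * ((n : ℝ) + 2 + α) : ℝ) : ℂ) •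
      (e n - (2 : ℂ) • e (n + 1) + e (n + 2))) = e n := by
    apply lp.ext
    funext i
    have h1 : (0:ℝ) < (i : ℝ) + 1 + α := by
      have : (0:ℝ) ≤ (i:ℝ) := Nat.cast_nonneg i
      linarith
    have h2 : (0:ℝ) < (i : ℝ) + 2 + α := by linarith
    have hc1 : ((((i : ℝ) + 1 + α : ℝ)) : ℂ) ≠ 0 := Complex.ofReal_ne_zero.mpr h1.ne'
    have hc2 : ((((i : ℝ) + 2 + α : ℝ)) : ℂ) ≠ 0 := Complex.ofReal_ne_zero.mpr h2.ne'
    rw [← inner_e_apply i]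
    have expand : (inner ℂ (e i) (M ((((1 / 2) * ((n : ℝ) + 1 + α) * ((n : ℝ) + 2 + α) : ℝ) : ℂ) •
        (e n - (2 : ℂ) • e (n + 1) + e (n + 2)))) : ℂ)
        = (((1 / 2) * ((n : ℝ) + 1 + α) * ((n : ℝ) + 2 + α) : ℝ) : ℂ) *
          ((inner ℂ (e i) (M (e n)) : ℂ) - 2 * (inner ℂ (e i) (M (e (n+1))) : ℂ)
            + (inner ℂ (e i) (M (e (n+2))) : ℂ)) := by
      simp only [map_smul, map_sub, map_add, map_smul, inner_smul_right, inner_sub_right,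
        inner_add_right]
    rw [expand, hM, hM, hM, e_apply_s11]
    rcases lt_or_ge i n with h | h
    · rw [if_neg (by omega), if_neg (by omega), if_neg (by omega), if_neg (by omega)]
      ring
    rcases eq_or_lt_of_le h with h | h
    · subst h
      rw [if_pos le_rfl, if_neg (by omega), if_neg (by omega), if_pos rfl]
      push_cast at hc1 hc2 ⊢
      field_simp
      ring
    rcases eq_or_lt_of_le (Nat.succ_le_of_lt h) with h' | h'
    · subst h'
      rw [if_pos (by omega), if_pos (by omega), if_neg (by omega), if_neg (by omega)]
      push_cast
      ring
    · rw [if_pos (by omega), if_pos (by omega), if_pos (by omega), if_neg (by omega)]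
      push_cast
      ring
  exact ⟨key, ⟨_, key⟩⟩
end

section
/- Let α > −1 be a real number and let i, j be natural numbers with j ≥ i. Then the series ∑_{k=0}^{∞} 4(j+1−i+k)(k+1) / [(j+1+k+α)(j+2+k+α)(j+3+k+α)(j+4+k+α)] converges and its sum equals 2(3j+3−i+2α) / [3(j+1+α)(j+2+α)]. -/
open Filter Topology

/-- For `α > -1` and natural numbers `j ≥ i`, the series
`∑_{k≥0} 4(j+1−i+k)(k+1)/[(j+1+k+α)(j+2+k+α)(j+3+k+α)(j+4+k+α)]` converges
with sum `2(3j+3−i+2α)/[3(j+1+α)(j+2+α)]`. -/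
theorem telescoping_series_cesaro_order_two (α : ℝ) (hα : α > -1)
    (i j : ℕ) (hij : i ≤ j) :
    HasSum
      (fun k : ℕ =>
        4 * ((j : ℝ) + 1 - i + k) * ((k : ℝ) + 1) /
          (((j : ℝ) + 1 + k + α) * ((j : ℝ) + 2 + k + α) *
            ((j : ℝ) + 3 + k + α) * ((j : ℝ) + 4 + k + α)))
      (2 * (3 * (j : ℝ) + 3 - i + 2 * α) /
        (3 * ((j : ℝ) + 1 + α) * ((j : ℝ) + 2 + α))) := by
  have hji : (i : ℝ) ≤ (j : ℝ) := by exact_mod_cast hij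
  set x : ℝ := (j : ℝ) + 1 + α with hxdef
  set c : ℝ := (j : ℝ) + 1 - i with hcdef
  have hx0 : 0 < x := by
    have : (0:ℝ) ≤ (j:ℝ) := Nat.cast_nonneg j
    simp only [hxdef]; linarith
  have hc0 : 0 < c := by simp only [hcdef]; linarith
  have hpos : ∀ k : ℕ, ∀ m : ℝ, 0 ≤ m → 0 < x + m + k := by
    intro k m hm
    have : (0:ℝ) ≤ (k:ℝ) := Nat.cast_nonneg k
    linarith
  set A1 : ℝ := 2 * (x - 1) * (x - c) / 3 with hA1
  set A2 : ℝ := (4*c*x + 2*c - 4*x^2 - 8*x) / 3 with hA2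
  set A3 : ℝ := (2*x^2 + 10*x + 12 - 2*c*x - 4*c) / 3 with hA3
  set g : ℕ → ℝ := fun k => A1 / (x + k) + A2 / (x + 1 + k) + A3 / (x + 2 + k) with hg
  have hf_eq : ∀ k : ℕ,
      4 * ((j : ℝ) + 1 - i + k) * ((k : ℝ) + 1) /
          (((j : ℝ) + 1 + k + α) * ((j : ℝ) + 2 + k + α) *
            ((j : ℝ) + 3 + k + α) * ((j : ℝ) + 4 + k + α)) = g k - g (k + 1) := by
    intro k
    have e1 : (j : ℝ) + 1 + k + α = x + 0 + k := by ring
    have e2 : (j : ℝ) + 2 + k + α = x + 1 + k := by ring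
    have e3 : (j : ℝ) + 3 + k + α = x + 2 + k := by ring
    have e4 : (j : ℝ) + 4 + k + α = x + 3 + k := by ring
    have ec : (j : ℝ) + 1 - i + k = c + k := by ring
    rw [e1, e2, e3, e4, ec]
    have h1 := (hpos k 0 le_rfl).ne'
    have h2 := (hpos k 1 one_pos.le).ne'
    have h3 := (hpos k 2 (by norm_num)).ne'
    have h4 := (hpos k 3 (by norm_num)).ne'
    simp only [hg, hA1, hA2, hA3, Nat.cast_add, Nat.cast_one]
    have h2' : x + (↑k + 1) ≠ 0 := by push_cast at h2 ⊢; linarith [hpos k 1 one_pos.le]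
    have h3' : x + 1 + (↑k + 1) ≠ 0 := by linarith [hpos k 2 (by norm_num : (0:ℝ) ≤ 2)]
    have h4' : x + 2 + (↑k + 1) ≠ 0 := by linarith [hpos k 3 (by norm_num : (0:ℝ) ≤ 3)]
    field_simp
    ring
  have hsum_eq : (2 * (3 * (j : ℝ) + 3 - i + 2 * α) /
        (3 * ((j : ℝ) + 1 + α) * ((j : ℝ) + 2 + α))) = g 0 := by
    have h1 : x ≠ 0 := hx0.ne'
    have h2 : x + 1 ≠ 0 := by linarith
    have h3 : x + 2 ≠ 0 := by linarith
    have e1 : (j : ℝ) + 1 + α = x := by ring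
    have e2 : (j : ℝ) + 2 + α = x + 1 := by ring
    have ec : 3 * (j : ℝ) + 3 - i + 2 * α = c + 2 * x := by simp only [hcdef, hxdef]; ring
    rw [e1, e2, ec]
    simp only [hg, hA1, hA2, hA3, Nat.cast_zero]
    field_simp
    ring
  have htend : Tendsto g atTop (𝓝 0) := by
    have base : ∀ m : ℝ, Tendsto (fun k : ℕ => x + m + (k : ℝ)) atTop atTop := by
      intro m
      exact tendsto_atTop_add_const_left _ _ tendsto_natCast_atTop_atTop
    have t1 := Tendsto.div_atTop (tendsto_const_nhds (x := A1)) (base 0)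
    have t2 := Tendsto.div_atTop (tendsto_const_nhds (x := A2)) (base 1)
    have t3 := Tendsto.div_atTop (tendsto_const_nhds (x := A3)) (base 2)
    have := (t1.add t2).add t3
    simp only [add_zero] at this
    refine this.congr fun k => ?_
    simp only [hg]
  have hnonneg : ∀ k : ℕ,
      0 ≤ 4 * ((j : ℝ) + 1 - i + k) * ((k : ℝ) + 1) /
          (((j : ℝ) + 1 + k + α) * ((j : ℝ) + 2 + k + α) *
            ((j : ℝ) + 3 + k + α) * ((j : ℝ) + 4 + k + α)) := by
    intro k
    have hk : (0:ℝ) ≤ (k:ℝ) := Nat.cast_nonneg k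
    have p1 := hpos k 0 le_rfl
    have p2 := hpos k 1 one_pos.le
    have p3 := hpos k 2 (by norm_num)
    have p4 := hpos k 3 (by norm_num)
    apply div_nonneg
    · have : (0:ℝ) ≤ (j:ℝ) + 1 - i + k := by linarith
      positivity
    · have e1 : (j : ℝ) + 1 + k + α = x + 0 + k := by ring
      have e2 : (j : ℝ) + 2 + k + α = x + 1 + k := by ring
      have e3 : (j : ℝ) + 3 + k + α = x + 2 + k := by ring
      have e4 : (j : ℝ) + 4 + k + α = x + 3 + k := by ring
      rw [e1, e2, e3, e4]
      positivity
  rw [hasSum_iff_tendsto_nat_of_nonneg hnonneg, hsum_eq]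
  have hps : ∀ n : ℕ, ∑ k ∈ Finset.range n,
      (4 * ((j : ℝ) + 1 - i + k) * ((k : ℝ) + 1) /
          (((j : ℝ) + 1 + k + α) * ((j : ℝ) + 2 + k + α) *
            ((j : ℝ) + 3 + k + α) * ((j : ℝ) + 4 + k + α))) = g 0 - g n := by
    intro n
    rw [Finset.sum_congr rfl fun k _ => hf_eq k]
    exact Finset.sum_range_sub' g n
  simp only [hps]
  have := (tendsto_const_nhds (x := g 0)).sub htend
  simpa using this
end

section
/- For every real number α > −1, there exists a bounded linear operator B on ℓ² whose matrix entries with respect to the standard orthonormal basis are ⟨B e_j, e_i⟩ = 2(j+1−3i−2α)/((j+3+α)(j+4+α)) if j > i−2, ⟨B e_j, e_i⟩ = (j+1+α)(j+2+α)/((j+3+α)(j+4+α)) if j = i−2, and 0 if j < i−2. -/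
open scoped ENNReal NNReal
open MeasureTheory

lemma ennreal_cs (f g : ℕ → ℝ≥0∞) :
    (∑' n, f n * g n) ≤ (∑' n, f n ^ 2) ^ (1/2 : ℝ) * (∑' n, g n ^ 2) ^ (1/2 : ℝ) := by
  have hpq : (2:ℝ).HolderConjugate 2 := by constructor <;> norm_num
  have h := ENNReal.lintegral_mul_le_Lp_mul_Lq (Measure.count (α := ℕ)) hpq
    (f := f) (g := g) (measurable_of_countable f).aemeasurable
    (measurable_of_countable g).aemeasurable
  rw [MeasureTheory.lintegral_count, MeasureTheory.lintegral_count,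
    MeasureTheory.lintegral_count] at h
  have e2 : ∀ (h : ℕ → ℝ≥0∞), ∑' n, h n ^ (2:ℝ) = ∑' n, h n ^ 2 := fun h =>
    tsum_congr fun n => by rw [← ENNReal.rpow_natCast]; norm_num
  calc ∑' n, f n * g n = ∑' n, (f * g) n := rfl
    _ ≤ _ := h.trans (by rw [e2 f, e2 g])

lemma ennreal_cs_sq (f g : ℕ → ℝ≥0∞) :
    (∑' n, f n * g n) ^ 2 ≤ (∑' n, f n ^ 2) * (∑' n, g n ^ 2) := by
  calc (∑' n, f n * g n) ^ 2
      ≤ ((∑' n, f n ^ 2) ^ (1/2 : ℝ) * (∑' n, g n ^ 2) ^ (1/2 : ℝ)) ^ 2 := by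
        gcongr; exact ennreal_cs f g
    _ = _ := by
        rw [mul_pow, ← ENNReal.rpow_natCast (_ ^ (1/2:ℝ)), ← ENNReal.rpow_natCast (_ ^ (1/2:ℝ)),
          ← ENNReal.rpow_mul, ← ENNReal.rpow_mul]
        norm_num

lemma lp_two_tsum_ne_top (x : lp (fun _ : ℕ => ℂ) 2) :
    ∑' j, ((‖x j‖₊ : ℝ≥0∞)) ^ 2 ≠ ∞ := by
  have h : Summable (fun j => ‖x j‖ ^ ((2:ℝ≥0∞).toReal)) := (lp.memℓp x).summable (by norm_num)
  have h2 : Summable (fun j => (‖x j‖₊ ^ 2 : ℝ≥0)) := by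
    rw [← NNReal.summable_coe]
    simpa [ENNReal.toReal_ofNat, Real.rpow_natCast] using h
  have := ENNReal.tsum_coe_ne_top_iff_summable.2 h2
  simpa [ENNReal.coe_pow] using this

section
variable (a : ℕ → ℕ → ℂ) (w : ℕ → ℝ≥0∞) (hw0 : ∀ i, w i ≠ 0) (hwt : ∀ i, w i ≠ ∞)
  (C : ℝ≥0∞) (hrow : ∀ i, ∑' j, (‖a i j‖₊ : ℝ≥0∞) * w j ≤ C * w i)
  (hcol : ∀ j, ∑' i, (‖a i j‖₊ : ℝ≥0∞) * w i ≤ C * w j)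
  (x : ℕ → ℂ)

-- pointwise Cauchy-Schwarz
include hw0 hwt hrow in
lemma key1 (i : ℕ) :
    (∑' j, (‖a i j‖₊ : ℝ≥0∞) * ‖x j‖₊) ^ 2 ≤
      (C * w i) * ∑' j, (‖a i j‖₊ : ℝ≥0∞) * (w j)⁻¹ * (‖x j‖₊ : ℝ≥0∞) ^ 2 := by
  have hfg : ∀ j, (‖a i j‖₊ : ℝ≥0∞) * ‖x j‖₊ =
      (((‖a i j‖₊ : ℝ≥0∞) * w j) ^ (1/2:ℝ)) *
      ((((‖a i j‖₊ : ℝ≥0∞) * (w j)⁻¹) ^ (1/2:ℝ)) * ‖x j‖₊) := by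
    intro j
    rw [← mul_assoc, ← ENNReal.mul_rpow_of_nonneg _ _ (by norm_num)]
    have : (‖a i j‖₊ : ℝ≥0∞) * w j * ((‖a i j‖₊ : ℝ≥0∞) * (w j)⁻¹) =
        ((‖a i j‖₊ : ℝ≥0∞)) ^ 2 := by
      rw [mul_mul_mul_comm, ENNReal.mul_inv_cancel (hw0 j) (hwt j), mul_one, sq]
    rw [this, ← ENNReal.rpow_natCast (_ : ℝ≥0∞) 2, ← ENNReal.rpow_mul]
    norm_num
  calc (∑' j, (‖a i j‖₊ : ℝ≥0∞) * ‖x j‖₊) ^ 2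
      = (∑' j, (((‖a i j‖₊ : ℝ≥0∞) * w j) ^ (1/2:ℝ)) *
          ((((‖a i j‖₊ : ℝ≥0∞) * (w j)⁻¹) ^ (1/2:ℝ)) * ‖x j‖₊)) ^ 2 := by
        rw [tsum_congr hfg]
    _ ≤ (∑' j, (((‖a i j‖₊ : ℝ≥0∞) * w j) ^ (1/2:ℝ)) ^ 2) *
        (∑' j, ((((‖a i j‖₊ : ℝ≥0∞) * (w j)⁻¹) ^ (1/2:ℝ)) * ‖x j‖₊) ^ 2) :=
        ennreal_cs_sq _ _
    _ ≤ _ := by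
        have e1 : ∀ (y : ℝ≥0∞), (y ^ (1/2:ℝ)) ^ 2 = y := fun y => by
          rw [← ENNReal.rpow_natCast (_ : ℝ≥0∞) 2, ← ENNReal.rpow_mul]; norm_num
        gcongr ?_ * ?_
        · calc ∑' j, (((‖a i j‖₊ : ℝ≥0∞) * w j) ^ (1/2:ℝ)) ^ 2
              = ∑' j, (‖a i j‖₊ : ℝ≥0∞) * w j := tsum_congr fun j => e1 _
            _ ≤ C * w i := hrow i
        · apply le_of_eq
          refine tsum_congr fun j => ?_
          rw [mul_pow, e1]
end

section
variable (a : ℕ → ℕ → ℂ) (w : ℕ → ℝ≥0∞) (hw0 : ∀ i, w i ≠ 0) (hwt : ∀ i, w i ≠ ∞)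
  (C : ℝ≥0∞) (hcol : ∀ j, ∑' i, (‖a i j‖₊ : ℝ≥0∞) * w i ≤ C * w j)
  (x : ℕ → ℂ)

include hw0 hwt hcol in
lemma key2 :
    ∑' i, w i * ∑' j, (‖a i j‖₊ : ℝ≥0∞) * (w j)⁻¹ * (‖x j‖₊ : ℝ≥0∞) ^ 2 ≤
      C * ∑' j, (‖x j‖₊ : ℝ≥0∞) ^ 2 := by
  calc ∑' i, w i * ∑' j, (‖a i j‖₊ : ℝ≥0∞) * (w j)⁻¹ * (‖x j‖₊ : ℝ≥0∞) ^ 2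
      = ∑' i, ∑' j, w i * ((‖a i j‖₊ : ℝ≥0∞) * (w j)⁻¹ * (‖x j‖₊ : ℝ≥0∞) ^ 2) := by
        exact tsum_congr fun i => ENNReal.tsum_mul_left.symm
    _ = ∑' j, ∑' i, w i * ((‖a i j‖₊ : ℝ≥0∞) * (w j)⁻¹ * (‖x j‖₊ : ℝ≥0∞) ^ 2) :=
        ENNReal.tsum_comm
    _ = ∑' j, ((w j)⁻¹ * (‖x j‖₊ : ℝ≥0∞) ^ 2) * ∑' i, (‖a i j‖₊ : ℝ≥0∞) * w i := by
        refine tsum_congr fun j => ?_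
        rw [← ENNReal.tsum_mul_left]
        exact tsum_congr fun i => by ring
    _ ≤ ∑' j, ((w j)⁻¹ * (‖x j‖₊ : ℝ≥0∞) ^ 2) * (C * w j) := by
        gcongr with j
        exact hcol j
    _ = C * ∑' j, (‖x j‖₊ : ℝ≥0∞) ^ 2 := by
        rw [← ENNReal.tsum_mul_left]
        refine tsum_congr fun j => ?_
        rw [show (w j)⁻¹ * (‖x j‖₊ : ℝ≥0∞) ^ 2 * (C * w j)
            = C * ((w j)⁻¹ * w j) * (‖x j‖₊ : ℝ≥0∞) ^ 2 by ring,
          ENNReal.inv_mul_cancel (hw0 j) (hwt j), mul_one]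
end

section main
variable (a : ℕ → ℕ → ℂ) (w : ℕ → ℝ≥0∞) (hw0 : ∀ i, w i ≠ 0) (hwt : ∀ i, w i ≠ ∞)
  (C : ℝ≥0∞) (hC : C ≠ ∞)
  (hrow : ∀ i, ∑' j, (‖a i j‖₊ : ℝ≥0∞) * w j ≤ C * w i)
  (hcol : ∀ j, ∑' i, (‖a i j‖₊ : ℝ≥0∞) * w i ≤ C * w j)

include hw0 hwt hC hrow hcol in
theorem schur_test : ∃ B : lp (fun _ : ℕ => ℂ) 2 →L[ℂ] lp (fun _ : ℕ => ℂ) 2,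
    ∀ (x : lp (fun _ : ℕ => ℂ) 2) (i : ℕ), B x i = ∑' j, a i j * (x j) := by
  classical
  -- notation
  set N : lp (fun _ : ℕ => ℂ) 2 → ℝ≥0∞ := fun x => ∑' j, ((‖x j‖₊ : ℝ≥0∞)) ^ 2 with hN
  have hNtop : ∀ x, N x ≠ ∞ := fun x => lp_two_tsum_ne_top x
  set S : lp (fun _ : ℕ => ℂ) 2 → ℕ → ℝ≥0∞ :=
    fun x i => ∑' j, (‖a i j‖₊ : ℝ≥0∞) * (w j)⁻¹ * (‖x j‖₊ : ℝ≥0∞) ^ 2 with hS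
  set T : lp (fun _ : ℕ => ℂ) 2 → ℕ → ℝ≥0∞ :=
    fun x i => ∑' j, (‖a i j‖₊ : ℝ≥0∞) * ‖x j‖₊ with hT
  have hwS : ∀ x i, w i * S x i ≤ C * N x := by
    intro x i
    exact (ENNReal.le_tsum i).trans (key2 a w hw0 hwt C hcol _)
  have hT2 : ∀ x i, (T x i) ^ 2 ≤ C ^ 2 * N x := by
    intro x i
    calc (T x i) ^ 2 ≤ (C * w i) * S x i := key1 a w hw0 hwt C hrow _ i
      _ = C * (w i * S x i) := by ring
      _ ≤ C * (C * N x) := mul_le_mul_right (hwS x i) C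
      _ = C ^ 2 * N x := by ring
  have hTt : ∀ x i, T x i ≠ ∞ := by
    intro x i
    intro h
    have := hT2 x i
    rw [h] at this
    rw [show (⊤:ℝ≥0∞)^2 = ⊤ by simp [pow_two]] at this
    exact (ENNReal.mul_ne_top (by simpa using hC) (hNtop x)) (top_le_iff.mp this)
  have hsum : ∀ (x : lp (fun _ : ℕ => ℂ) 2) i, Summable fun j => a i j * x j := by
    intro x i
    apply Summable.of_nnnorm
    rw [← ENNReal.tsum_coe_ne_top_iff_summable]
    have : ∑' j, ((‖a i j * x j‖₊ : ℝ≥0∞)) = T x i := by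
      refine tsum_congr fun j => ?_
      rw [nnnorm_mul]; push_cast; ring
    rw [this]; exact hTt x i
  -- the candidate function
  set Bf : lp (fun _ : ℕ => ℂ) 2 → ℕ → ℂ := fun x i => ∑' j, a i j * x j with hBf
  have hBle : ∀ x i, ((‖Bf x i‖₊ : ℝ≥0∞)) ≤ T x i := by
    intro x i
    have hs : Summable fun j => ‖a i j * x j‖₊ := by
      have := hsum x i
      rw [← ENNReal.tsum_coe_ne_top_iff_summable]
      have e : ∑' j, ((‖a i j * x j‖₊ : ℝ≥0∞)) = T x i := by
        refine tsum_congr fun j => ?_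
        rw [nnnorm_mul]; push_cast; ring
      rw [e]; exact hTt x i
    calc ((‖Bf x i‖₊ : ℝ≥0∞)) ≤ ((∑' j, ‖a i j * x j‖₊ : ℝ≥0) : ℝ≥0∞) := by
          exact_mod_cast nnnorm_tsum_le hs
      _ = ∑' j, ((‖a i j * x j‖₊ : ℝ≥0∞)) := ENNReal.coe_tsum hs
      _ = T x i := by
          refine tsum_congr fun j => ?_
          rw [nnnorm_mul]; push_cast; ring
  have hB2 : ∀ x, ∑' i, ((‖Bf x i‖₊ : ℝ≥0∞)) ^ 2 ≤ C ^ 2 * N x := by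
    intro x
    calc ∑' i, ((‖Bf x i‖₊ : ℝ≥0∞)) ^ 2 ≤ ∑' i, (C * w i) * S x i := by
          gcongr with i
          exact le_trans (by gcongr; exact hBle x i) (key1 a w hw0 hwt C hrow _ i)
      _ = C * ∑' i, w i * S x i := by
          rw [← ENNReal.tsum_mul_left]
          exact tsum_congr fun i => by ring
      _ ≤ C * (C * N x) := by
          gcongr
          exact key2 a w hw0 hwt C hcol _
      _ = C ^ 2 * N x := by ring
  have hmem : ∀ x, Memℓp (Bf x) 2 := by
    intro x
    apply memℓp_gen
    have hs2 : Summable fun i => ((‖Bf x i‖₊ : ℝ≥0) ^ 2) := by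
      rw [← ENNReal.tsum_coe_ne_top_iff_summable]
      push_cast
      exact ne_top_of_le_ne_top (ENNReal.mul_ne_top (by simpa using hC) (hNtop x)) (hB2 x)
    have := NNReal.summable_coe.2 hs2
    simpa [ENNReal.toReal_ofNat, Real.rpow_natCast] using this
  have hadd : ∀ x y : lp (fun _ : ℕ => ℂ) 2, Bf (x + y) = Bf x + Bf y := by
    intro x y; funext i
    have e : ∀ j, a i j * ((x + y) j) = a i j * x j + a i j * y j := by
      intro j; rw [lp.coeFn_add]; simp only [Pi.add_apply]; ring
    simp only [hBf]
    rw [tsum_congr e, Summable.tsum_add (hsum x i) (hsum y i)]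
    rfl
  have hsmul : ∀ (c : ℂ) (x : lp (fun _ : ℕ => ℂ) 2), Bf (c • x) = c • Bf x := by
    intro c x; funext i
    have e : ∀ j, a i j * ((c • x) j) = c * (a i j * x j) := by
      intro j; rw [lp.coeFn_smul]; simp only [Pi.smul_apply, smul_eq_mul]; ring
    simp only [hBf]
    rw [tsum_congr e, tsum_mul_left]
    rfl
  let L : lp (fun _ : ℕ => ℂ) 2 →ₗ[ℂ] lp (fun _ : ℕ => ℂ) 2 :=
    { toFun := fun x => ⟨Bf x, hmem x⟩
      map_add' := fun x y => lp.ext (by simp only [lp.coeFn_add]; exact hadd x y)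
      map_smul' := fun c x => lp.ext (by simpa using hsmul c x) }
  have hLx : ∀ (x : lp (fun _ : ℕ => ℂ) 2), ⇑(L x) = Bf x := fun x => rfl
  have hnorm : ∀ x, ‖L x‖ ≤ C.toReal * ‖x‖ := by
    intro x
    apply lp.norm_le_of_tsum_le (by norm_num) (mul_nonneg ENNReal.toReal_nonneg (norm_nonneg _))
    have h1 : ∑' i, ‖(L x) i‖ ^ (2:ℝ≥0∞).toReal = (∑' i, ((‖Bf x i‖₊ : ℝ≥0∞)) ^ 2).toReal := by
      rw [ENNReal.tsum_toReal_eq (fun i => ENNReal.pow_ne_top ENNReal.coe_ne_top)]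
      refine tsum_congr fun i => ?_
      rw [hLx]
      simp [ENNReal.toReal_ofNat, Real.rpow_natCast]
    have h2 : (N x).toReal = ‖x‖ ^ (2:ℝ≥0∞).toReal := by
      rw [lp.norm_rpow_eq_tsum (by norm_num) x]
      rw [ENNReal.tsum_toReal_eq (fun i => ENNReal.pow_ne_top ENNReal.coe_ne_top)]
      refine (tsum_congr fun j => ?_).symm
      simp [ENNReal.toReal_ofNat, Real.rpow_natCast]
    rw [h1]
    calc (∑' i, ((‖Bf x i‖₊ : ℝ≥0∞)) ^ 2).toReal ≤ (C ^ 2 * N x).toReal := by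
          apply ENNReal.toReal_mono _ (hB2 x)
          exact ENNReal.mul_ne_top (ENNReal.pow_ne_top hC) (hNtop x)
      _ = C.toReal ^ 2 * (N x).toReal := by
          rw [ENNReal.toReal_mul, ENNReal.toReal_pow]
      _ = (C.toReal * ‖x‖) ^ (2:ℝ≥0∞).toReal := by
          rw [h2]
          have h3 : ((2:ℝ≥0∞)).toReal = ((2:ℕ):ℝ) := by norm_num
          rw [h3, Real.rpow_natCast, Real.rpow_natCast]
          ring
  refine ⟨L.mkContinuous C.toReal hnorm, fun x i => ?_⟩
  rfl
end main


noncomputable def sw (n : ℕ) : ℝ := 1 / Real.sqrt (n + 1)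

lemma sw_pos (n : ℕ) : 0 < sw n := by
  unfold sw; positivity

lemma sqrt_succ_le (n : ℕ) : Real.sqrt (n + 1) ≤ Real.sqrt (n + 1 + 1) :=
  Real.sqrt_le_sqrt (by norm_num)

lemma sw_anti (n : ℕ) : sw (n + 1) ≤ sw n := by
  unfold sw
  apply one_div_le_one_div_of_le (Real.sqrt_pos.2 (by positivity))
  push_cast
  exact Real.sqrt_le_sqrt (by norm_num)

lemma sw_telescope (n : ℕ) : sw n / (n + 1) ≤ 4 * (sw n - sw (n + 1)) := by
  unfold sw
  set A := Real.sqrt (n + 1) with hA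
  set B := Real.sqrt (n + 1 + 1) with hB
  have hApos : 0 < A := Real.sqrt_pos.2 (by positivity)
  have hBpos : 0 < B := Real.sqrt_pos.2 (by positivity)
  have hA2 : A ^ 2 = (n : ℝ) + 1 := Real.sq_sqrt (by positivity)
  have hB2 : B ^ 2 = (n : ℝ) + 2 := by
    rw [hB]; rw [Real.sq_sqrt (by positivity)]; push_cast; ring
  have hAB : A ≤ B := Real.sqrt_le_sqrt (by norm_num)
  have key : 4 * A ^ 2 * (B - A) ≥ B := by nlinarith [sq_nonneg (A - B), sq_nonneg (A + B), mul_pos hApos hBpos, sq_nonneg (2*A - B)]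
  have e1 : (1 / A) / ((n : ℝ) + 1) = 1 / A ^ 3 := by
    rw [← hA2]; ring
  have hBe : Real.sqrt ((n + 1 : ℕ) + 1) = B := by
    rw [hB]; congr 1; push_cast; ring
  rw [hBe, e1]
  have h2 : 4 * (1 / A - 1 / B) - 1 / A ^ 3 = (4 * A ^ 2 * (B - A) - B) / (A ^ 3 * B) := by
    field_simp
  have h3 : 0 ≤ 4 * (1 / A - 1 / B) - 1 / A ^ 3 := by
    rw [h2]
    apply div_nonneg (by linarith) (by positivity)
  linarith

lemma sqrt_four_mul (x : ℝ) (hx : 0 ≤ x) : Real.sqrt (4 * x) = 2 * Real.sqrt x := by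
  rw [show (4:ℝ) * x = 2 ^ 2 * x by ring, Real.sqrt_mul (by positivity), Real.sqrt_sq (by norm_num)]

lemma sw_le_two_sw {m n : ℕ} (h : (n : ℝ) + 1 ≤ 4 * ((m : ℝ) + 1)) : sw m ≤ 2 * sw n := by
  unfold sw
  have hm : (0:ℝ) < Real.sqrt ((m:ℝ) + 1) := Real.sqrt_pos.2 (by positivity)
  have hn : (0:ℝ) < Real.sqrt ((n:ℝ) + 1) := Real.sqrt_pos.2 (by positivity)
  have key : (1:ℝ)/Real.sqrt ((m:ℝ)+1) ≤ 2/Real.sqrt ((n:ℝ)+1) := by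
    rw [div_le_div_iff₀ hm hn, one_mul]
    calc Real.sqrt ((n:ℝ)+1) ≤ Real.sqrt (4 * ((m:ℝ)+1)) := Real.sqrt_le_sqrt h
      _ = 2 * Real.sqrt ((m:ℝ)+1) := sqrt_four_mul _ (by positivity)
  calc 1/Real.sqrt ((m:ℝ)+1) ≤ 2/Real.sqrt ((n:ℝ)+1) := key
    _ = 2 * (1/Real.sqrt ((n:ℝ)+1)) := by ring

lemma sw_pred (n : ℕ) : sw (n - 1) ≤ 2 * sw n := by
  rcases n with _ | m
  · exact sw_le_two_sw (by norm_num)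
  · exact sw_le_two_sw (by push_cast [Nat.succ_sub_one]; nlinarith [Nat.cast_nonneg (α := ℝ) m])

lemma sw_pred2 {n : ℕ} (h : 2 ≤ n) : sw (n - 2) ≤ 2 * sw n := by
  apply sw_le_two_sw
  have h2 : ((n - 2 : ℕ) : ℝ) = (n : ℝ) - 2 := by
    push_cast [Nat.cast_sub h]; ring
  rw [h2]
  have hn : (2:ℝ) ≤ n := by exact_mod_cast h
  nlinarith

lemma sw_sum (n : ℕ) : ∑ i ∈ Finset.range n, sw i ≤ 2 * Real.sqrt n := by
  have h1 : ∀ i : ℕ, sw i ≤ 2 * (Real.sqrt ((i+1 : ℕ) : ℝ) - Real.sqrt (i : ℝ)) := by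
    intro i
    unfold sw
    have hApos : (0:ℝ) < Real.sqrt ((i:ℝ) + 1) := Real.sqrt_pos.2 (by positivity)
    have hA2 : Real.sqrt ((i:ℝ) + 1) ^ 2 = (i : ℝ) + 1 := Real.sq_sqrt (by positivity)
    have hB2 : Real.sqrt (i:ℝ) ^ 2 = (i : ℝ) := Real.sq_sqrt (by positivity)
    have hBnn : (0:ℝ) ≤ Real.sqrt (i:ℝ) := Real.sqrt_nonneg _
    have hAB : Real.sqrt (i:ℝ) ≤ Real.sqrt ((i:ℝ) + 1) := Real.sqrt_le_sqrt (by norm_num)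
    have hc : ((i+1 : ℕ) : ℝ) = (i:ℝ) + 1 := by push_cast; ring
    rw [hc, div_le_iff₀ hApos]
    nlinarith
  calc ∑ i ∈ Finset.range n, sw i
      ≤ ∑ i ∈ Finset.range n, 2 * (Real.sqrt ((i+1:ℕ):ℝ) - Real.sqrt (i:ℝ)) :=
        Finset.sum_le_sum fun i _ => h1 i
    _ = 2 * ∑ i ∈ Finset.range n, ((fun k : ℕ => Real.sqrt (k:ℝ)) (i+1) - (fun k : ℕ => Real.sqrt (k:ℝ)) i) := by
        rw [Finset.mul_sum]
    _ = 2 * Real.sqrt n := by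
        rw [Finset.sum_range_sub (fun k : ℕ => Real.sqrt (k:ℝ))]
        simp

lemma sum_tail (g : ℕ → ℝ) (h0 : ∀ m, 0 ≤ g m) (k n : ℕ) :
    ∑ j ∈ Finset.range n, (if k ≤ j then g j - g (j + 1) else 0) ≤ g k := by
  have key : ∀ n, ∑ j ∈ Finset.range n, (if k ≤ j then g j - g (j + 1) else 0)
      = g (min k n) - g n := by
    intro n
    induction n with
    | zero => simp
    | succ n ih =>
      rw [Finset.sum_range_succ, ih]
      rcases le_or_gt k n with h | h
      · rw [if_pos h, min_eq_left h, min_eq_left (by omega)]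
        ring
      · rw [if_neg (by omega), min_eq_right (by omega), min_eq_right (by omega)]
        ring
  rcases le_or_gt k n with h | h
  · rw [key n, min_eq_left h]
    linarith [h0 n]
  · rw [key n, min_eq_right h.le]
    linarith [h0 k]

noncomputable def ker (α : ℝ) (i j : ℕ) : ℝ :=
  if (i : ℤ) - 2 < (j : ℤ) then
    2 * ((j : ℝ) + 1 - 3 * i - 2 * α) / (((j : ℝ) + 3 + α) * ((j : ℝ) + 4 + α))
  else if (j : ℤ) = (i : ℤ) - 2 then
    (((j : ℝ) + 1 + α) * ((j : ℝ) + 2 + α)) / ((((j : ℝ) + 3 + α)) * (((j : ℝ) + 4 + α)))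
  else 0

lemma ker_bound1 {α : ℝ} (hα : α > -1) {i j : ℕ} (h : (i : ℤ) - 2 < (j : ℤ)) :
    |ker α i j| ≤ (8 + 4 * |α|) / ((j : ℝ) + 1) := by
  rw [ker, if_pos h]
  have hj0 : (0:ℝ) ≤ (j:ℝ) := Nat.cast_nonneg j
  have hi0 : (0:ℝ) ≤ (i:ℝ) := Nat.cast_nonneg i
  have h3 : (0:ℝ) < (j:ℝ) + 3 + α := by linarith
  have h4 : (0:ℝ) < (j:ℝ) + 4 + α := by linarith
  have hD : (0:ℝ) < ((j:ℝ) + 3 + α) * ((j:ℝ) + 4 + α) := mul_pos h3 h4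
  have hD2 : ((j:ℝ) + 1) ^ 2 ≤ ((j:ℝ) + 3 + α) * ((j:ℝ) + 4 + α) := by nlinarith
  have hiN : i ≤ j + 1 := by omega
  have hi : (i:ℝ) ≤ (j:ℝ) + 1 := by exact_mod_cast hiN
  have habs : |α| ≥ 0 := abs_nonneg α
  have ha1 : α ≤ |α| := le_abs_self α
  have ha2 : -|α| ≤ α := neg_abs_le α
  have hnum : |2 * ((j : ℝ) + 1 - 3 * i - 2 * α)| ≤ 2 * ((j:ℝ)+1) + 6 * i + 4 * |α| := by
    rw [abs_le]
    constructor <;> nlinarith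
  rw [abs_div, abs_of_pos hD, div_le_div_iff₀ hD (by positivity)]
  calc |2 * ((j : ℝ) + 1 - 3 * i - 2 * α)| * ((j:ℝ)+1)
      ≤ (2 * ((j:ℝ)+1) + 6 * i + 4 * |α|) * ((j:ℝ)+1) := by
        apply mul_le_mul_of_nonneg_right hnum (by positivity)
    _ ≤ (8 + 4 * |α|) * (((j:ℝ) + 3 + α) * ((j:ℝ) + 4 + α)) := by
        have e1 : (1:ℝ) ≤ (j:ℝ) + 1 := by linarith
        have e2 : ((j:ℝ)+1) ≤ ((j:ℝ)+1)^2 := by nlinarith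
        have e3 : (4 * |α|) * ((j:ℝ)+1) ≤ (4 * |α|) * (((j:ℝ) + 3 + α) * ((j:ℝ) + 4 + α)) := by
          apply mul_le_mul_of_nonneg_left (e2.trans hD2) (by positivity)
        nlinarith

lemma ker_bound2 {α : ℝ} (hα : α > -1) {i j : ℕ} (h1 : ¬ ((i : ℤ) - 2 < (j : ℤ)))
    (h2 : (j : ℤ) = (i : ℤ) - 2) : |ker α i j| ≤ 1 := by
  rw [ker, if_neg h1, if_pos h2]
  have hj0 : (0:ℝ) ≤ (j:ℝ) := Nat.cast_nonneg j
  have h1' : (0:ℝ) < (j:ℝ) + 1 + α := by linarith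
  have h2' : (0:ℝ) < (j:ℝ) + 2 + α := by linarith
  have h3 : (0:ℝ) < (j:ℝ) + 3 + α := by linarith
  have h4 : (0:ℝ) < (j:ℝ) + 4 + α := by linarith
  rw [abs_div, abs_of_pos (mul_pos h1' h2'), abs_of_pos (mul_pos h3 h4),
    div_le_one (mul_pos h3 h4)]
  nlinarith

lemma ker_zero {α : ℝ} {i j : ℕ} (h1 : ¬ ((i : ℤ) - 2 < (j : ℤ)))
    (h2 : ¬ ((j : ℤ) = (i : ℤ) - 2)) : ker α i j = 0 := by
  rw [ker, if_neg h1, if_neg h2]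

lemma sw_pred2' (n : ℕ) : sw (n - 2) ≤ 2 * sw n := by
  rcases n with _ | _ | m
  · exact sw_le_two_sw (by norm_num)
  · exact sw_le_two_sw (by norm_num)
  · show sw m ≤ 2 * sw (m + 2)
    apply sw_le_two_sw
    push_cast
    nlinarith [Nat.cast_nonneg (α := ℝ) m]

lemma sqrt_col (j : ℕ) : Real.sqrt ((j:ℝ) + 2) / ((j:ℝ) + 1) ≤ 2 * sw j := by
  unfold sw
  have h1 : (0:ℝ) < (j:ℝ) + 1 := by positivity
  have h2 : (0:ℝ) < Real.sqrt ((j:ℝ) + 1) := Real.sqrt_pos.2 h1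
  rw [div_le_iff₀ h1]
  have h3 : Real.sqrt ((j:ℝ) + 2) ≤ 2 * Real.sqrt ((j:ℝ) + 1) := by
    rw [← sqrt_four_mul _ (by positivity)]
    apply Real.sqrt_le_sqrt
    nlinarith [Nat.cast_nonneg (α := ℝ) j]
  have h4 : Real.sqrt ((j:ℝ)+1) * Real.sqrt ((j:ℝ)+1) = (j:ℝ)+1 :=
    Real.mul_self_sqrt (by positivity)
  calc Real.sqrt ((j:ℝ) + 2) ≤ 2 * Real.sqrt ((j:ℝ) + 1) := h3
    _ = 2 * (1 / Real.sqrt ((j:ℝ)+1)) * ((j:ℝ)+1) := by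
        field_simp
        rw [sq, h4]
    _ = 2 * (1 / Real.sqrt (↑j + 1)) * (↑j + 1) := rfl

lemma row_sum_real {α : ℝ} (hα : α > -1) (i : ℕ) (F : Finset ℕ) :
    ∑ j ∈ F, |ker α i j| * sw j ≤ (8 * (8 + 4 * |α|) + 8) * sw i := by
  set M : ℝ := 8 + 4 * |α| with hM
  have hM0 : (0:ℝ) ≤ M := by positivity
  have φle : ∀ j ∈ F, |ker α i j| * sw j ≤
      (4 * M) * (if i - 1 ≤ j then sw j - sw (j + 1) else 0)
        + (if (j : ℤ) = (i : ℤ) - 2 then sw j else 0) := by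
    intro j _
    by_cases hg : (i : ℤ) - 2 < (j : ℤ)
    · rw [if_pos (by omega), if_neg (by omega), add_zero]
      calc |ker α i j| * sw j ≤ (M / ((j:ℝ) + 1)) * sw j :=
            mul_le_mul_of_nonneg_right (ker_bound1 hα hg) (sw_pos j).le
        _ = M * (sw j / ((j:ℝ) + 1)) := by ring
        _ ≤ M * (4 * (sw j - sw (j + 1))) :=
            mul_le_mul_of_nonneg_left (sw_telescope j) hM0
        _ = (4 * M) * (sw j - sw (j + 1)) := by ring
    · by_cases hd : (j : ℤ) = (i : ℤ) - 2
      · rw [if_pos hd, if_neg (by omega)]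
        have := mul_le_mul_of_nonneg_right (ker_bound2 hα hg hd) (sw_pos j).le
        simpa using this
      · rw [ker_zero hg hd]
        have h1 : (0:ℝ) ≤ (if i - 1 ≤ j then sw j - sw (j + 1) else 0) := by
          split
          · linarith [sw_anti j]
          · exact le_rfl
        have h2 : (0:ℝ) ≤ (if (j : ℤ) = (i : ℤ) - 2 then sw j else 0) := by
          split
          · exact (sw_pos j).le
          · exact le_rfl
        simp only [abs_zero, zero_mul]
        have h3 := mul_nonneg (by positivity : (0:ℝ) ≤ 4 * M) h1
        linarith
  obtain ⟨n, hFn⟩ := F.exists_nat_subset_range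
  calc ∑ j ∈ F, |ker α i j| * sw j
      ≤ ∑ j ∈ F, ((4 * M) * (if i - 1 ≤ j then sw j - sw (j + 1) else 0)
        + (if (j : ℤ) = (i : ℤ) - 2 then sw j else 0)) := Finset.sum_le_sum φle
    _ = (4 * M) * (∑ j ∈ F, (if i - 1 ≤ j then sw j - sw (j + 1) else 0))
        + ∑ j ∈ F, (if (j : ℤ) = (i : ℤ) - 2 then sw j else 0) := by
        rw [Finset.sum_add_distrib, Finset.mul_sum]
    _ ≤ (4 * M) * sw (i - 1) + sw (i - 2) := by
        gcongr
        · calc ∑ j ∈ F, (if i - 1 ≤ j then sw j - sw (j + 1) else 0)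
              ≤ ∑ j ∈ Finset.range n, (if i - 1 ≤ j then sw j - sw (j + 1) else 0) := by
                apply Finset.sum_le_sum_of_subset_of_nonneg hFn
                intro j _ _
                split
                · linarith [sw_anti j]
                · exact le_rfl
            _ ≤ sw (i - 1) := sum_tail sw (fun m => (sw_pos m).le) (i - 1) n
        · calc ∑ j ∈ F, (if (j : ℤ) = (i : ℤ) - 2 then sw j else 0)
              ≤ ∑ j ∈ F, (if j = i - 2 ∧ 2 ≤ i then sw j else 0) := by
                apply Finset.sum_le_sum
                intro j _
                by_cases hc : (j : ℤ) = (i : ℤ) - 2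
                · rw [if_pos hc, if_pos (by omega)]
                · rw [if_neg hc]
                  split
                  · exact (sw_pos j).le
                  · exact le_rfl
            _ ≤ sw (i - 2) := by
                by_cases hi : 2 ≤ i
                · simp only [hi, and_true]
                  rw [Finset.sum_ite_eq' F (i - 2) sw]
                  split
                  · exact le_rfl
                  · exact (sw_pos _).le
                · simp [hi]
                  exact (sw_pos _).le
    _ ≤ (4 * M) * (2 * sw i) + 2 * sw i := by
        gcongr
        · exact sw_pred i
        · exact sw_pred2' i
    _ ≤ (8 * (8 + 4 * |α|) + 8) * sw i := by
        rw [← hM]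
        nlinarith [sw_pos i, hM0]

lemma col_sum_real {α : ℝ} (hα : α > -1) (j : ℕ) (F : Finset ℕ) :
    ∑ i ∈ F, |ker α i j| * sw i ≤ (8 * (8 + 4 * |α|) + 8) * sw j := by
  set M : ℝ := 8 + 4 * |α| with hM
  have hM0 : (0:ℝ) ≤ M := by positivity
  have ψle : ∀ i ∈ F, |ker α i j| * sw i ≤
      (if (i : ℤ) - 2 < (j : ℤ) then (M / ((j:ℝ) + 1)) * sw i else 0)
        + (if i = j + 2 then sw i else 0) := by
    intro i _
    by_cases hg : (i : ℤ) - 2 < (j : ℤ)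
    · rw [if_pos hg, if_neg (by omega), add_zero]
      exact mul_le_mul_of_nonneg_right (ker_bound1 hα hg) (sw_pos i).le
    · by_cases hd : (j : ℤ) = (i : ℤ) - 2
      · rw [if_neg hg, if_pos (by omega), zero_add]
        have := mul_le_mul_of_nonneg_right (ker_bound2 hα hg hd) (sw_pos i).le
        simpa using this
      · rw [ker_zero hg hd, if_neg hg, zero_add, abs_zero, zero_mul]
        split
        · exact (sw_pos i).le
        · exact le_rfl
  calc ∑ i ∈ F, |ker α i j| * sw i
      ≤ ∑ i ∈ F, ((if (i : ℤ) - 2 < (j : ℤ) then (M / ((j:ℝ) + 1)) * sw i else 0)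
        + (if i = j + 2 then sw i else 0)) := Finset.sum_le_sum ψle
    _ = (∑ i ∈ F, if (i : ℤ) - 2 < (j : ℤ) then (M / ((j:ℝ) + 1)) * sw i else 0)
        + ∑ i ∈ F, (if i = j + 2 then sw i else 0) := Finset.sum_add_distrib
    _ ≤ (M / ((j:ℝ) + 1)) * (2 * Real.sqrt ((j:ℝ) + 2)) + sw j := by
        gcongr
        · calc (∑ i ∈ F, if (i : ℤ) - 2 < (j : ℤ) then (M / ((j:ℝ) + 1)) * sw i else 0)
              = ∑ i ∈ F.filter (fun i : ℕ => (i : ℤ) - 2 < (j : ℤ)), (M / ((j:ℝ) + 1)) * sw i := by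
                rw [Finset.sum_filter]
            _ ≤ ∑ i ∈ Finset.range (j + 2), (M / ((j:ℝ) + 1)) * sw i := by
                apply Finset.sum_le_sum_of_subset_of_nonneg
                · intro i hi
                  rw [Finset.mem_filter] at hi
                  rw [Finset.mem_range]
                  omega
                · intro i _ _
                  have := sw_pos i
                  have : (0:ℝ) ≤ M / ((j:ℝ)+1) := by positivity
                  nlinarith [sw_pos i]
            _ = (M / ((j:ℝ) + 1)) * ∑ i ∈ Finset.range (j + 2), sw i := by
                rw [Finset.mul_sum]
            _ ≤ (M / ((j:ℝ) + 1)) * (2 * Real.sqrt ((j:ℝ) + 2)) := by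
                have := sw_sum (j + 2)
                have hc : ((j + 2 : ℕ) : ℝ) = (j : ℝ) + 2 := by push_cast; ring
                rw [hc] at this
                exact mul_le_mul_of_nonneg_left this (by positivity)
        · calc (∑ i ∈ F, if i = j + 2 then sw i else 0)
              ≤ sw (j + 2) := by
                rw [Finset.sum_ite_eq' F (j + 2) sw]
                split
                · exact le_rfl
                · exact (sw_pos _).le
            _ ≤ sw j := (sw_anti (j+1)).trans (sw_anti j)
    _ ≤ M * (2 * (2 * sw j)) + sw j := by
        have h1 : (M / ((j:ℝ) + 1)) * (2 * Real.sqrt ((j:ℝ) + 2))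
            = 2 * M * (Real.sqrt ((j:ℝ) + 2) / ((j:ℝ) + 1)) := by
          field_simp
        rw [h1]
        have h2 := mul_le_mul_of_nonneg_left (sqrt_col j) (by positivity : (0:ℝ) ≤ 2 * M)
        nlinarith [sw_pos j]
    _ ≤ (8 * (8 + 4 * |α|) + 8) * sw j := by
        rw [← hM]
        nlinarith [sw_pos j, hM0]

lemma term_eq {α : ℝ} (i j : ℕ) :
    (‖((ker α i j : ℝ) : ℂ)‖₊ : ℝ≥0∞) * ENNReal.ofReal (sw j)
      = ENNReal.ofReal (|ker α i j| * sw j) := by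
  rw [← enorm_eq_nnnorm, ← ofReal_norm, Complex.norm_real, Real.norm_eq_abs,
    ← ENNReal.ofReal_mul (abs_nonneg _)]

lemma row_bound_ennreal {α : ℝ} (hα : α > -1) (i : ℕ) :
    ∑' j, (‖((ker α i j : ℝ) : ℂ)‖₊ : ℝ≥0∞) * ENNReal.ofReal (sw j)
      ≤ ENNReal.ofReal (8 * (8 + 4 * |α|) + 8) * ENNReal.ofReal (sw i) := by
  rw [← ENNReal.ofReal_mul (by positivity), ENNReal.tsum_eq_iSup_sum]
  refine iSup_le fun F => ?_
  rw [Finset.sum_congr rfl (fun j _ => term_eq i j),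
    ← ENNReal.ofReal_sum_of_nonneg (fun j _ => mul_nonneg (abs_nonneg _) (sw_pos _).le)]
  exact ENNReal.ofReal_le_ofReal (row_sum_real hα i F)

lemma col_bound_ennreal {α : ℝ} (hα : α > -1) (j : ℕ) :
    ∑' i, (‖((ker α i j : ℝ) : ℂ)‖₊ : ℝ≥0∞) * ENNReal.ofReal (sw i)
      ≤ ENNReal.ofReal (8 * (8 + 4 * |α|) + 8) * ENNReal.ofReal (sw j) := by
  rw [← ENNReal.ofReal_mul (by positivity), ENNReal.tsum_eq_iSup_sum]
  refine iSup_le fun F => ?_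
  have e : ∀ i : ℕ, (‖((ker α i j : ℝ) : ℂ)‖₊ : ℝ≥0∞) * ENNReal.ofReal (sw i)
      = ENNReal.ofReal (|ker α i j| * sw i) := by
    intro i
    rw [← enorm_eq_nnnorm, ← ofReal_norm, Complex.norm_real, Real.norm_eq_abs,
      ← ENNReal.ofReal_mul (abs_nonneg _)]
  rw [Finset.sum_congr rfl (fun i _ => e i),
    ← ENNReal.ofReal_sum_of_nonneg (fun i _ => mul_nonneg (abs_nonneg _) (sw_pos _).le)]
  exact ENNReal.ofReal_le_ofReal (col_sum_real hα j F)


/-- For every `α > -1` there is a bounded operator `B` on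
`ℓ²` with matrix entries `⟨B e_j, e_i⟩ = 2(j+1−3i−2α)/((j+3+α)(j+4+α))` if
`j > i − 2`, `(j+1+α)(j+2+α)/((j+3+α)(j+4+α))` if `j = i − 2`, and `0` if
`j < i − 2`. -/
theorem exists_left_inverse_matrix_B (α : ℝ) (hα : α > -1) :
    ∃ B : lp (fun _ : ℕ => ℂ) 2 →L[ℂ] lp (fun _ : ℕ => ℂ) 2,
      ∀ i j : ℕ, (inner ℂ (e i) (B (e j)) : ℂ) =
        if (i : ℤ) - 2 < (j : ℤ) then
          ((2 * ((j : ℝ) + 1 - 3 * i - 2 * α) /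
            (((j : ℝ) + 3 + α) * ((j : ℝ) + 4 + α)) : ℝ) : ℂ)
        else if (j : ℤ) = (i : ℤ) - 2 then
          (((((j : ℝ) + 1 + α) * ((j : ℝ) + 2 + α)) /
            ((((j : ℝ) + 3 + α)) * (((j : ℝ) + 4 + α))) : ℝ) : ℂ)
        else 0 := by
  classical
  set a : ℕ → ℕ → ℂ := fun i j => ((ker α i j : ℝ) : ℂ) with ha
  obtain ⟨B, hB⟩ := schur_test a (fun n => ENNReal.ofReal (sw n))
    (fun n => (ENNReal.ofReal_pos.2 (sw_pos n)).ne')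
    (fun n => ENNReal.ofReal_ne_top)
    (ENNReal.ofReal (8 * (8 + 4 * |α|) + 8)) ENNReal.ofReal_ne_top
    (fun i => row_bound_ennreal hα i) (fun j => col_bound_ennreal hα j)
  refine ⟨B, fun i j => ?_⟩
  have h1 : (inner ℂ (e i) (B (e j)) : ℂ) = (B (e j) : ∀ _ : ℕ, ℂ) i := by
    rw [e, lp.inner_single_left]
    simp [RCLike.inner_apply]
  have h2 : ∀ j' : ℕ, (e j : ∀ _ : ℕ, ℂ) j' = if j' = j then 1 else 0 := by
    intro j'
    rw [e, lp.single_apply]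
    by_cases h : j' = j
    · subst h; simp
    · simp [h]
  have h3 : ∑' j', a i j' * (e j : ∀ _ : ℕ, ℂ) j' = a i j := by
    rw [tsum_eq_single j]
    · rw [h2 j]; simp
    · intro b hb; rw [h2 b]; simp [hb]
  rw [h1, hB (e j) i, h3, ha]
  simp only [ker, apply_ite (fun r : ℝ => (r : ℂ)), Complex.ofReal_zero]
end
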